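/- arXiv:0811.0951 — 16 statements merged into one kernel-verified Lean document; each statement's English description precedes it below -/
import Mathlib

section
/- Let a, b, c > 0 and p < q < r be real numbers, and let f(u) = -a u^p + b u^q - c u^r for u > 0. Then there exists u > 0 with f(u) > 0 if and only if a < b · ((r-q)/(r-p)) · (b(q-p)/(c(r-p)))^{(q-p)/(r-q)}. -/
open Real

lemma key_ineq (b c s t : ℝ) (hb : 0 < b) (hc : 0 < c) (hs : 0 < s) (hst : s < t)
    (u : ℝ) (hu : 0 < u) :
    b * u ^ s - c * u ^ t ≤ (t - s) / t * b * (b * s / (c * t)) ^ (s / (t - s)) := by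
  have ht : 0 < t := hs.trans hst
  have hts : 0 < t - s := sub_pos.2 hst
  set X : ℝ := b * s / (c * t) with hX
  have hXpos : 0 < X := by positivity
  set p₁ : ℝ := (c * t / s) * u ^ t with hp₁
  set p₂ : ℝ := b * X ^ (s / (t - s)) with hp₂
  have hp₁pos : 0 < p₁ := by positivity
  have hp₂pos : 0 < p₂ := by positivity
  have hw : s / t + (t - s) / t = 1 := by field_simp; ring
  have hgm := Real.geom_mean_le_arith_mean2_weighted
      (by positivity : (0:ℝ) ≤ s / t) (by positivity : (0:ℝ) ≤ (t-s)/t)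
      hp₁pos.le hp₂pos.le hw
  have hL : p₁ ^ (s / t) * p₂ ^ ((t - s) / t) = b * u ^ s := by
    have h1 : (u ^ t) ^ (s / t) = u ^ s := by
      rw [← Real.rpow_mul hu.le]
      congr 1; field_simp
    have h2 : (X ^ (s / (t - s))) ^ ((t - s) / t) = X ^ (s / t) := by
      rw [← Real.rpow_mul hXpos.le]
      congr 1; field_simp
    rw [hp₁, hp₂, Real.mul_rpow (by positivity) (by positivity),
        Real.mul_rpow hb.le (by positivity), h1, h2]
    have h3 : (c * t / s) ^ (s / t) * X ^ (s / t) = b ^ (s / t) := by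
      rw [← Real.mul_rpow (by positivity) hXpos.le]
      congr 1
      rw [hX]; field_simp
    have h4 : b ^ (s / t) * b ^ ((t - s) / t) = b := by
      rw [← Real.rpow_add hb, hw, Real.rpow_one]
    calc (c * t / s) ^ (s / t) * u ^ s * (b ^ ((t - s) / t) * X ^ (s / t))
        = ((c * t / s) ^ (s / t) * X ^ (s / t)) * b ^ ((t - s) / t) * u ^ s := by ring
      _ = b ^ (s / t) * b ^ ((t - s) / t) * u ^ s := by rw [h3]
      _ = b * u ^ s := by rw [h4]
  have hR1 : s / t * p₁ = c * u ^ t := by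
    rw [hp₁]; field_simp
  rw [hL, hR1] at hgm
  rw [hp₂] at hgm
  nlinarith [hgm]

lemma key_eq (b c s t : ℝ) (hb : 0 < b) (hc : 0 < c) (hs : 0 < s) (hst : s < t) :
    b * ((b * s / (c * t)) ^ ((1:ℝ) / (t - s))) ^ s
      - c * ((b * s / (c * t)) ^ ((1:ℝ) / (t - s))) ^ t
      = (t - s) / t * b * (b * s / (c * t)) ^ (s / (t - s)) := by
  have ht : 0 < t := hs.trans hst
  have hts : 0 < t - s := sub_pos.2 hst
  set X : ℝ := b * s / (c * t) with hX
  have hXpos : 0 < X := by positivity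
  have h1 : (X ^ ((1:ℝ) / (t - s))) ^ s = X ^ (s / (t - s)) := by
    rw [← Real.rpow_mul hXpos.le]; congr 1; ring
  have h2 : (X ^ ((1:ℝ) / (t - s))) ^ t = X * X ^ (s / (t - s)) := by
    rw [← Real.rpow_mul hXpos.le]
    have : (1:ℝ) / (t - s) * t = 1 + s / (t - s) := by field_simp; ring
    rw [this, Real.rpow_add hXpos, Real.rpow_one]
  rw [h1, h2]
  generalize X ^ (s / (t - s)) = Y
  rw [hX]
  field_simp

/-- `∃ u > 0, f u > 0` iff `a < b ((r-q)/(r-p)) (b(q-p)/(c(r-p)))^{(q-p)/(r-q)}`. -/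
theorem stmt_1 (a b c p q r : ℝ) (ha : 0 < a) (hb : 0 < b) (hc : 0 < c)
    (hpq : p < q) (hqr : q < r)
    (f : ℝ → ℝ) (hf : f = fun u : ℝ => -a * u ^ p + b * u ^ q - c * u ^ r) :
    (∃ u : ℝ, 0 < u ∧ 0 < f u) ↔
      a < b * ((r - q) / (r - p)) *
        (b * (q - p) / (c * (r - p))) ^ ((q - p) / (r - q)) := by
  subst hf
  have hs : 0 < q - p := sub_pos.2 hpq
  have hts : 0 < r - q := sub_pos.2 hqr
  have ht : 0 < r - p := by linarith
  have hT : b * ((r - q) / (r - p)) * (b * (q - p) / (c * (r - p))) ^ ((q - p) / (r - q))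
      = ((r - p) - (q - p)) / (r - p) * b
        * (b * (q - p) / (c * (r - p))) ^ ((q - p) / ((r - p) - (q - p))) := by
    have e1 : (r - p) - (q - p) = r - q := by ring
    rw [e1]; ring
  have hequiv : ∀ u : ℝ, 0 < u →
      (0 < -a * u ^ p + b * u ^ q - c * u ^ r ↔
        a < b * u ^ (q - p) - c * u ^ (r - p)) := by
    intro u hu
    have hq' : u ^ q = u ^ p * u ^ (q - p) := by
      rw [← Real.rpow_add hu]; ring_nf
    have hr' : u ^ r = u ^ p * u ^ (r - p) := by
      rw [← Real.rpow_add hu]; ring_nf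
    have hup : 0 < u ^ p := Real.rpow_pos_of_pos hu p
    have hfe : -a * u ^ p + b * u ^ q - c * u ^ r
        = u ^ p * (b * u ^ (q - p) - c * u ^ (r - p) - a) := by
      rw [hq', hr']; ring
    rw [hfe, mul_pos_iff_of_pos_left hup]
    constructor <;> intro h <;> linarith
  constructor
  · rintro ⟨u, hu, hfu⟩
    rw [hequiv u hu] at hfu
    have := key_ineq b c (q - p) (r - p) hb hc hs (by linarith) u hu
    rw [hT]
    linarith
  · intro hlt
    rw [hT] at hlt
    set u₀ : ℝ := (b * (q - p) / (c * (r - p))) ^ ((1:ℝ) / ((r - p) - (q - p))) with hu₀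
    have hu₀pos : 0 < u₀ := Real.rpow_pos_of_pos (by positivity) _
    refine ⟨u₀, hu₀pos, ?_⟩
    rw [hequiv u₀ hu₀pos]
    have := key_eq b c (q - p) (r - p) hb hc hs (by linarith)
    rw [hu₀]
    linarith
end

section
/- Let a, b, c > 0 and p < q < r be real numbers, and let f(u) = -a u^p + b u^q - c u^r for u > 0. Then f(u) < 0 for every u > 0 if and only if a > b · ((r-q)/(r-p)) · (b(q-p)/(c(r-p)))^{(q-p)/(r-q)}. -/
/-- `f u < 0` for all `u > 0` iff `a > b ((r-q)/(r-p)) (b(q-p)/(c(r-p)))^{(q-p)/(r-q)}`. -/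
theorem stmt_2 (a b c p q r : ℝ) (ha : 0 < a) (hb : 0 < b) (hc : 0 < c)
    (hpq : p < q) (hqr : q < r)
    (f : ℝ → ℝ) (hf : f = fun u : ℝ => -a * u ^ p + b * u ^ q - c * u ^ r) :
    (∀ u : ℝ, 0 < u → f u < 0) ↔
      a > b * ((r - q) / (r - p)) *
        (b * (q - p) / (c * (r - p))) ^ ((q - p) / (r - q)) := by
  subst hf
  have hs0 : (0:ℝ) < q - p := by linarith
  have hd0 : (0:ℝ) < r - q := by linarith
  have ht0 : (0:ℝ) < r - p := by linarith
  set K : ℝ := b * (q - p) / (c * (r - p)) with hK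
  have hK0 : 0 < K := by positivity
  have hKs : c * (r - p) * K = b * (q - p) := by
    rw [hK]; field_simp
  set u₀ : ℝ := K ^ ((r - q)⁻¹) with hu₀
  have hu₀0 : 0 < u₀ := Real.rpow_pos_of_pos hK0 _
  have hpow : ∀ x : ℝ, u₀ ^ x = K ^ (x / (r - q)) := by
    intro x
    rw [hu₀, ← Real.rpow_mul hK0.le, inv_mul_eq_div]
  have hu₀s : u₀ ^ (q - p) = K ^ ((q - p) / (r - q)) := hpow _
  have hu₀d : u₀ ^ (r - q) = K := by
    rw [hpow, div_self hd0.ne', Real.rpow_one]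
  have hu₀t : u₀ ^ (r - p) = u₀ ^ (q - p) * K := by
    rw [← hu₀d, ← Real.rpow_add hu₀0]; ring_nf
  set T : ℝ := b * ((r - q) / (r - p)) * K ^ ((q - p) / (r - q)) with hT
  have hus : 0 < u₀ ^ (q - p) := Real.rpow_pos_of_pos hu₀0 _
  -- key computation: value of g at u₀ equals T
  have hmax : b * u₀ ^ (q - p) - c * u₀ ^ (r - p) = T := by
    rw [hu₀t, hT, ← hu₀s]
    have h1 : c * (u₀ ^ (q - p) * K) = b * ((q - p)/(r - p)) * u₀ ^ (q - p) := by
      rw [hK]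
      field_simp
    rw [h1]
    field_simp
    ring
  constructor
  · intro h
    have h1 := h u₀ hu₀0
    simp only at h1
    have hq : u₀ ^ q = u₀ ^ p * u₀ ^ (q - p) := by
      rw [← Real.rpow_add hu₀0]; ring_nf
    have hr : u₀ ^ r = u₀ ^ p * u₀ ^ (r - p) := by
      rw [← Real.rpow_add hu₀0]; ring_nf
    rw [hq, hr] at h1
    have hup : 0 < u₀ ^ p := Real.rpow_pos_of_pos hu₀0 _
    have heq : -a * u₀ ^ p + b * (u₀ ^ p * u₀ ^ (q-p)) - c * (u₀ ^ p * u₀ ^ (r-p))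
        = u₀ ^ p * (-a + (b * u₀ ^ (q-p) - c * u₀ ^ (r-p))) := by ring
    rw [heq] at h1
    have h3 : -a + (b * u₀ ^ (q - p) - c * u₀ ^ (r - p)) < 0 := by
      by_contra hcon
      push_neg at hcon
      have := mul_nonneg hup.le hcon
      linarith
    rw [hmax] at h3
    linarith
  · intro hTa u hu
    simp only
    have hy0 : (0:ℝ) < u / u₀ := by positivity
    have key := Real.geom_mean_le_arith_mean2_weighted
      (w₁ := (q-p)/(r-p)) (w₂ := (r-q)/(r-p))
      (p₁ := (u/u₀) ^ (r-p)) (p₂ := 1)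
      (by positivity) (by positivity) (by positivity) zero_le_one
      (by field_simp; ring)
    rw [Real.one_rpow, mul_one, mul_one, ← Real.rpow_mul hy0.le] at key
    have he : (r - p) * ((q - p) / (r - p)) = q - p := by field_simp
    rw [he] at key
    have hdiv : ∀ x : ℝ, (u/u₀) ^ x = u ^ x / u₀ ^ x := fun x =>
      Real.div_rpow hu.le hu₀0.le x
    rw [hdiv, hdiv] at key
    have hut : 0 < u₀ ^ (r - p) := Real.rpow_pos_of_pos hu₀0 _
    have hB : (0:ℝ) < b * u₀ ^ (q-p) := by positivity
    have h4 : b * u₀ ^ (q-p) * (u ^ (q-p) / u₀ ^ (q-p)) = b * u ^ (q-p) := by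
      field_simp
    have h5 : b * u₀ ^ (q-p) * ((q-p)/(r-p) * (u ^ (r-p) / u₀ ^ (r-p))) = c * u ^ (r-p) := by
      rw [hu₀t, hK]
      field_simp
    have h6 : b * u₀ ^ (q-p) * ((r-q)/(r-p)) = T := by rw [hT, hu₀s]; ring
    have key2 : b * u ^ (q - p) ≤ c * u ^ (r - p) + T := by
      have h7 := mul_le_mul_of_nonneg_left key hB.le
      rw [mul_add, h4, h5, h6] at h7
      exact h7
    have hq : u ^ q = u ^ p * u ^ (q - p) := by
      rw [← Real.rpow_add hu]; ring_nf
    have hr : u ^ r = u ^ p * u ^ (r - p) := by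
      rw [← Real.rpow_add hu]; ring_nf
    rw [hq, hr]
    have hup0 : 0 < u ^ p := Real.rpow_pos_of_pos hu _
    have heq : -a * u ^ p + b * (u ^ p * u ^ (q-p)) - c * (u ^ p * u ^ (r-p))
        = u ^ p * (-a + (b * u ^ (q-p) - c * u ^ (r-p))) := by ring
    rw [heq]
    apply mul_neg_of_pos_of_neg hup0
    linarith
end

section
/- Let a, b, c > 0 and p < q < r be real numbers, and let f(u) = -a u^p + b u^q - c u^r for u > 0. Then f has exactly one zero on (0,∞) if and only if a = b · ((r-q)/(r-p)) · (b(q-p)/(c(r-p)))^{(q-p)/(r-q)}; moreover in that case f(u) ≤ 0 for all u > 0, with equality exactly at u = (b(q-p)/(c(r-p)))^{1/(r-q)}. -/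
lemma my_bern {θ t : ℝ} (h0 : 0 < θ) (h1 : θ < 1) (ht : 0 < t) :
    t ^ θ ≤ 1 - θ + θ * t ∧ (t ^ θ = 1 - θ + θ * t ↔ t = 1) := by
  rcases eq_or_ne t 1 with rfl | hne
  · rw [Real.one_rpow]
    exact ⟨by linarith, ⟨fun _ => rfl, fun _ => by ring⟩⟩
  · have hs : (-1:ℝ) ≤ t - 1 := by linarith
    have hs' : t - 1 ≠ 0 := sub_ne_zero.mpr hne
    have h := rpow_one_add_lt_one_add_mul_self hs hs' h0 h1
    rw [show (1:ℝ) + (t-1) = t by ring] at h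
    have hstrict : t ^ θ < 1 - θ + θ * t := by linarith
    exact ⟨hstrict.le, ⟨fun he => absurd he hstrict.ne, fun h => absurd h hne⟩⟩

lemma my_key (b c p q r : ℝ) (hb : 0 < b) (hc : 0 < c) (hpq : p < q) (hqr : q < r)
    (u : ℝ) (hu : 0 < u) :
    b * u ^ (q-p) - c * u ^ (r-p) ≤
      b * ((r - q) / (r - p)) * (b * (q - p) / (c * (r - p))) ^ ((q - p) / (r - q)) ∧
    (b * u ^ (q-p) - c * u ^ (r-p) =
      b * ((r - q) / (r - p)) * (b * (q - p) / (c * (r - p))) ^ ((q - p) / (r - q)) ↔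
      u = (b * (q - p) / (c * (r - p))) ^ (1 / (r - q))) := by
  have hpr : (0:ℝ) < r - p := by linarith
  have hqp : (0:ℝ) < q - p := by linarith
  have hrq : (0:ℝ) < r - q := by linarith
  set θ : ℝ := (q-p)/(r-p) with hθdef
  have hθ0 : 0 < θ := div_pos hqp hpr
  have hθ1 : θ < 1 := (div_lt_one hpr).mpr (by linarith)
  set K : ℝ := b*(q-p)/(c*(r-p)) with hKdef
  have hK : 0 < K := div_pos (mul_pos hb hqp) (mul_pos hc hpr)
  set w : ℝ := K ^ (1/(r-q)) with hw
  have hw0 : 0 < w := Real.rpow_pos_of_pos hK _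
  have hwrq : w ^ (r-q) = K := by
    rw [hw, ← Real.rpow_mul hK.le, one_div_mul_cancel hrq.ne', Real.rpow_one]
  set t : ℝ := (u/w) ^ (r-p) with htdef
  have huw : 0 < u/w := div_pos hu hw0
  have ht : 0 < t := Real.rpow_pos_of_pos huw _
  have hth : t ^ θ = (u/w) ^ (q-p) := by
    rw [htdef, ← Real.rpow_mul huw.le]
    congr 1
    rw [hθdef, mul_comm, div_mul_cancel₀ _ hpr.ne']
  have e1 : u ^ (q-p) = t^θ * w^(q-p) := by
    rw [hth, ← Real.mul_rpow huw.le hw0.le, div_mul_cancel₀ _ hw0.ne']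
  have e2 : u ^ (r-p) = t * w^(r-p) := by
    rw [htdef, ← Real.mul_rpow huw.le hw0.le, div_mul_cancel₀ _ hw0.ne']
  have esplit : w ^ (r-p) = w ^ (q-p) * w ^ (r-q) := by
    rw [← Real.rpow_add hw0]; congr 1; ring
  have e3 : c * w ^ (r-p) = θ * (b * w ^ (q-p)) := by
    rw [esplit, hwrq, hKdef, hθdef]
    field_simp
  have hM : 0 < b * w ^ (q-p) := mul_pos hb (Real.rpow_pos_of_pos hw0 _)
  have e4 : b * ((r-q)/(r-p)) * K ^ ((q-p)/(r-q)) = (1-θ) * (b * w ^ (q-p)) := by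
    have hwq : w ^ (q-p) = K ^ ((q-p)/(r-q)) := by
      rw [hw, ← Real.rpow_mul hK.le]; congr 1; ring
    rw [hwq]
    have h1θ : 1 - θ = (r-q)/(r-p) := by rw [hθdef]; field_simp; ring
    rw [h1θ]; ring
  have main : b*u^(q-p) - c*u^(r-p) = (b*w^(q-p)) * (t^θ - θ*t) := by
    rw [e1, e2]
    linear_combination (-t) * e3
  obtain ⟨hle, hiff⟩ := my_bern hθ0 hθ1 ht
  rw [main, e4]
  constructor
  · rw [mul_comm (1-θ)]
    exact mul_le_mul_of_nonneg_left (by linarith) hM.le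
  · constructor
    · intro h
      have h' : (b*w^(q-p)) * (t^θ - θ*t) = (b*w^(q-p)) * (1-θ) := by linarith
      have hx : t^θ - θ*t = 1-θ := mul_left_cancel₀ hM.ne' h'
      have ht1 : t = 1 := hiff.mp (by linarith)
      have huw1 : u / w = 1 := by
        by_contra hne
        rcases lt_or_gt_of_ne hne with hlt | hgt
        · have h2 := Real.rpow_lt_rpow huw.le hlt hpr
          rw [Real.one_rpow] at h2
          rw [htdef] at ht1; linarith
        · have h2 := Real.rpow_lt_rpow (by norm_num : (0:ℝ) ≤ 1) hgt hpr
          rw [Real.one_rpow] at h2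
          rw [htdef] at ht1; linarith
      exact (div_eq_one_iff_eq hw0.ne').mp huw1
    · intro h
      have ht1 : t = 1 := by
        rw [htdef, h, div_self hw0.ne', Real.one_rpow]
      rw [ht1, Real.one_rpow]; ring

/-- `f` has exactly one zero on `(0,∞)` iff `a` equals the critical
threshold; and in that case `f ≤ 0` on `(0,∞)` with equality exactly at
`u = (b(q-p)/(c(r-p)))^{1/(r-q)}`. -/
theorem stmt_3 (a b c p q r : ℝ) (ha : 0 < a) (hb : 0 < b) (hc : 0 < c)
    (hpq : p < q) (hqr : q < r)
    (f : ℝ → ℝ) (hf : f = fun u : ℝ => -a * u ^ p + b * u ^ q - c * u ^ r) :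
    ((∃! u : ℝ, 0 < u ∧ f u = 0) ↔
      a = b * ((r - q) / (r - p)) *
        (b * (q - p) / (c * (r - p))) ^ ((q - p) / (r - q))) ∧
    (a = b * ((r - q) / (r - p)) *
        (b * (q - p) / (c * (r - p))) ^ ((q - p) / (r - q)) →
      ∀ u : ℝ, 0 < u →
        f u ≤ 0 ∧
        (f u = 0 ↔ u = (b * (q - p) / (c * (r - p))) ^ (1 / (r - q)))) := by
  have hpr : (0:ℝ) < r - p := by linarith
  have hqp : (0:ℝ) < q - p := by linarith
  have hrq : (0:ℝ) < r - q := by linarith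
  have hK : 0 < b*(q-p)/(c*(r-p)) := div_pos (mul_pos hb hqp) (mul_pos hc hpr)
  have hw0 : 0 < (b * (q - p) / (c * (r - p))) ^ (1 / (r - q)) :=
    Real.rpow_pos_of_pos hK _
  -- factorization
  have hfact : ∀ u : ℝ, 0 < u → f u = u^p * ((b*u^(q-p) - c*u^(r-p)) - a) := by
    intro u hu
    have e1 : u^p * u^(q-p) = u^q := by
      rw [← Real.rpow_add hu]; congr 1; ring
    have e2 : u^p * u^(r-p) = u^r := by
      rw [← Real.rpow_add hu]; congr 1; ring
    rw [hf]
    simp only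
    rw [← e1, ← e2]; ring
  have hzero : ∀ u : ℝ, 0 < u → (f u = 0 ↔ b*u^(q-p) - c*u^(r-p) = a) := by
    intro u hu
    rw [hfact u hu]
    have hup : (0:ℝ) < u ^ p := Real.rpow_pos_of_pos hu p
    constructor
    · intro h
      rcases mul_eq_zero.mp h with h | h
      · exact absurd h hup.ne'
      · linarith
    · intro h; rw [h, sub_self, mul_zero]
  have hle : ∀ u : ℝ, 0 < u → (f u ≤ 0 ↔ b*u^(q-p) - c*u^(r-p) ≤ a) := by
    intro u hu
    rw [hfact u hu]
    have hup : (0:ℝ) < u ^ p := Real.rpow_pos_of_pos hu p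
    constructor
    · intro h; nlinarith
    · intro h; nlinarith
  constructor
  · constructor
    · rintro ⟨u₀, ⟨hu₀, hfu₀⟩, huniq⟩
      by_contra hne
      rcases lt_or_gt_of_ne hne with hlt | hgt
      · -- a < T : two roots, contradiction with uniqueness
        set w : ℝ := (b * (q - p) / (c * (r - p))) ^ (1 / (r - q)) with hwdef
        have hgw : b*w^(q-p) - c*w^(r-p) =
            b * ((r - q) / (r - p)) * (b * (q - p) / (c * (r - p))) ^ ((q - p) / (r - q)) :=
          (my_key b c p q r hb hc hpq hqr w hw0).2.mpr rfl
        have hgcont : ContinuousOn (fun u : ℝ => b*u^(q-p) - c*u^(r-p)) (Set.Ioi 0) := by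
          apply ContinuousOn.sub
          · exact continuousOn_const.mul (fun x hx =>
              (Real.continuousAt_rpow_const x _ (Or.inl (ne_of_gt hx))).continuousWithinAt)
          · exact continuousOn_const.mul (fun x hx =>
              (Real.continuousAt_rpow_const x _ (Or.inl (ne_of_gt hx))).continuousWithinAt)
        -- small point u0
        have hA : 0 < (a/(2*b)) ^ (1/(q-p)) :=
          Real.rpow_pos_of_pos (div_pos ha (by linarith)) _
        set u0 : ℝ := min w ((a/(2*b)) ^ (1/(q-p))) with hu0def
        have hu0pos : 0 < u0 := lt_min hw0 hA
        have hu0w : u0 ≤ w := min_le_left _ _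
        have hgu0 : b*u0^(q-p) - c*u0^(r-p) < a := by
          have h1 : u0 ≤ (a/(2*b)) ^ (1/(q-p)) := min_le_right _ _
          have h2 : u0^(q-p) ≤ a/(2*b) := by
            calc u0^(q-p) ≤ ((a/(2*b)) ^ (1/(q-p)))^(q-p) :=
                  Real.rpow_le_rpow hu0pos.le h1 hqp.le
            _ = a/(2*b) := by
                  rw [← Real.rpow_mul (div_pos ha (by linarith)).le,
                    one_div_mul_cancel hqp.ne', Real.rpow_one]
          have h3 : b * (a/(2*b)) = a/2 := by field_simp
          have h4 : 0 < c * u0^(r-p) := mul_pos hc (Real.rpow_pos_of_pos hu0pos _)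
          nlinarith [mul_le_mul_of_nonneg_left h2 hb.le]
        -- large point u1
        have hB : 0 < (b/c) ^ (1/(r-q)) := Real.rpow_pos_of_pos (div_pos hb hc) _
        set u1 : ℝ := max w ((b/c) ^ (1/(r-q))) + 1 with hu1def
        have hu1w : w < u1 := by
          have := le_max_left w ((b/c) ^ (1/(r-q)))
          rw [hu1def]; linarith
        have hu1B : (b/c) ^ (1/(r-q)) < u1 := by
          have := le_max_right w ((b/c) ^ (1/(r-q)))
          rw [hu1def]; linarith
        have hu1pos : 0 < u1 := hB.trans hu1B
        have hgu1 : b*u1^(q-p) - c*u1^(r-p) < a := by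
          have h1 : b/c < u1^(r-q) := by
            have := Real.rpow_lt_rpow hB.le hu1B hrq
            rwa [← Real.rpow_mul (div_pos hb hc).le, one_div_mul_cancel hrq.ne',
              Real.rpow_one] at this
          have h2 : b < c * u1^(r-q) := by
            have := mul_lt_mul_of_pos_left h1 hc
            rwa [mul_div_cancel₀ _ hc.ne'] at this
          have h3 : u1^(r-p) = u1^(q-p) * u1^(r-q) := by
            rw [← Real.rpow_add hu1pos]; congr 1; ring
          have h4 : 0 < u1^(q-p) := Real.rpow_pos_of_pos hu1pos _
          nlinarith [mul_pos (sub_pos.mpr h2) h4]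
        -- IVT on [u0, w]
        have hsub1 : Set.Icc u0 w ⊆ Set.Ioi 0 := fun x hx => lt_of_lt_of_le hu0pos hx.1
        have hmem1 : a ∈ Set.Icc (b*u0^(q-p) - c*u0^(r-p)) (b*w^(q-p) - c*w^(r-p)) :=
          ⟨hgu0.le, by rw [hgw]; exact hlt.le⟩
        obtain ⟨x, hxmem, hgx⟩ := intermediate_value_Icc hu0w (hgcont.mono hsub1) hmem1
        have hxpos : 0 < x := lt_of_lt_of_le hu0pos hxmem.1
        -- IVT on [w, u1]
        have hsub2 : Set.Icc w u1 ⊆ Set.Ioi 0 := fun z hz => lt_of_lt_of_le hw0 hz.1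
        have hmem2 : a ∈ Set.Icc (b*u1^(q-p) - c*u1^(r-p)) (b*w^(q-p) - c*w^(r-p)) :=
          ⟨hgu1.le, by rw [hgw]; exact hlt.le⟩
        obtain ⟨y, hymem, hgy⟩ := intermediate_value_Icc' hu1w.le (hgcont.mono hsub2) hmem2
        have hypos : 0 < y := lt_of_lt_of_le hw0 hymem.1
        have hgx' : b*x^(q-p) - c*x^(r-p) = a := hgx
        have hgy' : b*y^(q-p) - c*y^(r-p) = a := hgy
        -- x ≠ y
        have hxw : x ≠ w := by
          intro h
          rw [h] at hgx'
          exact hlt.ne (hgx'.symm.trans hgw)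
        have hyw : y ≠ w := by
          intro h
          rw [h] at hgy'
          exact hlt.ne (hgy'.symm.trans hgw)
        have hxy : x ≠ y := by
          intro h
          have hx' : x < w := lt_of_le_of_ne hxmem.2 hxw
          have hy' : w < y := lt_of_le_of_ne hymem.1 (Ne.symm hyw)
          rw [h] at hx'; linarith
        have hxz : f x = 0 := (hzero x hxpos).mpr hgx'
        have hyz : f y = 0 := (hzero y hypos).mpr hgy'
        have e1 := huniq x ⟨hxpos, hxz⟩
        have e2 := huniq y ⟨hypos, hyz⟩
        exact hxy (e1.trans e2.symm)
      · -- a > T : u₀ is a root with g u₀ = a > T, contradicting g ≤ T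
        have h1 := (my_key b c p q r hb hc hpq hqr u₀ hu₀).1
        have h2 := (hzero u₀ hu₀).mp hfu₀
        linarith
    · intro haT
      refine ⟨(b * (q - p) / (c * (r - p))) ^ (1 / (r - q)), ⟨hw0, ?_⟩, ?_⟩
      · rw [hzero _ hw0, haT]
        exact (my_key b c p q r hb hc hpq hqr _ hw0).2.mpr rfl
      · rintro y ⟨hy, hfy⟩
        exact (my_key b c p q r hb hc hpq hqr y hy).2.mp
          (by rw [← haT]; exact (hzero y hy).mp hfy)
  · intro haT u hu
    obtain ⟨k1, k2⟩ := my_key b c p q r hb hc hpq hqr u hu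
    exact ⟨(hle u hu).mpr (by rw [haT]; exact k1), by rw [hzero u hu, haT]; exact k2⟩
end

section
/- Let a, b, c > 0 and p < q < r be real numbers, let f(u) = -a u^p + b u^q - c u^r for u > 0, and let f̃(u) = (u f'(u))' f(u) - u f'(u)^2. Then there exists u > 0 with f(u) > 0 if and only if f̃(u) < 0 for every u > 0. -/
/-- Two-term weighted AM-GM (Young-type inequality). -/
lemma young5 {α β s : ℝ} (hα : 0 < α) (hβ : 0 < β) (hs : 0 < s) :
    α + β ≤ β * s ^ (-α) + α * s ^ β := by
  have hab : (0:ℝ) < α + β := by linarith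
  have h := Real.geom_mean_le_arith_mean2_weighted (w₁ := β/(α+β)) (w₂ := α/(α+β))
    (p₁ := s ^ (-α)) (p₂ := s ^ β) (by positivity) (by positivity)
    (Real.rpow_nonneg hs.le _) (Real.rpow_nonneg hs.le _)
    (by field_simp; ring)
  rw [← Real.rpow_mul hs.le, ← Real.rpow_mul hs.le, ← Real.rpow_add hs] at h
  have he : -α * (β / (α + β)) + β * (α / (α + β)) = 0 := by field_simp; ring
  rw [he, Real.rpow_zero] at h
  have h2 := mul_le_mul_of_nonneg_left h hab.le
  have h3 : (α+β) * (β / (α + β) * s ^ (-α) + α / (α + β) * s ^ β)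
      = β * s ^ (-α) + α * s ^ β := by field_simp
  linarith [h2, h3.symm.le]

/-- `w` minimizes `A u^{-α} + C u^{β}` when `C β w^β = A α w^{-α}`. -/
lemma powmin5 {A C α β w u : ℝ} (hA : 0 < A) (hC : 0 < C) (hα : 0 < α) (hβ : 0 < β)
    (hw : 0 < w) (hu : 0 < u) (hkey : C * β * w ^ β = A * α * w ^ (-α)) :
    A * w ^ (-α) + C * w ^ β ≤ A * u ^ (-α) + C * u ^ β := by
  have hs0 : 0 < u / w := div_pos hu hw
  have h1 : w ^ (-α) * (u/w) ^ (-α) = u ^ (-α) := by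
    rw [← Real.mul_rpow hw.le hs0.le]; congr 1; field_simp
  have h2 : w ^ β * (u/w) ^ β = u ^ β := by
    rw [← Real.mul_rpow hw.le hs0.le]; congr 1; field_simp
  have hy := young5 hα hβ hs0
  have hwα : 0 < w ^ (-α) := Real.rpow_pos_of_pos hw _
  have hmul := mul_le_mul_of_nonneg_left hy (mul_pos hA hwα).le
  have key2 : C * β * w ^ β * (u/w) ^ β = A * α * w ^ (-α) * (u/w) ^ β := by
    linear_combination (u/w) ^ β * hkey
  rw [← h1, ← h2]
  nlinarith [hmul, key2, hkey, hβ]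

/-- `∃ u > 0, f u > 0` iff `f̃ u < 0` for every `u > 0`. -/
theorem stmt_5 (a b c p q r : ℝ) (ha : 0 < a) (hb : 0 < b) (hc : 0 < c)
    (hpq : p < q) (hqr : q < r)
    (f : ℝ → ℝ) (hf : f = fun u : ℝ => -a * u ^ p + b * u ^ q - c * u ^ r)
    (ftilde : ℝ → ℝ)
    (hftilde : ftilde = fun u : ℝ =>
      deriv (fun v : ℝ => v * deriv f v) u * f u - u * (deriv f u) ^ 2) :
    (∃ u : ℝ, 0 < u ∧ 0 < f u) ↔ (∀ u : ℝ, 0 < u → ftilde u < 0) := by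
  subst hf
  subst hftilde
  have hα : 0 < q - p := by linarith
  have hβ : 0 < r - q := by linarith
  have hγ : 0 < r - p := by linarith
  -- derivative of f at positive points
  have hder : ∀ u : ℝ, u ≠ 0 →
      HasDerivAt (fun u : ℝ => -a * u ^ p + b * u ^ q - c * u ^ r)
        (-a * (p * u ^ (p-1)) + b * (q * u ^ (q-1)) - c * (r * u ^ (r-1))) u := by
    intro u hu
    exact (((Real.hasDerivAt_rpow_const (Or.inl hu)).const_mul (-a)).add
      ((Real.hasDerivAt_rpow_const (Or.inl hu)).const_mul b)).sub
      ((Real.hasDerivAt_rpow_const (Or.inl hu)).const_mul c)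
  have hd1 : ∀ u : ℝ, 0 < u →
      deriv (fun u : ℝ => -a * u ^ p + b * u ^ q - c * u ^ r) u
        = -a * (p * u ^ (p-1)) + b * (q * u ^ (q-1)) - c * (r * u ^ (r-1)) := by
    intro u hu; exact (hder u hu.ne').deriv
  have hder2 : ∀ u : ℝ, u ≠ 0 →
      HasDerivAt (fun u : ℝ => -(a*p) * u ^ p + (b*q) * u ^ q - (c*r) * u ^ r)
        (-(a*p) * (p * u ^ (p-1)) + (b*q) * (q * u ^ (q-1)) - (c*r) * (r * u ^ (r-1))) u := by
    intro u hu
    exact (((Real.hasDerivAt_rpow_const (Or.inl hu)).const_mul (-(a*p))).add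
      ((Real.hasDerivAt_rpow_const (Or.inl hu)).const_mul (b*q))).sub
      ((Real.hasDerivAt_rpow_const (Or.inl hu)).const_mul (c*r))
  have hd2 : ∀ u : ℝ, 0 < u →
      deriv (fun v : ℝ => v * deriv (fun u : ℝ => -a * u ^ p + b * u ^ q - c * u ^ r) v) u
        = -(a*p) * (p * u ^ (p-1)) + (b*q) * (q * u ^ (q-1)) - (c*r) * (r * u ^ (r-1)) := by
    intro u hu
    have heq : (fun v : ℝ => v * deriv (fun u : ℝ => -a * u ^ p + b * u ^ q - c * u ^ r) v)
        =ᶠ[nhds u] (fun v : ℝ => -(a*p) * v ^ p + (b*q) * v ^ q - (c*r) * v ^ r) := by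
      filter_upwards [Ioi_mem_nhds hu] with v hv
      have hv' : (0:ℝ) < v := hv
      rw [hd1 v hv']
      have e1 : v ^ (p-1) * v = v ^ p := by
        rw [← Real.rpow_add_one hv'.ne' (p-1)]; ring_nf
      have e2 : v ^ (q-1) * v = v ^ q := by
        rw [← Real.rpow_add_one hv'.ne' (q-1)]; ring_nf
      have e3 : v ^ (r-1) * v = v ^ r := by
        rw [← Real.rpow_add_one hv'.ne' (r-1)]; ring_nf
      rw [← e1, ← e2, ← e3]; ring
    rw [heq.deriv_eq]
    exact (hder2 u hu.ne').deriv
  -- explicit form of ftilde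
  have hftval : ∀ u : ℝ, 0 < u →
      deriv (fun v : ℝ => v * deriv (fun u : ℝ => -a * u ^ p + b * u ^ q - c * u ^ r) v) u
          * (-a * u ^ p + b * u ^ q - c * u ^ r)
        - u * (deriv (fun u : ℝ => -a * u ^ p + b * u ^ q - c * u ^ r) u) ^ 2
      = -(a*b)*(q-p)^2 * u^(p+q-1) + a*c*(r-p)^2 * u^(p+r-1) - b*c*(r-q)^2 * u^(q+r-1) := by
    intro u hu
    rw [hd2 u hu, hd1 u hu]
    have eP : u ^ p = u ^ (p-1) * u := by rw [← Real.rpow_add_one hu.ne' (p-1)]; ring_nf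
    have eQ : u ^ q = u ^ (q-1) * u := by rw [← Real.rpow_add_one hu.ne' (q-1)]; ring_nf
    have eR : u ^ r = u ^ (r-1) * u := by rw [← Real.rpow_add_one hu.ne' (r-1)]; ring_nf
    have ePQ : u ^ (p+q-1) = u ^ (p-1) * u ^ (q-1) * u := by
      rw [show p+q-1 = (p-1)+(q-1)+1 by ring, Real.rpow_add_one hu.ne', Real.rpow_add hu]
    have ePR : u ^ (p+r-1) = u ^ (p-1) * u ^ (r-1) * u := by
      rw [show p+r-1 = (p-1)+(r-1)+1 by ring, Real.rpow_add_one hu.ne', Real.rpow_add hu]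
    have eQR : u ^ (q+r-1) = u ^ (q-1) * u ^ (r-1) * u := by
      rw [show q+r-1 = (q-1)+(r-1)+1 by ring, Real.rpow_add_one hu.ne', Real.rpow_add hu]
    rw [eP, eQ, eR, ePQ, ePR, eQR]
    ring
  -- positivity of f in reduced form
  have hfposiff : ∀ u : ℝ, 0 < u →
      (0 < -a * u ^ p + b * u ^ q - c * u ^ r ↔
        a * u ^ (-(q-p)) + c * u ^ (r-q) < b) := by
    intro u hu
    have hq : (0:ℝ) < u ^ q := Real.rpow_pos_of_pos hu _
    have e1 : u ^ p = u ^ (-(q-p)) * u ^ q := by rw [← Real.rpow_add hu]; ring_nf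
    have e2 : u ^ r = u ^ (r-q) * u ^ q := by rw [← Real.rpow_add hu]; ring_nf
    rw [e1, e2]
    constructor <;> intro h <;> nlinarith [hq]
  -- negativity of ftilde in reduced form
  have hftneg : ∀ u : ℝ, 0 < u →
      (deriv (fun v : ℝ => v * deriv (fun u : ℝ => -a * u ^ p + b * u ^ q - c * u ^ r) v) u
          * (-a * u ^ p + b * u ^ q - c * u ^ r)
        - u * (deriv (fun u : ℝ => -a * u ^ p + b * u ^ q - c * u ^ r) u) ^ 2 < 0 ↔
        a*c*(r-p)^2 < a*b*(q-p)^2 * u^(-(r-q)) + b*c*(r-q)^2 * u^(q-p)) := by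
    intro u hu
    rw [hftval u hu]
    have hX : (0:ℝ) < u ^ (p+r-1) := Real.rpow_pos_of_pos hu _
    have e1 : u ^ (p+q-1) = u ^ (-(r-q)) * u ^ (p+r-1) := by
      rw [← Real.rpow_add hu]; ring_nf
    have e2 : u ^ (q+r-1) = u ^ (q-p) * u ^ (p+r-1) := by
      rw [← Real.rpow_add hu]; ring_nf
    rw [e1, e2]
    constructor <;> intro h <;> nlinarith [hX]
  -- the critical point w
  set w : ℝ := (a*(q-p)/(c*(r-q))) ^ ((r-p)⁻¹) with hwdef
  have hw : 0 < w := Real.rpow_pos_of_pos (by positivity) _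
  have hwpow : w ^ (r-p) = a*(q-p)/(c*(r-q)) := by
    rw [hwdef, ← Real.rpow_mul (by positivity), inv_mul_cancel₀ hγ.ne', Real.rpow_one]
  have hbase : c*(r-q) * w ^ (r-p) = a*(q-p) := by
    rw [hwpow]; field_simp
  have K1 : c*(r-q) * w ^ (r-q) = a*(q-p) * w ^ (-(q-p)) := by
    have e : w ^ (r-q) = w ^ (r-p) * w ^ (-(q-p)) := by rw [← Real.rpow_add hw]; ring_nf
    rw [e]; linear_combination w ^ (-(q-p)) * hbase
  have K2 : a*(q-p) * w ^ (-(r-q)) = c*(r-q) * w ^ (q-p) := by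
    have e : w ^ (q-p) = w ^ (r-p) * w ^ (-(r-q)) := by rw [← Real.rpow_add hw]; ring_nf
    rw [e]; linear_combination (-(w ^ (-(r-q)))) * hbase
  -- product identity at the critical point
  have hGH : (a * w ^ (-(q-p)) + c * w ^ (r-q))
      * (a * (q-p)^2 * w ^ (-(r-q)) + c * (r-q)^2 * w ^ (q-p))
      = a * c * (r-p)^2 := by
    have E1 : w ^ (-(q-p)) * w ^ (q-p) = 1 := by rw [← Real.rpow_add hw]; norm_num
    have E2 : w ^ (-(r-q)) * w ^ (r-q) = 1 := by rw [← Real.rpow_add hw]; norm_num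
    linear_combination (a*c*(r-q)^2 + 2*a*c*(q-p)*(r-q)) * E1 + (a*c*(q-p)^2) * E2
      + (a*(q-p)*w^(-(q-p))) * K2 + (c*(r-q)*w^(q-p)) * K1
  have hG : 0 < a * w ^ (-(q-p)) + c * w ^ (r-q) :=
    add_pos (mul_pos ha (Real.rpow_pos_of_pos hw _)) (mul_pos hc (Real.rpow_pos_of_pos hw _))
  have hH : 0 < a * (q-p)^2 * w ^ (-(r-q)) + c * (r-q)^2 * w ^ (q-p) :=
    add_pos (mul_pos (mul_pos ha (pow_pos hα 2)) (Real.rpow_pos_of_pos hw _))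
      (mul_pos (mul_pos hc (pow_pos hβ 2)) (Real.rpow_pos_of_pos hw _))
  have gmin : ∀ u : ℝ, 0 < u →
      a * w ^ (-(q-p)) + c * w ^ (r-q) ≤ a * u ^ (-(q-p)) + c * u ^ (r-q) :=
    fun u hu => powmin5 ha hc hα hβ hw hu K1
  have hmin : ∀ u : ℝ, 0 < u →
      a * (q-p)^2 * w ^ (-(r-q)) + c * (r-q)^2 * w ^ (q-p)
        ≤ a * (q-p)^2 * u ^ (-(r-q)) + c * (r-q)^2 * u ^ (q-p) := by
    intro u hu
    refine powmin5 (mul_pos ha (pow_pos hα 2)) (mul_pos hc (pow_pos hβ 2)) hβ hα hw hu ?_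
    linear_combination (-((q-p)*(r-q))) * K2
  constructor
  · rintro ⟨u₀, hu₀, hfu₀⟩ u hu
    have hbgt : a * u₀ ^ (-(q-p)) + c * u₀ ^ (r-q) < b := (hfposiff u₀ hu₀).1 hfu₀
    have h1 : a * w ^ (-(q-p)) + c * w ^ (r-q) < b := lt_of_le_of_lt (gmin u₀ hu₀) hbgt
    have h2 := hmin u hu
    have hpos : 0 < a * (q-p)^2 * u ^ (-(r-q)) + c * (r-q)^2 * u ^ (q-p) :=
      add_pos (mul_pos (mul_pos ha (pow_pos hα 2)) (Real.rpow_pos_of_pos hu _))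
        (mul_pos (mul_pos hc (pow_pos hβ 2)) (Real.rpow_pos_of_pos hu _))
    refine (hftneg u hu).2 ?_
    calc a * c * (r-p)^2
        = (a * w ^ (-(q-p)) + c * w ^ (r-q))
          * (a * (q-p)^2 * w ^ (-(r-q)) + c * (r-q)^2 * w ^ (q-p)) := hGH.symm
      _ ≤ (a * w ^ (-(q-p)) + c * w ^ (r-q))
          * (a * (q-p)^2 * u ^ (-(r-q)) + c * (r-q)^2 * u ^ (q-p)) :=
            mul_le_mul_of_nonneg_left h2 hG.le
      _ < b * (a * (q-p)^2 * u ^ (-(r-q)) + c * (r-q)^2 * u ^ (q-p)) :=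
            mul_lt_mul_of_pos_right h1 hpos
      _ = a*b*(q-p)^2 * u^(-(r-q)) + b*c*(r-q)^2 * u^(q-p) := by ring
  · intro hall
    refine ⟨w, hw, ?_⟩
    have h := (hftneg w hw).1 (hall w hw)
    have hlt : (a * w ^ (-(q-p)) + c * w ^ (r-q))
        * (a * (q-p)^2 * w ^ (-(r-q)) + c * (r-q)^2 * w ^ (q-p))
        < b * (a * (q-p)^2 * w ^ (-(r-q)) + c * (r-q)^2 * w ^ (q-p)) := by
      rw [hGH]; linarith [h]
    exact (hfposiff w hw).2 ((mul_lt_mul_iff_of_pos_right hH).1 hlt)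
end

section
/- Let a, b, c > 0 and p < q < r be real numbers, let f(u) = -a u^p + b u^q - c u^r for u > 0, and let f̃(u) = (u f'(u))' f(u) - u f'(u)^2. Then f has exactly one zero on (0,∞) if and only if f̃ has exactly one zero on (0,∞). -/
open Real Set Filter

private lemma zero_iff {A B C P Q R u : ℝ} (hu : 0 < u) :
    -A * u ^ P + B * u ^ Q - C * u ^ R = 0 ↔ B * u ^ (Q - P) - C * u ^ (R - P) = A := by
  have h1 : u ^ Q = u ^ P * u ^ (Q - P) := by rw [← Real.rpow_add hu]; congr 1; ring
  have h2 : u ^ R = u ^ P * u ^ (R - P) := by rw [← Real.rpow_add hu]; congr 1; ring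
  have hP := Real.rpow_pos_of_pos hu P
  rw [h1, h2]
  constructor
  · intro h
    have h' : u ^ P * ((B * u ^ (Q - P) - C * u ^ (R - P)) - A) = 0 := by linear_combination h
    rcases mul_eq_zero.mp h' with h'' | h''
    · exact absurd h'' hP.ne'
    · linarith
  · intro h
    linear_combination u ^ P * h

private lemma core (A B C s t : ℝ) (hA : 0 < A) (hB : 0 < B) (hC : 0 < C)
    (hs : 0 < s) (hst : s < t) :
    (∃! u : ℝ, 0 < u ∧ B * u ^ s - C * u ^ t = A) ↔
      A = B * (1 - s / t) * (s * B / (t * C)) ^ (s / (t - s)) := by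
  have ht : 0 < t := hs.trans hst
  have hts : 0 < t - s := sub_pos.mpr hst
  set φ : ℝ → ℝ := fun u => B * u ^ s - C * u ^ t with hφ
  set R : ℝ := s * B / (t * C) with hR
  have hRpos : 0 < R := div_pos (mul_pos hs hB) (mul_pos ht hC)
  set u₀ : ℝ := R ^ (1 / (t - s)) with hu₀def
  have hu₀ : 0 < u₀ := Real.rpow_pos_of_pos hRpos _
  have hu₀ts : u₀ ^ (t - s) = R := by
    rw [hu₀def, ← Real.rpow_mul hRpos.le, one_div, inv_mul_cancel₀ hts.ne', Real.rpow_one]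
  have htCR : t * C * R = s * B := by
    rw [hR]; field_simp
  -- value at the max point
  have hM : φ u₀ = B * (1 - s / t) * R ^ (s / (t - s)) := by
    have e1 : u₀ ^ s = R ^ (s / (t - s)) := by
      rw [hu₀def, ← Real.rpow_mul hRpos.le]; congr 1; ring
    have e2 : u₀ ^ t = R ^ (s / (t - s)) * R := by
      rw [hu₀def, ← Real.rpow_mul hRpos.le,
        show 1 / (t - s) * t = s / (t - s) + 1 by field_simp; ring,
        Real.rpow_add hRpos, Real.rpow_one]
    have hCR : C * R = s * B / t := by rw [hR]; field_simp
    rw [hφ]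
    simp only []
    rw [e1, e2, show C * (R ^ (s / (t - s)) * R) = R ^ (s / (t - s)) * (C * R) by ring, hCR]
    field_simp
  -- derivative
  have hderiv : ∀ x : ℝ, x ≠ 0 → HasDerivAt φ (B * (s * x ^ (s - 1)) - C * (t * x ^ (t - 1))) x :=
    fun x hx => ((Real.hasDerivAt_rpow_const (Or.inl hx)).const_mul B).sub
      ((Real.hasDerivAt_rpow_const (Or.inl hx)).const_mul C)
  have hcont : ContinuousOn φ (Ioi (0:ℝ)) := fun x hx =>
    ((continuousAt_const.mul (Real.continuousAt_rpow_const x s (Or.inl (ne_of_gt hx)))).sub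
      (continuousAt_const.mul (Real.continuousAt_rpow_const x t (Or.inl (ne_of_gt hx))))).continuousWithinAt
  -- sign of derivative
  have hsplit : ∀ x : ℝ, 0 < x → x ^ (t - 1) = x ^ (s - 1) * x ^ (t - s) := by
    intro x hx
    rw [← Real.rpow_add hx]; congr 1; ring
  have hpos : ∀ x : ℝ, 0 < x → x < u₀ → 0 < deriv φ x := by
    intro x hx hxu
    rw [(hderiv x hx.ne').deriv, hsplit x hx]
    have h1 : 0 < x ^ (s - 1) := Real.rpow_pos_of_pos hx _
    have h2 : x ^ (t - s) < R := by
      rw [← hu₀ts]; exact Real.rpow_lt_rpow hx.le hxu hts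
    have h3 : t * C * x ^ (t - s) < s * B := by
      calc t * C * x ^ (t - s) < t * C * R := by
            exact (mul_lt_mul_iff_right₀ (mul_pos ht hC)).mpr h2
        _ = s * B := htCR
    have e : B * (s * x ^ (s - 1)) - C * (t * (x ^ (s - 1) * x ^ (t - s)))
        = x ^ (s - 1) * (s * B - t * C * x ^ (t - s)) := by ring
    rw [e]
    exact mul_pos h1 (by linarith)
  have hneg : ∀ x : ℝ, u₀ < x → deriv φ x < 0 := by
    intro x hxu
    have hx : 0 < x := hu₀.trans hxu
    rw [(hderiv x hx.ne').deriv, hsplit x hx]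
    have h1 : 0 < x ^ (s - 1) := Real.rpow_pos_of_pos hx _
    have h2 : R < x ^ (t - s) := by
      rw [← hu₀ts]; exact Real.rpow_lt_rpow hu₀.le hxu hts
    have h3 : s * B < t * C * x ^ (t - s) := by
      calc s * B = t * C * R := htCR.symm
        _ < t * C * x ^ (t - s) := (mul_lt_mul_iff_right₀ (mul_pos ht hC)).mpr h2
    have e : B * (s * x ^ (s - 1)) - C * (t * (x ^ (s - 1) * x ^ (t - s)))
        = x ^ (s - 1) * (s * B - t * C * x ^ (t - s)) := by ring
    rw [e]
    exact mul_neg_of_pos_of_neg h1 (by linarith)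
  have mono : StrictMonoOn φ (Ioc 0 u₀) := by
    apply strictMonoOn_of_deriv_pos (convex_Ioc 0 u₀)
      (hcont.mono (fun y hy => hy.1))
    intro x hx
    rw [interior_Ioc] at hx
    exact hpos x hx.1 hx.2
  have anti : StrictAntiOn φ (Ici u₀) := by
    apply strictAntiOn_of_deriv_neg (convex_Ici u₀)
      (hcont.mono (fun y hy => lt_of_lt_of_le hu₀ hy))
    intro x hx
    rw [interior_Ici] at hx
    exact hneg x hx
  have hmax : ∀ v : ℝ, 0 < v → v ≠ u₀ → φ v < φ u₀ := by
    intro v hv hne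
    rcases lt_or_gt_of_ne hne with h | h
    · exact mono ⟨hv, h.le⟩ ⟨hu₀, le_refl _⟩ h
    · exact anti (mem_Ici.mpr le_rfl) (mem_Ici.mpr h.le) h
  constructor
  · rintro ⟨u₁, ⟨hu₁, hφ₁⟩, huniq⟩
    by_cases hcase : u₁ = u₀
    · rw [← hM, ← hφ₁, hcase]
    · exfalso
      have hAM : A < φ u₀ := by
        rw [← hφ₁]; exact hmax u₁ hu₁ hcase
      -- find a small point where φ < A
      have h0 : Tendsto φ (nhdsWithin 0 (Ioi (0:ℝ))) (nhds 0) := by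
        have hc : ContinuousAt φ 0 :=
          (continuousAt_const.mul (Real.continuousAt_rpow_const 0 s (Or.inr hs.le))).sub
            (continuousAt_const.mul (Real.continuousAt_rpow_const 0 t (Or.inr ht.le)))
        have h00 : φ 0 = 0 := by
          simp [hφ, Real.zero_rpow hs.ne', Real.zero_rpow ht.ne']
        have := hc.tendsto
        rw [h00] at this
        exact this.mono_left nhdsWithin_le_nhds
      have hev1 : ∀ᶠ u in nhdsWithin 0 (Ioi (0:ℝ)), φ u < A := h0.eventually_lt_const hA
      have hev2 : ∀ᶠ u in nhdsWithin 0 (Ioi (0:ℝ)), u < u₀ :=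
        (eventually_lt_nhds hu₀).filter_mono nhdsWithin_le_nhds
      have hev3 : ∀ᶠ u in nhdsWithin 0 (Ioi (0:ℝ)), 0 < u :=
        eventually_mem_nhdsWithin
      obtain ⟨ε, hε1, hε2, hε3⟩ := (hev1.and (hev2.and hev3)).exists
      -- find a large point where φ < A
      set X : ℝ := u₀ + (B / C) ^ (1 / (t - s)) + 1 with hXdef
      have hBC : 0 < (B / C) ^ (1 / (t - s)) := Real.rpow_pos_of_pos (div_pos hB hC) _
      have hu₀X : u₀ < X := by rw [hXdef]; linarith
      have hX0 : 0 < X := hu₀.trans hu₀X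
      have hXts : B / C < X ^ (t - s) := by
        have hcol : ((B / C) ^ (1 / (t - s))) ^ (t - s) = B / C := by
          rw [← Real.rpow_mul (div_pos hB hC).le, one_div, inv_mul_cancel₀ hts.ne',
            Real.rpow_one]
        calc B / C = ((B / C) ^ (1 / (t - s))) ^ (t - s) := hcol.symm
          _ < X ^ (t - s) := Real.rpow_lt_rpow hBC.le (by rw [hXdef]; linarith) hts
      have hφX : φ X < A := by
        have hXt : X ^ t = X ^ s * X ^ (t - s) := by
          rw [← Real.rpow_add hX0]; congr 1; ring
        have hXs : 0 < X ^ s := Real.rpow_pos_of_pos hX0 _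
        have hBlt : B < C * X ^ (t - s) := by
          rw [div_lt_iff₀ hC] at hXts; linarith
        have : φ X < 0 := by
          rw [hφ]
          simp only []
          rw [hXt]
          have e : B * X ^ s - C * (X ^ s * X ^ (t - s)) = X ^ s * (B - C * X ^ (t - s)) := by
            ring
          rw [e]
          exact mul_neg_of_pos_of_neg hXs (by linarith)
        linarith
      -- two intermediate values
      have hsub1 : Icc ε u₀ ⊆ Ioi (0:ℝ) := fun y hy => lt_of_lt_of_le hε3 hy.1
      have hsub2 : Icc u₀ X ⊆ Ioi (0:ℝ) := fun y hy => lt_of_lt_of_le hu₀ hy.1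
      obtain ⟨x, hxmem, hfx⟩ := intermediate_value_Icc hε2.le (hcont.mono hsub1)
        (⟨hε1.le, hAM.le⟩ : A ∈ Icc (φ ε) (φ u₀))
      obtain ⟨y, hymem, hfy⟩ := intermediate_value_Icc' hu₀X.le (hcont.mono hsub2)
        (⟨hφX.le, hAM.le⟩ : A ∈ Icc (φ X) (φ u₀))
      have hx_lt : x < u₀ := lt_of_le_of_ne hxmem.2 (fun h => by
        rw [h] at hfx; exact absurd hfx.symm (ne_of_lt hAM))
      have hy_gt : u₀ < y := lt_of_le_of_ne hymem.1 (fun h => by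
        rw [← h] at hfy; exact absurd hfy.symm (ne_of_lt hAM))
      have e1 := huniq x ⟨lt_of_lt_of_le hε3 hxmem.1, hfx⟩
      have e2 := huniq y ⟨hu₀.trans hy_gt, hfy⟩
      rw [← e2] at e1
      linarith
  · intro hAeq
    refine ⟨u₀, ⟨hu₀, by rw [← hM] at hAeq; exact hAeq.symm⟩, ?_⟩
    rintro v ⟨hv, hφv⟩
    by_contra hne
    have h1 := hmax v hv hne
    have h2 : φ v = A := hφv
    rw [hM] at h1
    linarith

/-- `f` has exactly one zero on `(0,∞)` iff `f̃` has exactly one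
zero on `(0,∞)`. -/
theorem stmt_6 (a b c p q r : ℝ) (ha : 0 < a) (hb : 0 < b) (hc : 0 < c)
    (hpq : p < q) (hqr : q < r)
    (f : ℝ → ℝ) (hf : f = fun u : ℝ => -a * u ^ p + b * u ^ q - c * u ^ r)
    (ftilde : ℝ → ℝ)
    (hftilde : ftilde = fun u : ℝ =>
      deriv (fun v : ℝ => v * deriv f v) u * f u - u * (deriv f u) ^ 2) :
    (∃! u : ℝ, 0 < u ∧ f u = 0) ↔ (∃! u : ℝ, 0 < u ∧ ftilde u = 0) := by
  have hd1 : 0 < q - p := sub_pos.mpr hpq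
  have hd2 : 0 < r - q := sub_pos.mpr hqr
  have hd3 : 0 < r - p := by linarith
  subst hf
  -- derivative of f
  have hder : ∀ v : ℝ, 0 < v →
      HasDerivAt (fun u : ℝ => -a * u ^ p + b * u ^ q - c * u ^ r)
        (-a * (p * v ^ (p - 1)) + b * (q * v ^ (q - 1)) - c * (r * v ^ (r - 1))) v :=
    fun v hv =>
      (((Real.hasDerivAt_rpow_const (Or.inl hv.ne')).const_mul (-a)).add
        ((Real.hasDerivAt_rpow_const (Or.inl hv.ne')).const_mul b)).sub
        ((Real.hasDerivAt_rpow_const (Or.inl hv.ne')).const_mul c)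
  have hdf : ∀ v : ℝ, 0 < v →
      deriv (fun u : ℝ => -a * u ^ p + b * u ^ q - c * u ^ r) v
        = -a * (p * v ^ (p - 1)) + b * (q * v ^ (q - 1)) - c * (r * v ^ (r - 1)) :=
    fun v hv => (hder v hv).deriv
  -- closed form of ftilde on the positive axis
  have hft : ∀ u : ℝ, 0 < u → ftilde u =
      -(a * b * (q - p) ^ 2) * u ^ (p + q - 1) + a * c * (r - p) ^ 2 * u ^ (p + r - 1)
        - b * c * (r - q) ^ 2 * u ^ (q + r - 1) := by
    intro u hu
    rw [hftilde]
    beta_reduce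
    have heq : (fun v : ℝ => v * deriv (fun u : ℝ => -a * u ^ p + b * u ^ q - c * u ^ r) v)
        =ᶠ[nhds u] (fun v : ℝ => -(a * p) * v ^ p + b * q * v ^ q - c * r * v ^ r) := by
      filter_upwards [Ioi_mem_nhds hu] with v hv
      have hv0 : (v:ℝ) ≠ 0 := ne_of_gt hv
      rw [hdf v hv]
      have e : ∀ x : ℝ, v ^ (x - 1) = v ^ x / v := fun x => by
        rw [Real.rpow_sub hv, Real.rpow_one]
      rw [e p, e q, e r]
      field_simp
    have h2 : deriv (fun v : ℝ => v * deriv (fun u : ℝ => -a * u ^ p + b * u ^ q - c * u ^ r) v) u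
        = -(a * p) * (p * u ^ (p - 1)) + b * q * (q * u ^ (q - 1)) - c * r * (r * u ^ (r - 1)) := by
      rw [heq.deriv_eq]
      exact ((((Real.hasDerivAt_rpow_const (Or.inl hu.ne')).const_mul (-(a * p))).add
        ((Real.hasDerivAt_rpow_const (Or.inl hu.ne')).const_mul (b * q))).sub
        ((Real.hasDerivAt_rpow_const (Or.inl hu.ne')).const_mul (c * r))).deriv
    rw [h2, hdf u hu]
    have e : ∀ x : ℝ, u ^ (x - 1) = u ^ x / u := fun x => by
      rw [Real.rpow_sub hu, Real.rpow_one]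
    rw [e p, e q, e r, e (p + q), e (p + r), e (q + r),
      Real.rpow_add hu p q, Real.rpow_add hu p r, Real.rpow_add hu q r]
    field_simp
    ring
  have key1 : (∃! u : ℝ, 0 < u ∧ (fun u : ℝ => -a * u ^ p + b * u ^ q - c * u ^ r) u = 0)
      ↔ (∃! u : ℝ, 0 < u ∧ b * u ^ (q - p) - c * u ^ (r - p) = a) :=
    existsUnique_congr fun u => and_congr_right fun hu => zero_iff hu
  have key2 : (∃! u : ℝ, 0 < u ∧ ftilde u = 0)
      ↔ (∃! u : ℝ, 0 < u ∧ a * c * (r - p) ^ 2 * u ^ (p + r - 1 - (p + q - 1))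
          - b * c * (r - q) ^ 2 * u ^ (q + r - 1 - (p + q - 1)) = a * b * (q - p) ^ 2) :=
    existsUnique_congr fun u => and_congr_right fun hu => by
      rw [hft u hu]; exact zero_iff hu
  rw [key1, key2,
    core a b c (q - p) (r - p) ha hb hc hd1 (by linarith),
    core (a * b * (q - p) ^ 2) (a * c * (r - p) ^ 2) (b * c * (r - q) ^ 2)
      (p + r - 1 - (p + q - 1)) (q + r - 1 - (p + q - 1))
      (by positivity) (by positivity) (by positivity) (by linarith) (by linarith)]
  rw [show (p + r - 1 - (p + q - 1) : ℝ) = r - q by ring,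
    show (q + r - 1 - (p + q - 1) : ℝ) = r - p by ring,
    show (r - p - (q - p) : ℝ) = r - q by ring,
    show (r - p - (r - q) : ℝ) = q - p by ring,
    show (1 - (q - p) / (r - p) : ℝ) = (r - q) / (r - p) by field_simp; ring,
    show (1 - (r - q) / (r - p) : ℝ) = (q - p) / (r - p) by field_simp; ring,
    show ((r - q) * (a * c * (r - p) ^ 2) / ((r - p) * (b * c * (r - q) ^ 2)) : ℝ)
      = a * (r - p) / (b * (r - q)) by
        rw [div_eq_div_iff (by positivity) (by positivity)]; ring]
  set W : ℝ := (q - p) * b / ((r - p) * c) with hWdef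
  set Z : ℝ := a * (r - p) / (b * (r - q)) with hZdef
  have hW : 0 < W := div_pos (mul_pos hd1 hb) (mul_pos hd3 hc)
  have hZ : 0 < Z := div_pos (mul_pos ha hd3) (mul_pos hb hd2)
  have hk : ((q - p) / (r - q) : ℝ) ≠ 0 := (div_pos hd1 hd2).ne'
  rw [show ((r - q) / (q - p) : ℝ) = ((q - p) / (r - q))⁻¹ by rw [inv_div]]
  set k : ℝ := (q - p) / (r - q) with hkdef
  -- step 1 : left condition ↔ Z = W ^ k
  have step1 : (a = b * ((r - q) / (r - p)) * W ^ k) ↔ Z = W ^ k := by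
    rw [hZdef, div_eq_iff (by positivity : (b * (r - q) : ℝ) ≠ 0)]
    constructor
    · intro h
      rw [h]; field_simp
    · intro h
      have hbr : (r - p : ℝ) ≠ 0 := hd3.ne'
      field_simp
      linear_combination h
  -- step 2 : Z = W ^ k ↔ Z ^ k⁻¹ = W
  have step2 : (Z = W ^ k) ↔ Z ^ k⁻¹ = W := by
    constructor
    · intro h
      rw [h, ← Real.rpow_mul hW.le, mul_inv_cancel₀ hk, Real.rpow_one]
    · intro h
      rw [← h, ← Real.rpow_mul hZ.le, inv_mul_cancel₀ hk, Real.rpow_one]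
  -- step 3 : Z ^ k⁻¹ = W ↔ right condition
  have step3 : (Z ^ k⁻¹ = W) ↔
      (a * b * (q - p) ^ 2
        = a * c * (r - p) ^ 2 * ((q - p) / (r - p)) * Z ^ k⁻¹) := by
    constructor
    · intro h
      rw [h, hWdef]; field_simp
    · intro h
      have hne : (a * (q - p) * (c * (r - p)) : ℝ) ≠ 0 := by positivity
      apply mul_left_cancel₀ hne
      calc a * (q - p) * (c * (r - p)) * Z ^ k⁻¹
          = a * c * (r - p) ^ 2 * ((q - p) / (r - p)) * Z ^ k⁻¹ := by
            field_simp
        _ = a * b * (q - p) ^ 2 := h.symm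
        _ = a * (q - p) * (c * (r - p)) * W := by
            rw [hWdef]; field_simp
  rw [step1, step2, step3]
end

section
/- Let a, b, c > 0 and p < q < r be real numbers, let f(u) = -a u^p + b u^q - c u^r for u > 0, and let f̃(u) = (u f'(u))' f(u) - u f'(u)^2. Then f(u) < 0 for every u > 0 if and only if there exists u > 0 with f̃(u) > 0. -/
lemma amgm_core (α β y : ℝ) (hα : 0 < α) (hβ : 0 < β) (hy : 0 < y) :
    α + β ≤ β * y ^ (-α) + α * y ^ β := by
  have hs : (0:ℝ) < α + β := by linarith
  have h := Real.geom_mean_le_arith_mean2_weighted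
    (w₁ := β/(α+β)) (w₂ := α/(α+β)) (p₁ := y^(-α)) (p₂ := y^β)
    (by positivity) (by positivity) (by positivity) (by positivity)
    (by field_simp; ring)
  have h1 : (y^(-α))^(β/(α+β)) * (y^β)^(α/(α+β)) = 1 := by
    rw [← Real.rpow_mul hy.le, ← Real.rpow_mul hy.le, ← Real.rpow_add hy,
      show -α*(β/(α+β)) + β*(α/(α+β)) = 0 by field_simp; ring, Real.rpow_zero]
  rw [h1] at h
  have h2 := mul_le_mul_of_nonneg_left h hs.le
  rw [mul_one] at h2
  have h3 : (α+β) * (β/(α+β)*y^(-α) + α/(α+β)*y^β) = β*y^(-α)+α*y^β := by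
    field_simp
  rw [h3] at h2
  exact h2

lemma final_step (α β K L Ya Yb : ℝ) (hβ : 0 < β) (hK : 0 < K)
    (hrel : β * L = α * K) (hamgm : α + β ≤ β * Ya + α * Yb) :
    K + L ≤ K * Ya + L * Yb := by
  have h5 := mul_le_mul_of_nonneg_left hamgm hK.le
  have h6 : β * L * Yb = α * K * Yb := by linear_combination Yb * hrel
  have h7 : β * (K + L) ≤ β * (K * Ya + L * Yb) := by nlinarith [h5, h6, hrel]
  exact (mul_le_mul_iff_right₀ hβ).mp h7

lemma min_lem (A C α β x₀ : ℝ) (hA : 0 < A) (hC : 0 < C) (hα : 0 < α) (hβ : 0 < β)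
    (hx₀ : 0 < x₀) (hrel : x₀ ^ (α+β) = α*A/(β*C)) :
    ∀ x : ℝ, 0 < x → A * x₀ ^ (-α) + C * x₀ ^ β ≤ A * x ^ (-α) + C * x ^ β := by
  intro x hx
  have hy0 : 0 < x / x₀ := div_pos hx hx₀
  have hxy : x = (x/x₀) * x₀ := by field_simp
  have e1 : x ^ (-α) = (x/x₀)^(-α) * x₀^(-α) := by
    conv_lhs => rw [hxy]
    rw [Real.mul_rpow hy0.le hx₀.le]
  have e2 : x ^ β = (x/x₀)^β * x₀^β := by
    conv_lhs => rw [hxy]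
    rw [Real.mul_rpow hy0.le hx₀.le]
  have hrel2 : β * (C * x₀ ^ β) = α * (A * x₀ ^ (-α)) := by
    have h1 : x₀^α * x₀^β = x₀ ^ (α+β) := (Real.rpow_add hx₀ _ _).symm
    have h2 : x₀^(-α) = (x₀^α)⁻¹ := Real.rpow_neg hx₀.le α
    have hp : 0 < x₀^α := Real.rpow_pos_of_pos hx₀ _
    rw [← h1] at hrel
    rw [h2]
    field_simp at hrel ⊢
    linarith [hrel]
  have hK : 0 < A * x₀^(-α) := by positivity
  have hmain := final_step α β (A * x₀^(-α)) (C * x₀^β) ((x/x₀)^(-α)) ((x/x₀)^β)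
    hβ hK hrel2 (amgm_core α β (x/x₀) hα hβ hy0)
  rw [e1, e2]
  nlinarith [hmain]

lemma bridge_lem (b s t X Y Z : ℝ) (hs : 0 < s) (ht : 0 < t)
    (hX : 0 < X) (hY : 0 < Y) (hZ : 0 < Z) (hrel : t * Y = s * X) :
    (b < X + Y) ↔ (b*s^2*X*Z + b*t^2*Y*Z < X*Y*Z*(s+t)^2) := by
  have hpos : 0 < s*X*Z*(s+t) := by positivity
  have e1 : b*t^2*Y*Z = b*t*s*X*Z := by linear_combination b*t*Z*hrel
  have e2 : (X+Y)*(s*X*Z*(s+t)) = X*Y*Z*(s+t)^2 := by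
    linear_combination (-(X*Z*(s+t)))*hrel
  constructor
  · intro h
    have h5 := (mul_lt_mul_iff_left₀ hpos).mpr h
    nlinarith [h5, e1, e2]
  · intro h
    have h6 : b * (s*X*Z*(s+t)) < (X+Y) * (s*X*Z*(s+t)) := by
      nlinarith [h, e1, e2]
    exact (mul_lt_mul_iff_left₀ hpos).mp h6

/-- `f u < 0` for every `u > 0` iff `∃ u > 0, f̃ u > 0`. -/
theorem stmt_7 (a b c p q r : ℝ) (ha : 0 < a) (hb : 0 < b) (hc : 0 < c)
    (hpq : p < q) (hqr : q < r)
    (f : ℝ → ℝ) (hf : f = fun u : ℝ => -a * u ^ p + b * u ^ q - c * u ^ r)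
    (ftilde : ℝ → ℝ)
    (hftilde : ftilde = fun u : ℝ =>
      deriv (fun v : ℝ => v * deriv f v) u * f u - u * (deriv f u) ^ 2) :
    (∀ u : ℝ, 0 < u → f u < 0) ↔ (∃ u : ℝ, 0 < u ∧ 0 < ftilde u) := by
  have hs : (0:ℝ) < q - p := sub_pos.mpr hpq
  have ht : (0:ℝ) < r - q := sub_pos.mpr hqr
  -- derivative of f
  have hD : ∀ u : ℝ, 0 < u →
      HasDerivAt f ((-a)*(p*u^(p-1)) + b*(q*u^(q-1)) - c*(r*u^(r-1))) u := by
    intro u hu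
    have h1 : HasDerivAt (fun v:ℝ => v ^ p) (p * u^(p-1)) u :=
      Real.hasDerivAt_rpow_const (Or.inl hu.ne')
    have h2 : HasDerivAt (fun v:ℝ => v ^ q) (q * u^(q-1)) u :=
      Real.hasDerivAt_rpow_const (Or.inl hu.ne')
    have h3 : HasDerivAt (fun v:ℝ => v ^ r) (r * u^(r-1)) u :=
      Real.hasDerivAt_rpow_const (Or.inl hu.ne')
    rw [hf]
    exact ((h1.const_mul (-a)).add (h2.const_mul b)).sub (h3.const_mul c)
  have hDf : ∀ u : ℝ, 0 < u →
      deriv f u = -(a*p)*u^(p-1) + b*q*u^(q-1) - c*r*u^(r-1) := by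
    intro u hu
    rw [(hD u hu).deriv]; ring
  -- derivative of u * f'(u)
  have hG : ∀ u : ℝ, 0 < u →
      deriv (fun v => v * deriv f v) u
        = -(a*p^2)*u^(p-1) + b*q^2*u^(q-1) - c*r^2*u^(r-1) := by
    intro u hu
    have hev : (fun v => v * deriv f v)
        =ᶠ[nhds u] (fun v => (-(a*p))*v^p + (b*q)*v^q - (c*r)*v^r) := by
      filter_upwards [Ioi_mem_nhds hu] with v hv
      have hv0 : (0:ℝ) < v := hv
      rw [hDf v hv0]
      have e1 : v^(p-1) * v = v^p := by
        rw [← Real.rpow_add_one hv0.ne' (p-1), show p-1+1 = p by ring]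
      have e2 : v^(q-1) * v = v^q := by
        rw [← Real.rpow_add_one hv0.ne' (q-1), show q-1+1 = q by ring]
      have e3 : v^(r-1) * v = v^r := by
        rw [← Real.rpow_add_one hv0.ne' (r-1), show r-1+1 = r by ring]
      rw [← e1, ← e2, ← e3]; ring
    rw [hev.deriv_eq]
    have h1 : HasDerivAt (fun v:ℝ => v ^ p) (p * u^(p-1)) u :=
      Real.hasDerivAt_rpow_const (Or.inl hu.ne')
    have h2 : HasDerivAt (fun v:ℝ => v ^ q) (q * u^(q-1)) u :=
      Real.hasDerivAt_rpow_const (Or.inl hu.ne')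
    have h3 : HasDerivAt (fun v:ℝ => v ^ r) (r * u^(r-1)) u :=
      Real.hasDerivAt_rpow_const (Or.inl hu.ne')
    have h4 := ((h1.const_mul (-(a*p))).add (h2.const_mul (b*q))).sub
      (h3.const_mul (c*r))
    refine h4.deriv.trans ?_; ring
  -- equivalent form of `f u < 0`
  have hE1 : ∀ u : ℝ, 0 < u →
      (f u < 0 ↔ b < a*u^(-(q-p)) + c*u^(r-q)) := by
    intro u hu
    have hQ : 0 < u^q := Real.rpow_pos_of_pos hu q
    have m1 : u^p = u^(-(q-p)) * u^q := by
      rw [← Real.rpow_add hu]; congr 1; ring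
    have m2 : u^r = u^(r-q) * u^q := by
      rw [← Real.rpow_add hu]; congr 1; ring
    rw [hf]
    simp only
    rw [m1, m2]
    constructor <;> intro h <;> nlinarith [hQ]
  -- equivalent form of `0 < ftilde u`
  have hE2 : ∀ u : ℝ, 0 < u →
      (0 < ftilde u ↔
        a*b*(q-p)^2*u^(-(r-q)) + b*c*(r-q)^2*u^(q-p) < a*c*((q-p)+(r-q))^2) := by
    intro u hu
    have hkey : ftilde u =
        (a*c*((q-p)+(r-q))^2*(u^p*u^r) - a*b*(q-p)^2*(u^p*u^q)
          - b*c*(r-q)^2*(u^q*u^r)) / u := by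
      rw [hftilde]
      simp only
      rw [hG u hu, hDf u hu, hf]
      simp only
      have e1 : u^(p-1) = u^p/u := by rw [Real.rpow_sub hu, Real.rpow_one]
      have e2 : u^(q-1) = u^q/u := by rw [Real.rpow_sub hu, Real.rpow_one]
      have e3 : u^(r-1) = u^r/u := by rw [Real.rpow_sub hu, Real.rpow_one]
      rw [e1, e2, e3]
      field_simp
      ring
    have hPR : 0 < u^p*u^r := by positivity
    have m1 : u^p*u^q = u^(-(r-q)) * (u^p*u^r) := by
      rw [← Real.rpow_add hu, ← Real.rpow_add hu, ← Real.rpow_add hu]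
      congr 1; ring
    have m2 : u^q*u^r = u^(q-p) * (u^p*u^r) := by
      rw [← Real.rpow_add hu, ← Real.rpow_add hu, ← Real.rpow_add hu]
      congr 1; ring
    rw [hkey, lt_div_iff₀ hu, zero_mul, m1, m2]
    constructor <;> intro h <;> nlinarith [hPR]
  -- the minimizer
  have hbase : (0:ℝ) < (q-p)*a/((r-q)*c) := by positivity
  have hstne : (q-p)+(r-q) ≠ 0 := by positivity
  obtain ⟨x₀, hx₀, hx₀pow⟩ :
      ∃ x₀ : ℝ, 0 < x₀ ∧ x₀ ^ ((q-p)+(r-q)) = (q-p)*a/((r-q)*c) :=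
    ⟨((q-p)*a/((r-q)*c)) ^ ((q-p)+(r-q))⁻¹,
      Real.rpow_pos_of_pos hbase _, Real.rpow_inv_rpow hbase.le hstne⟩
  -- relation between the two terms at x₀
  have hrelXY : (r-q)*(c*x₀^(r-q)) = (q-p)*(a*x₀^(-(q-p))) := by
    have h1 : x₀^(q-p) * x₀^(r-q) = x₀ ^ ((q-p)+(r-q)) := (Real.rpow_add hx₀ _ _).symm
    have h2 : x₀^(-(q-p)) = (x₀^(q-p))⁻¹ := Real.rpow_neg hx₀.le _
    have hp1 : 0 < x₀^(q-p) := Real.rpow_pos_of_pos hx₀ _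
    rw [← h1] at hx₀pow
    rw [h2]
    field_simp at hx₀pow ⊢
    linarith [hx₀pow]
  have hZ : 0 < x₀^((q-p)-(r-q)) := Real.rpow_pos_of_pos hx₀ _
  have hX : 0 < a*x₀^(-(q-p)) := by positivity
  have hY : 0 < c*x₀^(r-q) := by positivity
  have hf1 : a*b*(q-p)^2*x₀^(-(r-q))
      = b*(q-p)^2*(a*x₀^(-(q-p)))*x₀^((q-p)-(r-q)) := by
    rw [show x₀^(-(r-q)) = x₀^(-(q-p)) * x₀^((q-p)-(r-q)) by
      rw [← Real.rpow_add hx₀]; congr 1; ring]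
    ring
  have hf2 : b*c*(r-q)^2*x₀^(q-p)
      = b*(r-q)^2*(c*x₀^(r-q))*x₀^((q-p)-(r-q)) := by
    rw [show x₀^(q-p) = x₀^(r-q) * x₀^((q-p)-(r-q)) by
      rw [← Real.rpow_add hx₀]; congr 1; ring]
    ring
  have hf3 : a*c = (a*x₀^(-(q-p)))*(c*x₀^(r-q))*x₀^((q-p)-(r-q)) := by
    rw [show (a*x₀^(-(q-p)))*(c*x₀^(r-q))*x₀^((q-p)-(r-q))
        = a*c*(x₀^(-(q-p))*x₀^(r-q)*x₀^((q-p)-(r-q))) by ring,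
      ← Real.rpow_add hx₀, ← Real.rpow_add hx₀,
      show -(q-p)+(r-q)+((q-p)-(r-q)) = 0 by ring, Real.rpow_zero, mul_one]
  have hbridge : (b < a*x₀^(-(q-p)) + c*x₀^(r-q)) ↔
      (a*b*(q-p)^2*x₀^(-(r-q)) + b*c*(r-q)^2*x₀^(q-p)
        < a*c*((q-p)+(r-q))^2) := by
    have h0 := bridge_lem b (q-p) (r-q) (a*x₀^(-(q-p))) (c*x₀^(r-q))
      (x₀^((q-p)-(r-q))) hs ht hX hY hZ hrelXY
    rw [h0, ← hf1, ← hf2, ← hf3]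
  -- minimality
  have hmin1 := min_lem a c (q-p) (r-q) x₀ ha hc hs ht hx₀ hx₀pow
  have hmin2 : ∀ x : ℝ, 0 < x →
      a*b*(q-p)^2 * x₀^(-(r-q)) + b*c*(r-q)^2 * x₀^(q-p)
        ≤ a*b*(q-p)^2 * x^(-(r-q)) + b*c*(r-q)^2 * x^(q-p) := by
    apply min_lem (a*b*(q-p)^2) (b*c*(r-q)^2) (r-q) (q-p) x₀
      (by positivity) (by positivity) ht hs hx₀
    rw [show (r-q)+(q-p) = (q-p)+(r-q) by ring, hx₀pow]
    field_simp
  constructor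
  · intro h
    refine ⟨x₀, hx₀, ?_⟩
    rw [hE2 x₀ hx₀]
    exact hbridge.mp ((hE1 x₀ hx₀).mp (h x₀ hx₀))
  · rintro ⟨u₁, hu₁, hft⟩ u hu
    rw [hE1 u hu]
    rw [hE2 u₁ hu₁] at hft
    have h2 := lt_of_le_of_lt (hmin2 u₁ hu₁) hft
    have h3 := hbridge.mpr h2
    have h4 := hmin1 u hu
    linarith
end

section
/- Let a, b, c > 0 and p < q < r be real numbers, let f(u) = -a u^p + b u^q - c u^r for u > 0, and let f̃(u) = (u f'(u))' f(u) - u f'(u)^2. Then f̃(u) < 0 for every u > 0 if and only if a < b · ((r-q)/(r-p)) · (b(q-p)/(c(r-p)))^{(q-p)/(r-q)}. -/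
open Real Filter

lemma aux_hasDerivAt_triple (a b c p q r : ℝ) {u : ℝ} (hu : 0 < u) :
    HasDerivAt (fun v : ℝ => -a * v ^ p + b * v ^ q - c * v ^ r)
      (-a * (p * u ^ (p - 1)) + b * (q * u ^ (q - 1)) - c * (r * u ^ (r - 1))) u := by
  have hp := (Real.hasDerivAt_rpow_const (x := u) (p := p) (Or.inl hu.ne')).const_mul (-a)
  have hq := (Real.hasDerivAt_rpow_const (x := u) (p := q) (Or.inl hu.ne')).const_mul b
  have hr := (Real.hasDerivAt_rpow_const (x := u) (p := r) (Or.inl hu.ne')).const_mul c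
  exact (hp.add hq).sub hr

lemma aux_beta_T_pow {α β s : ℝ} (hα : 0 < α) (hβ : 0 < β) (hs : 1 < s) :
    β * ((α / (β * s)) ^ (1 / (s - 1))) ^ s = α * ((α / (β * s)) ^ (1 / (s - 1))) / s := by
  have hspos : (0 : ℝ) < s := by linarith
  have hX : 0 < α / (β * s) := div_pos hα (mul_pos hβ hspos)
  set T := (α / (β * s)) ^ (1 / (s - 1)) with hT
  have hTpos : 0 < T := Real.rpow_pos_of_pos hX _
  have hTpow : T ^ (s - 1) = α / (β * s) := by
    rw [hT, ← Real.rpow_mul hX.le, one_div, inv_mul_cancel₀ (by linarith : s - 1 ≠ 0),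
      Real.rpow_one]
  have hTs : T ^ s = T ^ (s - 1) * T := by
    rw [← Real.rpow_add_one hTpos.ne']; congr 1; ring
  rw [hTs, hTpow]
  field_simp

lemma aux_le_max {α β s t : ℝ} (hα : 0 < α) (hβ : 0 < β) (hs : 1 < s) (ht : 0 < t) :
    α * t - β * t ^ s ≤
      α * ((α / (β * s)) ^ (1 / (s - 1))) - β * ((α / (β * s)) ^ (1 / (s - 1))) ^ s := by
  have hspos : (0 : ℝ) < s := by linarith
  have hX : 0 < α / (β * s) := div_pos hα (mul_pos hβ hspos)
  set T := (α / (β * s)) ^ (1 / (s - 1)) with hT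
  have hTpos : 0 < T := Real.rpow_pos_of_pos hX _
  have hTs : β * T ^ s = α * T / s := aux_beta_T_pow hα hβ hs
  set x := t / T with hx
  have hxpos : 0 < x := div_pos ht hTpos
  have htx : t = T * x := by rw [hx, mul_div_assoc', mul_comm, mul_div_assoc, div_self hTpos.ne', mul_one]
  have hts : t ^ s = T ^ s * x ^ s := by rw [htx, Real.mul_rpow hTpos.le hxpos.le]
  have hkey : s * x - x ^ s ≤ s - 1 := by
    have h := one_add_mul_self_le_rpow_one_add (by linarith : (-1 : ℝ) ≤ x - 1) hs.le
    have hx1 : (1 : ℝ) + (x - 1) = x := by ring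
    rw [hx1] at h; linarith
  have hATs : (0 : ℝ) < α * T / s := by positivity
  have h1 : α * t - β * t ^ s = (α * T / s) * (s * x - x ^ s) := by
    rw [hts, htx]
    have hb : β * (T ^ s * x ^ s) = (α * T / s) * x ^ s := by rw [← mul_assoc, hTs]
    rw [hb]; field_simp
  have h2 : α * T - β * T ^ s = (α * T / s) * (s - 1) := by
    rw [hTs]; field_simp
  rw [h1, h2]
  exact mul_le_mul_of_nonneg_left hkey hATs.le

lemma aux_opt_iff {α β s : ℝ} (hα : 0 < α) (hβ : 0 < β) (hs : 1 < s) (γ : ℝ) :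
    (∀ t : ℝ, 0 < t → α * t - β * t ^ s < γ) ↔
      α * ((α / (β * s)) ^ (1 / (s - 1))) - β * ((α / (β * s)) ^ (1 / (s - 1))) ^ s < γ := by
  have hspos : (0 : ℝ) < s := by linarith
  have hX : 0 < α / (β * s) := div_pos hα (mul_pos hβ hspos)
  have hTpos : 0 < (α / (β * s)) ^ (1 / (s - 1)) := Real.rpow_pos_of_pos hX _
  constructor
  · intro h
    exact h _ hTpos
  · intro h t ht
    exact lt_of_le_of_lt (aux_le_max hα hβ hs ht) h

/-- `f̃ u < 0` for every `u > 0` iff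
`a < b ((r-q)/(r-p)) (b(q-p)/(c(r-p)))^{(q-p)/(r-q)}`. -/
theorem stmt_8 (a b c p q r : ℝ) (ha : 0 < a) (hb : 0 < b) (hc : 0 < c)
    (hpq : p < q) (hqr : q < r)
    (f : ℝ → ℝ) (hf : f = fun u : ℝ => -a * u ^ p + b * u ^ q - c * u ^ r)
    (ftilde : ℝ → ℝ)
    (hftilde : ftilde = fun u : ℝ =>
      deriv (fun v : ℝ => v * deriv f v) u * f u - u * (deriv f u) ^ 2) :
    (∀ u : ℝ, 0 < u → ftilde u < 0) ↔
      a < b * ((r - q) / (r - p)) *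
        (b * (q - p) / (c * (r - p))) ^ ((q - p) / (r - q)) := by
  subst hf
  subst hftilde
  have hrq : (0:ℝ) < r - q := by linarith
  have hrp : (0:ℝ) < r - p := by linarith
  have hqp : (0:ℝ) < q - p := by linarith
  have hs : 1 < (r - p) / (r - q) := (one_lt_div hrq).mpr (by linarith)
  have hα : (0:ℝ) < (r - p) ^ 2 * (a * c) := by positivity
  have hβ : (0:ℝ) < (r - q) ^ 2 * (b * c) := by positivity
  -- pointwise reformulation
  have key : ∀ u : ℝ, 0 < u →
      ((deriv (fun v : ℝ => v * deriv (fun u : ℝ => -a * u ^ p + b * u ^ q - c * u ^ r) v) u *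
          (-a * u ^ p + b * u ^ q - c * u ^ r) -
        u * (deriv (fun u : ℝ => -a * u ^ p + b * u ^ q - c * u ^ r) u) ^ 2 < 0) ↔
        ((r - p) ^ 2 * (a * c)) * u ^ (r - q) -
          ((r - q) ^ 2 * (b * c)) * (u ^ (r - q)) ^ ((r - p) / (r - q)) <
          (q - p) ^ 2 * (a * b)) := by
    intro u hu
    have hne : u ≠ 0 := hu.ne'
    have hf' : ∀ v : ℝ, 0 < v →
        deriv (fun u : ℝ => -a * u ^ p + b * u ^ q - c * u ^ r) v =
        -a * (p * v ^ (p - 1)) + b * (q * v ^ (q - 1)) - c * (r * v ^ (r - 1)) := fun v hv =>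
      (aux_hasDerivAt_triple a b c p q r hv).deriv
    have hEq : (fun v : ℝ =>
          v * deriv (fun u : ℝ => -a * u ^ p + b * u ^ q - c * u ^ r) v) =ᶠ[nhds u]
        (fun v : ℝ => -(a * p) * v ^ p + (b * q) * v ^ q - (c * r) * v ^ r) := by
      filter_upwards [Ioi_mem_nhds hu] with v hv
      have hvne : v ≠ 0 := ne_of_gt hv
      rw [hf' v hv, Real.rpow_sub_one hvne, Real.rpow_sub_one hvne, Real.rpow_sub_one hvne]
      field_simp
    have hD2 : deriv (fun v : ℝ =>
          v * deriv (fun u : ℝ => -a * u ^ p + b * u ^ q - c * u ^ r) v) u =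
        -(a * p) * (p * u ^ (p - 1)) + (b * q) * (q * u ^ (q - 1)) -
          (c * r) * (r * u ^ (r - 1)) := by
      rw [hEq.deriv_eq]
      exact (aux_hasDerivAt_triple (a * p) (b * q) (c * r) p q r hu).deriv
    rw [hD2, hf' u hu]
    have hN : (-(a * p) * (p * u ^ (p - 1)) + (b * q) * (q * u ^ (q - 1)) -
          (c * r) * (r * u ^ (r - 1))) * (-a * u ^ p + b * u ^ q - c * u ^ r) -
        u * (-a * (p * u ^ (p - 1)) + b * (q * u ^ (q - 1)) - c * (r * u ^ (r - 1))) ^ 2 =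
        u ^ (p + q) * (((r - p) ^ 2 * (a * c)) * u ^ (r - q) -
          ((r - q) ^ 2 * (b * c)) * (u ^ (r - q)) ^ ((r - p) / (r - q)) -
          (q - p) ^ 2 * (a * b)) / u := by
      have e1 : (u ^ (r - q)) ^ ((r - p) / (r - q)) = u ^ (r - p) := by
        rw [← Real.rpow_mul hu.le]
        congr 1
        field_simp
      rw [e1, Real.rpow_sub_one hne p, Real.rpow_sub_one hne q, Real.rpow_sub_one hne r,
        Real.rpow_add hu p q, Real.rpow_sub hu r q, Real.rpow_sub hu r p]
      field_simp
      ring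
    rw [hN, mul_div_right_comm, mul_neg_iff]
    have hpos : 0 < u ^ (p + q) / u := div_pos (Real.rpow_pos_of_pos hu _) hu
    constructor
    · rintro (⟨_, h2⟩ | ⟨h1, _⟩)
      · linarith
      · linarith
    · intro h
      exact Or.inl ⟨hpos, by linarith⟩
  have step2 : (∀ u : ℝ, 0 < u →
      deriv (fun v : ℝ => v * deriv (fun u : ℝ => -a * u ^ p + b * u ^ q - c * u ^ r) v) u *
          (-a * u ^ p + b * u ^ q - c * u ^ r) -
        u * (deriv (fun u : ℝ => -a * u ^ p + b * u ^ q - c * u ^ r) u) ^ 2 < 0) ↔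
      (∀ t : ℝ, 0 < t → ((r - p) ^ 2 * (a * c)) * t -
        ((r - q) ^ 2 * (b * c)) * t ^ ((r - p) / (r - q)) < (q - p) ^ 2 * (a * b)) := by
    constructor
    · intro h t ht
      have hu : (0:ℝ) < t ^ (r - q)⁻¹ := Real.rpow_pos_of_pos ht _
      have h2 := (key _ hu).mp (h _ hu)
      rwa [← Real.rpow_mul ht.le, inv_mul_cancel₀ hrq.ne', Real.rpow_one] at h2
    · intro h u hu
      exact (key u hu).mpr (h _ (Real.rpow_pos_of_pos hu _))
  beta_reduce
  rw [step2, aux_opt_iff hα hβ hs]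
  -- final algebra:
  have hXeq : ((r - p) ^ 2 * (a * c)) / (((r - q) ^ 2 * (b * c)) * ((r - p) / (r - q))) =
      (r - p) * a / ((r - q) * b) := by
    field_simp
  have heeq : 1 / ((r - p) / (r - q) - 1) = (r - q) / (q - p) := by
    rw [div_sub_one hrq.ne']
    rw [one_div_div]
    congr 1
    ring
  rw [hXeq, heeq]
  have hXpos : 0 < (r - p) * a / ((r - q) * b) := by positivity
  have hTpos : 0 < ((r - p) * a / ((r - q) * b)) ^ ((r - q) / (q - p)) :=
    Real.rpow_pos_of_pos hXpos _
  set T := ((r - p) * a / ((r - q) * b)) ^ ((r - q) / (q - p)) with hTdef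
  have hTs : ((r - q) ^ 2 * (b * c)) * T ^ ((r - p) / (r - q)) =
      ((r - p) ^ 2 * (a * c)) * T / ((r - p) / (r - q)) := by
    have h0 := aux_beta_T_pow hα hβ hs
    rw [hXeq, heeq] at h0
    exact h0
  rw [hTs]
  have hM : ((r - p) ^ 2 * (a * c)) * T - ((r - p) ^ 2 * (a * c)) * T / ((r - p) / (r - q)) =
      (r - p) * (q - p) * (a * c) * T := by
    field_simp
    ring
  rw [hM]
  rw [show b * (q - p) / (c * (r - p)) = (q - p) * b / ((r - p) * c) from by ring]
  have hKpos : (0:ℝ) < (q - p) * b / ((r - p) * c) := by positivity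
  have c1 : (r - p) * (q - p) * (a * c) * T < (q - p) ^ 2 * (a * b) ↔
      T < (q - p) * b / ((r - p) * c) := by
    rw [show (r - p) * (q - p) * (a * c) * T = (T * ((r - p) * c)) * ((q - p) * a) from by ring,
      show (q - p) ^ 2 * (a * b) = ((q - p) * b) * ((q - p) * a) from by ring,
      mul_lt_mul_iff_of_pos_right (show (0:ℝ) < (q - p) * a by positivity),
      lt_div_iff₀ (show (0:ℝ) < (r - p) * c by positivity)]
  have hexp : (r - q) / (q - p) = ((q - p) / (r - q))⁻¹ := (inv_div _ _).symm
  have c2 : T < (q - p) * b / ((r - p) * c) ↔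
      (r - p) * a / ((r - q) * b) < ((q - p) * b / ((r - p) * c)) ^ ((q - p) / (r - q)) := by
    rw [hTdef, hexp]
    exact Real.rpow_inv_lt_iff_of_pos hXpos.le hKpos.le (by positivity)
  have c3 : (r - p) * a / ((r - q) * b) < ((q - p) * b / ((r - p) * c)) ^ ((q - p) / (r - q)) ↔
      a < b * ((r - q) / (r - p)) * ((q - p) * b / ((r - p) * c)) ^ ((q - p) / (r - q)) := by
    set Z := ((q - p) * b / ((r - p) * c)) ^ ((q - p) / (r - q)) with hZ
    rw [div_lt_iff₀ (show (0:ℝ) < (r - q) * b by positivity),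
      show b * ((r - q) / (r - p)) * Z = (b * (r - q) * Z) / (r - p) from by ring,
      lt_div_iff₀ hrp]
    constructor <;> intro h <;> linarith [h]
  exact c1.trans (c2.trans c3)
end

section
/- Let ω > 0 and q > p > 1 be real numbers, let f(u) = -ω u + u^p - u^q for u > 0, and let F(u) = ∫₀^u f(s) ds = -(ω/2) u^2 + u^{p+1}/(p+1) - u^{q+1}/(q+1). Define F̃(u) = (u f(u))' F(u) - u f(u)^2. Then there exists u > 0 with F(u) > 0 if and only if F̃(u) < 0 for every u > 0. -/
open Real

set_option maxHeartbeats 2000000 in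
/-- For the double-power function `f u = -ω u + u^p - u^q` with
antiderivative `F u = -(ω/2) u^2 + u^{p+1}/(p+1) - u^{q+1}/(q+1)` and
`F̃ u = (u f(u))' F(u) - u f(u)^2`, there exists `u > 0` with `F u > 0`
iff `F̃ u < 0` for every `u > 0`. -/
theorem stmt_9 (ω p q : ℝ) (hω : 0 < ω) (hp : 1 < p) (hpq : p < q)
    (f : ℝ → ℝ) (hf : f = fun u : ℝ => -ω * u + u ^ p - u ^ q)
    (F : ℝ → ℝ)
    (hF : F = fun u : ℝ =>
      -(ω / 2) * u ^ (2 : ℝ) + u ^ (p + 1) / (p + 1) - u ^ (q + 1) / (q + 1))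
    (Ftilde : ℝ → ℝ)
    (hFtilde : Ftilde = fun u : ℝ =>
      deriv (fun v : ℝ => v * f v) u * F u - u * (f u) ^ 2) :
    (∃ u : ℝ, 0 < u ∧ 0 < F u) ↔ (∀ u : ℝ, 0 < u → Ftilde u < 0) := by
  have hp0 : (0:ℝ) < p - 1 := by linarith
  have hq0 : (0:ℝ) < q - 1 := by linarith
  have hqp : (0:ℝ) < q - p := by linarith
  have hp1 : (0:ℝ) < p + 1 := by linarith
  have hq1 : (0:ℝ) < q + 1 := by linarith
  set c : ℝ := (q+1)*(p-1)/((q-1)*(p+1)) with hc_def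
  have hc : 0 < c := by positivity
  set u₀ : ℝ := c ^ ((q-p)⁻¹ : ℝ) with hu0_def
  have hu₀ : 0 < u₀ := Real.rpow_pos_of_pos hc _
  have hcu : u₀ ^ (q-p) = c := by
    rw [hu0_def, ← Real.rpow_mul hc.le, inv_mul_cancel₀ hqp.ne', Real.rpow_one]
  set X₀ : ℝ := u₀ ^ (p-1) with hX0_def
  set Y₀ : ℝ := u₀ ^ (q-1) with hY0_def
  have hX₀ : 0 < X₀ := Real.rpow_pos_of_pos hu₀ _
  have hY₀ : 0 < Y₀ := Real.rpow_pos_of_pos hu₀ _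
  have hY₀eq : Y₀ = c * X₀ := by
    rw [hY0_def, show q - 1 = (q-p) + (p-1) by ring, Real.rpow_add hu₀, hcu, hX0_def]
  set W : ℝ := 2*(q-p)*X₀/((q-1)*(p+1)) with hW_def
  have hW : 0 < W := by positivity
  clear_value W Y₀ X₀ u₀ c
  -- characterization of positivity of F
  have hPchar : ∀ u : ℝ, 0 < u →
      (0 < F u ↔ ω*((p+1)*(q+1)) < 2*(q+1)*u^(p-1) - 2*(p+1)*u^(q-1)) := by
    intro u hu
    have hu2 : u ^ (2:ℝ) = u*u := by
      rw [show (2:ℝ) = 1+1 by norm_num, Real.rpow_add hu, Real.rpow_one]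
    have hup1 : u ^ (p+1) = u*u*u^(p-1) := by
      rw [show p+1 = 1+1+(p-1) by ring, Real.rpow_add hu, Real.rpow_add hu, Real.rpow_one]
    have huq1 : u ^ (q+1) = u*u*u^(q-1) := by
      rw [show q+1 = 1+1+(q-1) by ring, Real.rpow_add hu, Real.rpow_add hu, Real.rpow_one]
    have hId : F u * (2*((p+1)*(q+1))) =
        (u*u) * (2*(q+1)*u^(p-1) - 2*(p+1)*u^(q-1) - ω*((p+1)*(q+1))) := by
      simp only [hF]
      rw [hu2, hup1, huq1]
      field_simp
      ring
    constructor
    · intro h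
      have h2 : 0 < F u * (2*((p+1)*(q+1))) := by
        apply mul_pos h; positivity
      rw [hId] at h2
      nlinarith [mul_pos hu hu]
    · intro h
      have h2 : 0 < (u*u) * (2*(q+1)*u^(p-1) - 2*(p+1)*u^(q-1) - ω*((p+1)*(q+1))) :=
        mul_pos (mul_pos hu hu) (by linarith)
      rw [← hId] at h2
      nlinarith [mul_pos hp1 hq1]
  -- characterization of negativity of Ftilde
  have hQchar : ∀ u : ℝ, 0 < u →
      (Ftilde u < 0 ↔
        ω*((q-1)^2*(p+1)*u^(q-1) - (p-1)^2*(q+1)*u^(p-1)) < 2*(q-p)^2*(u^(p-1)*u^(q-1))) := by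
    intro u hu
    have hu2 : u ^ (2:ℝ) = u*u := by
      rw [show (2:ℝ) = 1+1 by norm_num, Real.rpow_add hu, Real.rpow_one]
    have hup1 : u ^ (p+1) = u*u*u^(p-1) := by
      rw [show p+1 = 1+1+(p-1) by ring, Real.rpow_add hu, Real.rpow_add hu, Real.rpow_one]
    have huq1 : u ^ (q+1) = u*u*u^(q-1) := by
      rw [show q+1 = 1+1+(q-1) by ring, Real.rpow_add hu, Real.rpow_add hu, Real.rpow_one]
    have hup : u ^ p = u*u^(p-1) := by
      conv_lhs => rw [show p = 1+(p-1) by ring]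
      rw [Real.rpow_add hu, Real.rpow_one]
    have huq : u ^ q = u*u^(q-1) := by
      conv_lhs => rw [show q = 1+(q-1) by ring]
      rw [Real.rpow_add hu, Real.rpow_one]
    have hfd : HasDerivAt f (-ω + (p * u^(p-1) - q * u^(q-1))) u := by
      rw [hf]
      have h1 : HasDerivAt (fun v:ℝ => -ω * v) (-ω) u := by
        simpa using (hasDerivAt_id u).const_mul (-ω)
      have h2 : HasDerivAt (fun v:ℝ => v ^ p) (p * u^(p-1)) u :=
        Real.hasDerivAt_rpow_const (Or.inl hu.ne')
      have h3 : HasDerivAt (fun v:ℝ => v ^ q) (q * u^(q-1)) u :=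
        Real.hasDerivAt_rpow_const (Or.inl hu.ne')
      have := (h1.add h2).sub h3
      exact this.congr_deriv (by ring)
    have hd : HasDerivAt (fun v : ℝ => v * f v)
        (1 * f u + u * (-ω + (p * u^(p-1) - q * u^(q-1)))) u :=
      (hasDerivAt_id u).mul hfd
    have hde : deriv (fun v : ℝ => v * f v) u
        = 1 * f u + u * (-ω + (p * u^(p-1) - q * u^(q-1))) := hd.deriv
    have hId : Ftilde u * (2*((p+1)*(q+1))) =
        (u*(u*u)) * (ω*((q-1)^2*(p+1)*u^(q-1) - (p-1)^2*(q+1)*u^(p-1))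
          - 2*(q-p)^2*(u^(p-1)*u^(q-1))) := by
      simp only [hFtilde]
      rw [hde]
      simp only [hf, hF]
      rw [hu2, hup1, huq1, hup, huq]
      field_simp
      ring
    constructor
    · intro h
      have h2 : Ftilde u * (2*((p+1)*(q+1))) < 0 := by
        apply mul_neg_of_neg_of_pos h; positivity
      rw [hId] at h2
      nlinarith [mul_pos hu (mul_pos hu hu)]
    · intro h
      have h2 : (u*(u*u)) * (ω*((q-1)^2*(p+1)*u^(q-1) - (p-1)^2*(q+1)*u^(p-1))
          - 2*(q-p)^2*(u^(p-1)*u^(q-1))) < 0 :=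
        mul_neg_of_pos_of_neg (by positivity) (by linarith)
      rw [← hId] at h2
      nlinarith [mul_pos hp1 hq1]
  -- the two key global inequalities
  have hI : ∀ u : ℝ, 0 < u →
      (2*(q+1)*u^(p-1) - 2*(p+1)*u^(q-1) ≤ W*((p+1)*(q+1))) ∧
      (W*((q-1)^2*(p+1)*u^(q-1) - (p-1)^2*(q+1)*u^(p-1)) ≤ 2*(q-p)^2*(u^(p-1)*u^(q-1))) := by
    intro u hu
    have hs : 0 < u / u₀ := div_pos hu hu₀
    set s : ℝ := u / u₀ with hs_def
    set a : ℝ := s ^ (p-1) with ha_def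
    set b : ℝ := s ^ (q-1) with hb_def
    set w : ℝ := s ^ (q-p) with hw_def
    have ha : 0 < a := Real.rpow_pos_of_pos hs _
    have hb : 0 < b := Real.rpow_pos_of_pos hs _
    have hw0 : 0 < w := Real.rpow_pos_of_pos hs _
    have hXa : u^(p-1) = a * X₀ := by
      rw [ha_def, hX0_def, ← Real.mul_rpow hs.le hu₀.le, hs_def,
        div_mul_cancel₀ _ hu₀.ne']
    have hYb : u^(q-1) = b * Y₀ := by
      rw [hb_def, hY0_def, ← Real.mul_rpow hs.le hu₀.le, hs_def,
        div_mul_cancel₀ _ hu₀.ne']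
    have hbaw : (q-1)*b = (q-1)*(a * w) := by
      rw [ha_def, hw_def, ← Real.rpow_add hs, hb_def]
      congr 2
      ring
    have hab : b = a ^ ((q-1)/(p-1)) := by
      rw [ha_def, ← Real.rpow_mul hs.le, hb_def]
      congr 1
      field_simp
    have hbw : b = w ^ ((q-1)/(q-p)) := by
      rw [hw_def, ← Real.rpow_mul hs.le, hb_def]
      congr 1
      field_simp
    have hB1 : (p-1) + (q-1)*(a-1) ≤ (p-1)*b := by
      have h := one_add_mul_self_le_rpow_one_add (by linarith : (-1:ℝ) ≤ a - 1)
        (by rw [le_div_iff₀ hp0]; linarith : (1:ℝ) ≤ (q-1)/(p-1))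
      rw [show (1:ℝ) + (a-1) = a by ring, ← hab] at h
      have h2 := mul_le_mul_of_nonneg_left h hp0.le
      calc (p-1) + (q-1)*(a-1) = (p-1) * (1 + (q-1)/(p-1)*(a-1)) := by
            field_simp; try ring
        _ ≤ (p-1)*b := h2
    have hB2 : (q-p) + (q-1)*(w-1) ≤ (q-p)*b := by
      have h := one_add_mul_self_le_rpow_one_add (by linarith : (-1:ℝ) ≤ w - 1)
        (by rw [le_div_iff₀ hqp]; linarith : (1:ℝ) ≤ (q-1)/(q-p))
      rw [show (1:ℝ) + (w-1) = w by ring, ← hbw] at h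
      have h2 := mul_le_mul_of_nonneg_left h hqp.le
      calc (q-p) + (q-1)*(w-1) = (q-p) * (1 + (q-1)/(q-p)*(w-1)) := by
            field_simp; try ring
        _ ≤ (q-p)*b := h2
    have key2 : (q-1)*b - (p-1)*a ≤ (q-p)*(a*b) := by
      have h := mul_le_mul_of_nonneg_left hB2 ha.le
      nlinarith [h, hbaw]
    constructor
    · rw [hXa, hYb, hY₀eq]
      have hE1 : W*((p+1)*(q+1)) = 2*(q+1)*X₀ - 2*(p+1)*(c*X₀) := by
        rw [hW_def, hc_def]; field_simp; try ring
      rw [hE1]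
      have hint1 : 0 ≤ (2*(q+1)*X₀) * ((p-1)*b - ((p-1)+(q-1)*(a-1))) := by
        apply mul_nonneg (by positivity)
        linarith [hB1]
      have hint2 : c*((q-1)*(p+1))*(X₀*(b-1)) = (q+1)*(p-1)*(X₀*(b-1)) := by
        rw [hc_def]; field_simp; try ring
      have key : 0 ≤ ((2*(q+1)*X₀ - 2*(p+1)*(c*X₀)) -
          (2*(q+1)*(a*X₀) - 2*(p+1)*(b*(c*X₀)))) * (q-1) := by
        nlinarith [hint1, hint2]
      nlinarith [key, hq0]
    · rw [hXa, hYb, hY₀eq]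
      have hfin : (2*(q-p)^2*((a*X₀)*(b*(c*X₀)))
            - W*((q-1)^2*(p+1)*(b*(c*X₀)) - (p-1)^2*(q+1)*(a*X₀))) * ((q-1)*(p+1))
          = (2*(q-p)*(X₀*X₀)*((q+1)*(p-1))) * ((q-p)*(a*b) - ((q-1)*b - (p-1)*a)) := by
        rw [hW_def, hc_def]; field_simp; try ring
      have hnn : 0 ≤ (2*(q-p)^2*((a*X₀)*(b*(c*X₀)))
            - W*((q-1)^2*(p+1)*(b*(c*X₀)) - (p-1)^2*(q+1)*(a*X₀))) * ((q-1)*(p+1)) := by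
        rw [hfin]
        apply mul_nonneg (by positivity)
        linarith [key2]
      nlinarith [hnn, mul_pos hq0 hp1]
  -- auxiliary identities at the critical point
  have hN₀ : (q-1)^2*(p+1)*Y₀ - (p-1)^2*(q+1)*X₀ = (p-1)*(q+1)*(q-p)*X₀ := by
    rw [hY₀eq, hc_def]; field_simp; try ring
  have hE2 : W*((p-1)*(q+1)*(q-p)*X₀) = 2*(q-p)^2*(X₀*Y₀) := by
    rw [hY₀eq, hc_def, hW_def]; field_simp; try ring
  have hE1' : W*((p+1)*(q+1)) = 2*(q+1)*X₀ - 2*(p+1)*Y₀ := by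
    rw [hY₀eq, hc_def, hW_def]; field_simp; try ring
  constructor
  · rintro ⟨u₁, hu₁, hFu₁⟩ u hu
    have h1 := (hPchar u₁ hu₁).mp hFu₁
    have h2 := (hI u₁ hu₁).1
    have hωW : ω < W := by
      have h3 : ω * ((p+1)*(q+1)) < W * ((p+1)*(q+1)) := lt_of_lt_of_le h1 h2
      exact lt_of_mul_lt_mul_right h3 (by positivity)
    refine (hQchar u hu).mpr ?_
    have hX : 0 < u^(p-1) := Real.rpow_pos_of_pos hu _
    have hY : 0 < u^(q-1) := Real.rpow_pos_of_pos hu _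
    have hI2 := (hI u hu).2
    rcases le_or_gt ((q-1)^2*(p+1)*u^(q-1) - (p-1)^2*(q+1)*u^(p-1)) 0 with hN | hN
    · calc ω * ((q-1)^2*(p+1)*u^(q-1) - (p-1)^2*(q+1)*u^(p-1)) ≤ 0 :=
            mul_nonpos_of_nonneg_of_nonpos hω.le hN
        _ < 2*(q-p)^2*(u^(p-1)*u^(q-1)) := by positivity
    · exact lt_of_lt_of_le (mul_lt_mul_of_pos_right hωW hN) hI2
  · intro h
    refine ⟨u₀, hu₀, ?_⟩
    have hQ := (hQchar u₀ hu₀).mp (h u₀ hu₀)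
    rw [← hX0_def, ← hY0_def] at hQ
    have hωW : ω < W := by
      have hpos : (0:ℝ) < (p-1)*(q+1)*(q-p)*X₀ := by positivity
      have hlt : ω * ((p-1)*(q+1)*(q-p)*X₀) < W * ((p-1)*(q+1)*(q-p)*X₀) := by
        calc ω * ((p-1)*(q+1)*(q-p)*X₀)
            = ω * ((q-1)^2*(p+1)*Y₀ - (p-1)^2*(q+1)*X₀) := by rw [hN₀]
          _ < 2*(q-p)^2*(X₀*Y₀) := hQ
          _ = W * ((p-1)*(q+1)*(q-p)*X₀) := hE2.symm
      exact lt_of_mul_lt_mul_right hlt hpos.le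
    refine (hPchar u₀ hu₀).mpr ?_
    rw [← hX0_def, ← hY0_def]
    nlinarith [mul_lt_mul_of_pos_right hωW (mul_pos hp1 hq1), hE1']
end

section
/- Let ω > 0 and q > p > 1 be real numbers, let f(u) = -ω u + u^p - u^q for u > 0, and define f̃(u) = (u f'(u))' f(u) - u f'(u)^2. Then f̃(u) < 0 for every u > 0 if and only if there exists u > 0 with f(u) > 0. -/
/-- Tangent-line inequality for the concave function `x ↦ x ^ θ`, `0 < θ < 1`. -/
lemma stmt10_tangent {θ x y : ℝ} (hθ0 : 0 < θ) (hθ1 : θ < 1) (hx : 0 ≤ x) (hy : 0 < y) :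
    x ^ θ ≤ θ * y ^ (θ - 1) * x + (1 - θ) * y ^ θ := by
  have h := Real.geom_mean_le_arith_mean2_weighted hθ0.le (by linarith : (0:ℝ) ≤ 1 - θ)
    (div_nonneg hx hy.le) zero_le_one (by ring)
  rw [Real.one_rpow, mul_one, mul_one] at h
  have hyθ : (0:ℝ) < y ^ θ := Real.rpow_pos_of_pos hy θ
  have h2 := mul_le_mul_of_nonneg_right h hyθ.le
  have hl : (x / y) ^ θ * y ^ θ = x ^ θ := by
    rw [← Real.mul_rpow (div_nonneg hx hy.le) hy.le, div_mul_cancel₀ _ hy.ne']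
  have hs : y ^ (θ - 1) = y ^ θ / y := by
    rw [Real.rpow_sub hy, Real.rpow_one]
  calc x ^ θ = (x / y) ^ θ * y ^ θ := hl.symm
    _ ≤ (θ * (x / y) + (1 - θ)) * y ^ θ := h2
    _ = θ * (y ^ θ / y) * x + (1 - θ) * y ^ θ := by field_simp
    _ = θ * y ^ (θ - 1) * x + (1 - θ) * y ^ θ := by rw [hs]

/-- For `f u = -ω u + u^p - u^q` with `ω > 0`, `q > p > 1`,
`f̃ u < 0` for every `u > 0` iff there exists `u > 0` with `f u > 0`. -/
theorem stmt_10 (ω p q : ℝ) (hω : 0 < ω) (hp : 1 < p) (hpq : p < q)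
    (f : ℝ → ℝ) (hf : f = fun u : ℝ => -ω * u + u ^ p - u ^ q)
    (ftilde : ℝ → ℝ)
    (hftilde : ftilde = fun u : ℝ =>
      deriv (fun v : ℝ => v * deriv f v) u * f u - u * (deriv f u) ^ 2) :
    (∀ u : ℝ, 0 < u → ftilde u < 0) ↔ (∃ u : ℝ, 0 < u ∧ 0 < f u) := by
  have hq1 : (1:ℝ) < q := hp.trans hpq
  have hp1 : (0:ℝ) < p - 1 := by linarith
  have hq1' : (0:ℝ) < q - 1 := by linarith
  have hqp : (0:ℝ) < q - p := by linarith
  -- splitting powers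
  have hsplit : ∀ u : ℝ, 0 < u → u ^ (q-1) = u ^ (p-1) * u ^ (q-p) := by
    intro u hu
    rw [← Real.rpow_add hu]; congr 1; ring
  have hpow_p : ∀ u : ℝ, 0 < u → u ^ p = u ^ (p-1) * u := by
    intro u hu
    have : u ^ p = u ^ (p-1+1) := by congr 1; ring
    rw [this, Real.rpow_add hu, Real.rpow_one]
  have hpow_q : ∀ u : ℝ, 0 < u → u ^ q = u ^ (q-1) * u := by
    intro u hu
    have : u ^ q = u ^ (q-1+1) := by congr 1; ring
    rw [this, Real.rpow_add hu, Real.rpow_one]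
  -- critical points
  set u1 : ℝ := ((p-1)/(q-1)) ^ (q-p)⁻¹ with hu1def
  have hu1 : 0 < u1 := Real.rpow_pos_of_pos (by positivity) _
  have hA : u1 ^ (q-p) = (p-1)/(q-1) := Real.rpow_inv_rpow (by positivity) hqp.ne'
  set u2 : ℝ := (ω*(q-1)/(q-p)) ^ (p-1)⁻¹ with hu2def
  have hu2 : 0 < u2 := Real.rpow_pos_of_pos (by positivity) _
  have hB : u2 ^ (p-1) = ω*(q-1)/(q-p) := Real.rpow_inv_rpow (by positivity) hp1.ne'
  set M : ℝ := (q-p)/(q-1) * u1 ^ (p-1) with hMdef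
  -- derivatives
  have hderiv : ∀ u : ℝ, 0 < u → deriv f u = -ω + p * u ^ (p-1) - q * u ^ (q-1) := by
    intro u hu
    have h1 : HasDerivAt (fun v : ℝ => v ^ p) (p * u ^ (p-1)) u :=
      Real.hasDerivAt_rpow_const (Or.inl hu.ne')
    have h2 : HasDerivAt (fun v : ℝ => v ^ q) (q * u ^ (q-1)) u :=
      Real.hasDerivAt_rpow_const (Or.inl hu.ne')
    have h0 : HasDerivAt (fun v : ℝ => -ω * v) (-ω) u := by
      simpa using (hasDerivAt_id u).const_mul (-ω)
    have : HasDerivAt f (-ω + p * u ^ (p-1) - q * u ^ (q-1)) u := by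
      rw [hf]; exact (h0.add h1).sub h2
    exact this.deriv
  have hgderiv : ∀ u : ℝ, 0 < u →
      deriv (fun v : ℝ => v * deriv f v) u = -ω + p^2 * u ^ (p-1) - q^2 * u ^ (q-1) := by
    intro u hu
    have hev : (fun v : ℝ => v * deriv f v)
        =ᶠ[nhds u] (fun v : ℝ => v * (-ω + p * v ^ (p-1) - q * v ^ (q-1))) := by
      filter_upwards [Ioi_mem_nhds hu] with v hv
      rw [hderiv v hv]
    rw [hev.deriv_eq]
    have h1 : HasDerivAt (fun v : ℝ => v ^ (p-1)) ((p-1) * u ^ (p-1-1)) u :=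
      Real.hasDerivAt_rpow_const (Or.inl hu.ne')
    have h2 : HasDerivAt (fun v : ℝ => v ^ (q-1)) ((q-1) * u ^ (q-1-1)) u :=
      Real.hasDerivAt_rpow_const (Or.inl hu.ne')
    have hin : HasDerivAt (fun v : ℝ => -ω + p * v ^ (p-1) - q * v ^ (q-1))
        (p * ((p-1) * u ^ (p-1-1)) - q * ((q-1) * u ^ (q-1-1))) u := by
      have := ((hasDerivAt_const u (-ω)).add (h1.const_mul p)).sub (h2.const_mul q)
      rw [zero_add] at this; exact this
    have hmul : HasDerivAt (fun v : ℝ => v * (-ω + p * v ^ (p-1) - q * v ^ (q-1)))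
        (1 * (-ω + p * u ^ (p-1) - q * u ^ (q-1)) +
          u * (p * ((p-1) * u ^ (p-1-1)) - q * ((q-1) * u ^ (q-1-1)))) u := by
      exact (hasDerivAt_id u).mul hin
    rw [hmul.deriv]
    have ep : u * u ^ (p-1-1) = u ^ (p-1) := by
      have h := Real.rpow_add hu 1 (p-1-1)
      rw [Real.rpow_one] at h
      rw [← h]; congr 1; ring
    have eq' : u * u ^ (q-1-1) = u ^ (q-1) := by
      have h := Real.rpow_add hu 1 (q-1-1)
      rw [Real.rpow_one] at h
      rw [← h]; congr 1; ring
    have hrw : u * (p * ((p-1) * u ^ (p-1-1)) - q * ((q-1) * u ^ (q-1-1)))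
        = p * (p-1) * u ^ (p-1) - q * (q-1) * u ^ (q-1) := by
      rw [← ep, ← eq']; ring
    rw [hrw]
    ring
  -- closed form for ftilde
  have hform : ∀ u : ℝ, 0 < u → ftilde u =
      -(u * u ^ (p-1)) *
        (ω*(p-1)^2 + (q-p)^2 * u ^ (q-1) - ω*(q-1)^2 * u ^ (q-p)) := by
    intro u hu
    simp only [hftilde]
    rw [hgderiv u hu, hderiv u hu]
    simp only [hf]
    rw [hpow_p u hu, hpow_q u hu, hsplit u hu]
    ring
  -- ftilde < 0 iff core inequality
  have hcond : ∀ u : ℝ, 0 < u → (ftilde u < 0 ↔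
      ω*(q-1)^2 * u ^ (q-p) - (q-p)^2 * u ^ (q-1) < ω*(p-1)^2) := by
    intro u hu
    rw [hform u hu]
    have hpos : 0 < u * u ^ (p-1) := by positivity
    rw [neg_mul, neg_lt_zero, mul_pos_iff_of_pos_left hpos]
    constructor <;> intro h <;> linarith
  -- value of f at a point
  have hfval : ∀ u : ℝ, 0 < u → f u = u * (-ω + u ^ (p-1) - u ^ (q-1)) := by
    intro u hu
    simp only [hf]
    rw [hpow_p u hu, hpow_q u hu]; ring
  -- ω < M implies u2 < u1 (and its power consequences)
  have hlt_of_M : ω < M → u2 ^ (q-p) < (p-1)/(q-1) := by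
    intro hM
    have h1 : u2 ^ (p-1) < u1 ^ (p-1) := by
      rw [hB, div_lt_iff₀ hqp]
      rw [hMdef, div_mul_eq_mul_div, lt_div_iff₀ hq1'] at hM
      linarith
    have hu2lt : u2 < u1 := by
      by_contra hle
      push_neg at hle
      exact absurd (Real.rpow_le_rpow hu1.le hle hp1.le) (by linarith)
    have := Real.rpow_lt_rpow hu2.le hu2lt hqp
    rwa [hA] at this
  -- Step (i): ∀-condition implies ω < M
  have hstep1 : (∀ u : ℝ, 0 < u → ftilde u < 0) → ω < M := by
    intro h
    have h2 := (hcond u2 hu2).1 (h u2 hu2)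
    rw [hsplit u2 hu2, hB] at h2
    have key : ω*(q-1)*(p-1) * u2 ^ (q-p) < ω*(p-1)^2 := by
      have e : ω*(q-1)^2 * u2 ^ (q-p) - (q-p)^2 * (ω*(q-1)/(q-p) * u2 ^ (q-p))
          = ω*(q-1)*(p-1) * u2 ^ (q-p) := by field_simp; ring
      rw [e] at h2; exact h2
    have hT2 : u2 ^ (q-p) < (p-1)/(q-1) := by
      rw [lt_div_iff₀ hq1']
      nlinarith [mul_pos hω hp1]
    have hu2lt : u2 < u1 := by
      by_contra hle
      push_neg at hle
      have h3 := Real.rpow_le_rpow hu1.le hle hqp.le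
      rw [hA] at h3; linarith
    have h4 : u2 ^ (p-1) < u1 ^ (p-1) := Real.rpow_lt_rpow hu2.le hu2lt hp1
    rw [hB, div_lt_iff₀ hqp] at h4
    rw [hMdef, div_mul_eq_mul_div, lt_div_iff₀ hq1']
    linarith
  -- Step (ii): ω < M implies 0 < f u1
  have hstep2 : ω < M → 0 < f u1 := by
    intro hM
    rw [hfval u1 hu1, hsplit u1 hu1, hA]
    have e : -ω + u1 ^ (p-1) - u1 ^ (p-1) * ((p-1)/(q-1)) = M - ω := by
      rw [hMdef]; field_simp; ring
    rw [e]
    exact mul_pos hu1 (by linarith)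
  -- Step (iii): existence implies ω < M
  have hstep3 : (∃ u : ℝ, 0 < u ∧ 0 < f u) → ω < M := by
    rintro ⟨u0, hu0, hfu0⟩
    rw [hfval u0 hu0, mul_pos_iff_of_pos_left hu0] at hfu0
    set θ : ℝ := (p-1)/(q-1) with hθdef
    have hθ0 : 0 < θ := by positivity
    have hθ1 : θ < 1 := by rw [hθdef, div_lt_one hq1']; linarith
    have ht := stmt10_tangent hθ0 hθ1 (Real.rpow_nonneg hu0.le (q-1))
      (Real.rpow_pos_of_pos hu1 (q-1))
    have eθ : (q-1) * θ = p - 1 := by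
      rw [hθdef]; field_simp
    have eθ' : (q-1) * (θ - 1) = -(q-p) := by
      rw [mul_sub, eθ]; ring
    have e1 : (u0 ^ (q-1)) ^ θ = u0 ^ (p-1) := by
      rw [← Real.rpow_mul hu0.le, eθ]
    have e2 : (u1 ^ (q-1)) ^ θ = u1 ^ (p-1) := by
      rw [← Real.rpow_mul hu1.le, eθ]
    have e3 : (u1 ^ (q-1)) ^ (θ - 1) = (q-1)/(p-1) := by
      rw [← Real.rpow_mul hu1.le, eθ', Real.rpow_neg hu1.le, hA, inv_div]
    rw [e1, e2, e3] at ht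
    have hθc : θ * ((q-1)/(p-1)) = 1 := by
      rw [hθdef]; field_simp
    have hM' : (1 - θ) * u1 ^ (p-1) = M := by
      rw [hθdef, hMdef]; field_simp; ring
    rw [hθc, hM'] at ht
    rw [one_mul] at ht
    linarith
  -- Step (iv): ω < M implies the ∀-condition
  have hstep4 : ω < M → ∀ u : ℝ, 0 < u → ftilde u < 0 := by
    intro hM u hu
    rw [hcond u hu]
    have hT2 := hlt_of_M hM
    set θ : ℝ := (q-p)/(q-1) with hθdef
    have hθ0 : 0 < θ := by positivity
    have hθ1 : θ < 1 := by rw [hθdef, div_lt_one hq1']; linarith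
    have ht := stmt10_tangent hθ0 hθ1 (Real.rpow_nonneg hu.le (q-1))
      (Real.rpow_pos_of_pos hu2 (q-1))
    have eθ : (q-1) * θ = q - p := by
      rw [hθdef]; field_simp
    have eθ' : (q-1) * (θ - 1) = -(p-1) := by
      rw [mul_sub, eθ]; ring
    have e1 : (u ^ (q-1)) ^ θ = u ^ (q-p) := by
      rw [← Real.rpow_mul hu.le, eθ]
    have e2 : (u2 ^ (q-1)) ^ θ = u2 ^ (q-p) := by
      rw [← Real.rpow_mul hu2.le, eθ]
    have e3 : (u2 ^ (q-1)) ^ (θ - 1) = (q-p)/(ω*(q-1)) := by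
      rw [← Real.rpow_mul hu2.le, eθ', Real.rpow_neg hu2.le, hB, inv_div]
    rw [e1, e2, e3] at ht
    have ht2 : ω*(q-1)^2 * u ^ (q-p)
        ≤ (q-p)^2 * u ^ (q-1) + ω*(q-1)*(p-1) * u2 ^ (q-p) := by
      have hmul := mul_le_mul_of_nonneg_left ht (show (0:ℝ) ≤ ω*(q-1)^2 by positivity)
      have e : ω*(q-1)^2 * (θ * ((q-p)/(ω*(q-1))) * u ^ (q-1) + (1-θ) * u2 ^ (q-p))
          = (q-p)^2 * u ^ (q-1) + ω*(q-1)*(p-1) * u2 ^ (q-p) := by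
        rw [hθdef]; field_simp; ring
      rw [e] at hmul; exact hmul
    have hfin : ω*(q-1)*(p-1) * u2 ^ (q-p) < ω*(p-1)^2 := by
      have h5 := mul_lt_mul_of_pos_left hT2 (show (0:ℝ) < ω*(q-1)*(p-1) by positivity)
      have e : ω*(q-1)*(p-1) * ((p-1)/(q-1)) = ω*(p-1)^2 := by field_simp
      rw [e] at h5; exact h5
    linarith
  exact ⟨fun h => ⟨u1, hu1, hstep2 (hstep1 h)⟩,
    fun h u hu => hstep4 (hstep3 h) u hu⟩
end

section
/- Let ω > 0 and q > p > 1 be real numbers, and let F(u) = -(ω/2) u^2 + u^{p+1}/(p+1) - u^{q+1}/(q+1) for u > 0. Then there exists u > 0 with F(u) > 0 if and only if ω < ω_{p,q}, where ω_{p,q} = (2(q-p)/((p+1)(q-1))) · ((p-1)(q+1)/((p+1)(q-1)))^{(p-1)/(q-p)}. -/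
/-- Core inequality: for `0 < a < b` and `t > 0`, `b * t^a ≤ a * t^b + (b - a)`. -/
lemma key_ineq_s11 (a b t : ℝ) (ha : 0 < a) (hab : a < b) (ht : 0 < t) :
    b * t ^ a ≤ a * t ^ b + (b - a) := by
  have hb : 0 < b := ha.trans hab
  have h1 : t ^ a = (t ^ b) ^ (a / b) := by
    rw [← Real.rpow_mul ht.le]
    congr 1
    field_simp
  have h2 : (t ^ b) ^ (a / b) * (1 : ℝ) ^ (1 - a / b) ≤ (a / b) * t ^ b + (1 - a / b) * 1 :=
    Real.geom_mean_le_arith_mean2_weighted (by positivity)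
      (sub_nonneg.mpr ((div_le_one hb).mpr hab.le))
      (Real.rpow_nonneg ht.le b) zero_le_one (by ring)
  rw [Real.one_rpow, mul_one, mul_one] at h2
  rw [h1]
  have := mul_le_mul_of_nonneg_left h2 hb.le
  calc b * (t ^ b) ^ (a / b) ≤ b * ((a / b) * t ^ b + (1 - a / b)) := this
    _ = a * t ^ b + (b - a) := by field_simp

/-- There exists `u > 0` with `F u > 0` iff `ω < ω_{p,q}`, where
`ω_{p,q} = (2(q-p)/((p+1)(q-1))) ((p-1)(q+1)/((p+1)(q-1)))^{(p-1)/(q-p)}`. -/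
theorem stmt_11 (ω p q : ℝ) (hω : 0 < ω) (hp : 1 < p) (hpq : p < q)
    (F : ℝ → ℝ)
    (hF : F = fun u : ℝ =>
      -(ω / 2) * u ^ (2 : ℝ) + u ^ (p + 1) / (p + 1) - u ^ (q + 1) / (q + 1)) :
    (∃ u : ℝ, 0 < u ∧ 0 < F u) ↔
      ω < 2 * (q - p) / ((p + 1) * (q - 1)) *
        ((p - 1) * (q + 1) / ((p + 1) * (q - 1))) ^ ((p - 1) / (q - p)) := by
  have hp1 : (0:ℝ) < p + 1 := by linarith
  have hq1 : (0:ℝ) < q - 1 := by linarith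
  have hq1' : (0:ℝ) < q + 1 := by linarith
  have hqp : (0:ℝ) < q - p := by linarith
  have hp1' : (0:ℝ) < p - 1 := by linarith
  set A : ℝ := (p - 1) * (q + 1) / ((p + 1) * (q - 1)) with hA_def
  have hA : 0 < A := by positivity
  set K : ℝ := A ^ ((p - 1) / (q - p)) with hK_def
  have hK : 0 < K := Real.rpow_pos_of_pos hA _
  set ωc : ℝ := 2 * (q - p) / ((p + 1) * (q - 1)) * K with hωc_def
  set ust : ℝ := A ^ ((1:ℝ) / (q - p)) with hust_def
  have hust : 0 < ust := Real.rpow_pos_of_pos hA _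
  have h1 : ust ^ (p - 1) = K := by
    rw [hust_def, ← Real.rpow_mul hA.le, hK_def]
    congr 1
    field_simp
  have h2 : ust ^ (q - 1) = K * A := by
    rw [hust_def, ← Real.rpow_mul hA.le, hK_def]
    have : (1 / (q - p)) * (q - 1) = (p - 1) / (q - p) + 1 := by
      field_simp
      ring
    rw [this, Real.rpow_add hA, Real.rpow_one]
  -- rewrite F at positive points
  have hFu : ∀ u : ℝ, 0 < u →
      F u = u ^ (2:ℝ) * (u ^ (p - 1) / (p + 1) - u ^ (q - 1) / (q + 1) - ω / 2) := by
    intro u hu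
    have e1 : u ^ (p + 1) = u ^ (2:ℝ) * u ^ (p - 1) := by
      rw [← Real.rpow_add hu]; congr 1; ring
    have e2 : u ^ (q + 1) = u ^ (2:ℝ) * u ^ (q - 1) := by
      rw [← Real.rpow_add hu]; congr 1; ring
    rw [hF]
    simp only [e1, e2]
    ring
  -- the maximum inequality
  have hmax : ∀ u : ℝ, 0 < u →
      u ^ (p - 1) / (p + 1) - u ^ (q - 1) / (q + 1) ≤ ωc / 2 := by
    intro u hu
    set t : ℝ := u / ust with ht_def
    have ht : 0 < t := div_pos hu hust
    have hu_eq : u = ust * t := by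
      rw [ht_def]; field_simp
    have e1 : u ^ (p - 1) = K * t ^ (p - 1) := by
      rw [hu_eq, Real.mul_rpow hust.le ht.le, h1]
    have e2 : u ^ (q - 1) = K * A * t ^ (q - 1) := by
      rw [hu_eq, Real.mul_rpow hust.le ht.le, h2]
    have hkey := key_ineq_s11 (p - 1) (q - 1) t hp1' (by linarith) ht
    have lhs_eq : u ^ (p - 1) / (p + 1) - u ^ (q - 1) / (q + 1)
        = K / ((p + 1) * (q - 1)) * ((q - 1) * t ^ (p - 1) - (p - 1) * t ^ (q - 1)) := by
      rw [e1, e2, hA_def]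
      field_simp
    have rhs_eq : ωc / 2 = K / ((p + 1) * (q - 1)) * (q - p) := by
      rw [hωc_def]; field_simp
    rw [lhs_eq, rhs_eq]
    apply mul_le_mul_of_nonneg_left _ (by positivity)
    linarith
  constructor
  · rintro ⟨u, hu, hFpos⟩
    rw [hFu u hu] at hFpos
    have h2u : 0 < u ^ (2:ℝ) := Real.rpow_pos_of_pos hu 2
    have : 0 < u ^ (p - 1) / (p + 1) - u ^ (q - 1) / (q + 1) - ω / 2 := by
      by_contra h
      push_neg at h
      nlinarith [mul_nonneg h2u.le (neg_nonneg.mpr h)]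
    have := hmax u hu
    linarith
  · intro hlt
    refine ⟨ust, hust, ?_⟩
    rw [hFu ust hust]
    have heq : ust ^ (p - 1) / (p + 1) - ust ^ (q - 1) / (q + 1) = ωc / 2 := by
      rw [h1, h2, hωc_def, hA_def]
      field_simp
      ring
    rw [heq]
    have h2u : 0 < ust ^ (2:ℝ) := Real.rpow_pos_of_pos hust 2
    have : 0 < ωc / 2 - ω / 2 := by linarith
    positivity
end

section
/- Let ω > 0 and q > p > 1 be real numbers, let f(u) = -ω u + u^p - u^q for u > 0, let F(u) = -(ω/2) u^2 + u^{p+1}/(p+1) - u^{q+1}/(q+1), and let F̃(u) = (u f(u))' F(u) - u f(u)^2. Then F̃(u) < 0 for every u > 0 if and only if ω < ω_{p,q}, where ω_{p,q} = (2(q-p)/((p+1)(q-1))) · ((p-1)(q+1)/((p+1)(q-1)))^{(p-1)/(q-p)}. -/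
open Real

lemma young_aux' {x r : ℝ} (hx : 0 ≤ x) (hr : 1 < r) : x - x ^ r / r ≤ 1 - 1 / r := by
  have hr0 : (0:ℝ) < r := lt_trans one_pos hr
  have hr1 : (0:ℝ) < r - 1 := by linarith
  have hconj : r.HolderConjugate (r / (r - 1)) := Real.holderConjugate_iff.mpr ⟨hr, by field_simp; ring⟩
  have h := Real.young_inequality_of_nonneg hx zero_le_one hconj
  rw [Real.one_rpow, mul_one] at h
  have e : (1:ℝ) / (r / (r - 1)) = 1 - 1 / r := by field_simp
  rw [e] at h
  linarith

lemma max_bound' {a b α β : ℝ} (ha : 0 < a) (hb : 0 < b) (hα : 0 < α) (hαβ : α < β) :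
    ∀ u : ℝ, 0 < u → a * u ^ α - b * u ^ β ≤
      a * (β - α) / β * (a * α / (b * β)) ^ (α / (β - α)) := by
  have hβ : 0 < β := lt_trans hα hαβ
  have hβα : 0 < β - α := by linarith
  set c : ℝ := a * α / (b * β) with hc_def
  have hc : 0 < c := by positivity
  set w : ℝ := c ^ (β - α)⁻¹ with hw_def
  have hw : 0 < w := rpow_pos_of_pos hc _
  have hwβα : w ^ (β - α) = c := Real.rpow_inv_rpow hc.le hβα.ne'
  have hwα : w ^ α = c ^ (α / (β - α)) := by
    rw [hw_def, ← Real.rpow_mul hc.le]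
    congr 1
    field_simp
  have hwβ : w ^ β = w ^ α * c := by
    rw [← hwβα, ← Real.rpow_add hw]; congr 1; ring
  have hbc : b * c = a * α / β := by
    rw [hc_def]; field_simp
  intro u hu
  set t : ℝ := u / w with ht_def
  have ht : 0 < t := by positivity
  have hu' : u = w * t := by rw [ht_def]; field_simp
  set r : ℝ := β / α with hr_def
  have hr : 1 < r := (one_lt_div hα).mpr hαβ
  have htβ : t ^ β = (t ^ α) ^ r := by
    rw [← Real.rpow_mul ht.le]
    congr 1
    rw [hr_def]; field_simp
  have h1r : 1 / r = α / β := one_div_div β α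
  have young := young_aux' (rpow_nonneg ht.le α) hr
  have e1 : α / β * t ^ β = (t ^ α) ^ r / r := by
    rw [htβ, ← h1r]; ring
  have e2 : (β - α) / β = 1 - 1 / r := by
    rw [h1r]; field_simp
  have hbound : t ^ α - α / β * t ^ β ≤ (β - α) / β := by
    rw [e1, e2]; exact young
  have expand : a * u ^ α - b * u ^ β = (a * w ^ α) * (t ^ α - α / β * t ^ β) := by
    rw [hu', Real.mul_rpow hw.le ht.le, Real.mul_rpow hw.le ht.le, hwβ]
    linear_combination (-(w ^ α * t ^ β)) * hbc
  rw [expand]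
  calc (a * w ^ α) * (t ^ α - α / β * t ^ β)
      ≤ (a * w ^ α) * ((β - α) / β) :=
        mul_le_mul_of_nonneg_left hbound (by positivity)
    _ = a * (β - α) / β * (a * α / (b * β)) ^ (α / (β - α)) := by
        rw [hwα, hc_def]; ring

lemma key_iff' {a b α β K : ℝ} (ha : 0 < a) (hb : 0 < b) (hα : 0 < α) (hαβ : α < β) :
    (∀ u : ℝ, 0 < u → a * u ^ α - b * u ^ β < K) ↔
      a * (β - α) / β * (a * α / (b * β)) ^ (α / (β - α)) < K := by
  have hβ : 0 < β := lt_trans hα hαβ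
  have hβα : 0 < β - α := by linarith
  constructor
  · intro h
    set c : ℝ := a * α / (b * β) with hc_def
    have hc : 0 < c := by positivity
    set w : ℝ := c ^ (β - α)⁻¹ with hw_def
    have hw : 0 < w := rpow_pos_of_pos hc _
    have hwβα : w ^ (β - α) = c := Real.rpow_inv_rpow hc.le hβα.ne'
    have hwα : w ^ α = c ^ (α / (β - α)) := by
      rw [hw_def, ← Real.rpow_mul hc.le]
      congr 1
      field_simp
    have hwβ : w ^ β = w ^ α * c := by
      rw [← hwβα, ← Real.rpow_add hw]; congr 1; ring
    have hbc : b * c = a * α / β := by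
      rw [hc_def]; field_simp
    have hval := h w hw
    have heq : a * w ^ α - b * w ^ β = a * (β - α) / β * c ^ (α / (β - α)) := by
      have hβinv : β * β⁻¹ = 1 := mul_inv_cancel₀ hβ.ne'
      rw [hwβ, ← hwα]
      linear_combination (-(w ^ α)) * hbc - (a * w ^ α) * hβinv
    rw [heq] at hval
    exact hval
  · intro h u hu
    exact lt_of_le_of_lt (max_bound' ha hb hα hαβ u hu) h

lemma deriv_aux' (ω p q u : ℝ) (hu : 0 < u) :
    deriv (fun v : ℝ => v * (-ω * v + v ^ p - v ^ q)) u
      = -(2 * ω) * u + (p + 1) * u ^ p - (q + 1) * u ^ q := by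
  have h1 : HasDerivAt (fun v : ℝ => v ^ p) (p * u ^ (p - 1)) u :=
    Real.hasDerivAt_rpow_const (Or.inl hu.ne')
  have h2 : HasDerivAt (fun v : ℝ => v ^ q) (q * u ^ (q - 1)) u :=
    Real.hasDerivAt_rpow_const (Or.inl hu.ne')
  have hid : HasDerivAt (fun v : ℝ => v) 1 u := hasDerivAt_id u
  have hfd : HasDerivAt (fun v : ℝ => -ω * v + v ^ p - v ^ q)
      (-ω * 1 + p * u ^ (p - 1) - q * u ^ (q - 1)) u :=
    ((hid.const_mul (-ω)).add h1).sub h2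
  have hmul : deriv (fun v : ℝ => v * (-ω * v + v ^ p - v ^ q)) u = _ := (hid.mul hfd).deriv
  rw [hmul, Real.rpow_sub_one hu.ne' p, Real.rpow_sub_one hu.ne' q]
  field_simp
  ring

lemma ident_aux' (ω p q u : ℝ) (hu : 0 < u) (hp1 : p + 1 ≠ 0) (hq1 : q + 1 ≠ 0) :
    (-(2 * ω) * u + (p + 1) * u ^ p - (q + 1) * u ^ q) *
        (-(ω / 2) * u ^ (2:ℝ) + u ^ (p + 1) / (p + 1) - u ^ (q + 1) / (q + 1))
      - u * (-ω * u + u ^ p - u ^ q) ^ 2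
    = u ^ (p + 2) *
        ((ω * (q - 1) ^ 2 / (2 * (q + 1)) * u ^ (q - p)
          - (q - p) ^ 2 / ((p + 1) * (q + 1)) * u ^ (q - 1))
          - ω * (p - 1) ^ 2 / (2 * (p + 1))) := by
  have hu0 : u ≠ 0 := hu.ne'
  have h2 : u ^ (2:ℝ) = u * u := by
    rw [show (2:ℝ) = 1 + 1 by norm_num, Real.rpow_add hu, Real.rpow_one]
  have hp1' : u ^ (p + 1) = u ^ p * u := Real.rpow_add_one hu0 p
  have hq1' : u ^ (q + 1) = u ^ q * u := Real.rpow_add_one hu0 q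
  have hp2 : u ^ (p + 2) = u ^ p * u * u := by
    rw [show p + 2 = (p + 1) + 1 by ring, Real.rpow_add_one hu0, hp1']
  have hqp : u ^ (q - p) = u ^ q / u ^ p := Real.rpow_sub hu q p
  have hq1'' : u ^ (q - 1) = u ^ q / u := Real.rpow_sub_one hu0 q
  have hap : u ^ p ≠ 0 := (Real.rpow_pos_of_pos hu p).ne'
  have haq : u ^ q ≠ 0 := (Real.rpow_pos_of_pos hu q).ne'
  rw [h2, hp1', hq1', hp2, hqp, hq1'']
  field_simp
  ring

/-- `F̃ u < 0` for every `u > 0` iff `ω < ω_{p,q}`, where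
`ω_{p,q} = (2(q-p)/((p+1)(q-1))) ((p-1)(q+1)/((p+1)(q-1)))^{(p-1)/(q-p)}`. -/
theorem stmt_12 (ω p q : ℝ) (hω : 0 < ω) (hp : 1 < p) (hpq : p < q)
    (f : ℝ → ℝ) (hf : f = fun u : ℝ => -ω * u + u ^ p - u ^ q)
    (F : ℝ → ℝ)
    (hF : F = fun u : ℝ =>
      -(ω / 2) * u ^ (2 : ℝ) + u ^ (p + 1) / (p + 1) - u ^ (q + 1) / (q + 1))
    (Ftilde : ℝ → ℝ)
    (hFtilde : Ftilde = fun u : ℝ =>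
      deriv (fun v : ℝ => v * f v) u * F u - u * (f u) ^ 2) :
    (∀ u : ℝ, 0 < u → Ftilde u < 0) ↔
      ω < 2 * (q - p) / ((p + 1) * (q - 1)) *
        ((p - 1) * (q + 1) / ((p + 1) * (q - 1))) ^ ((p - 1) / (q - p)) := by
  have hpm1 : (0:ℝ) < p - 1 := by linarith
  have hqm1 : (0:ℝ) < q - 1 := by linarith
  have hqmp : (0:ℝ) < q - p := by linarith
  have hpp1 : (0:ℝ) < p + 1 := by linarith
  have hqp1 : (0:ℝ) < q + 1 := by linarith
  have ha : 0 < ω * (q - 1) ^ 2 / (2 * (q + 1)) := by positivity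
  have hb : 0 < (q - p) ^ 2 / ((p + 1) * (q + 1)) := by positivity
  have hαβ : q - p < q - 1 := by linarith
  simp only [hFtilde, hf, hF]
  have pointwise : ∀ u : ℝ, 0 < u →
      ((deriv (fun v : ℝ => v * (-ω * v + v ^ p - v ^ q)) u *
          (-(ω / 2) * u ^ (2:ℝ) + u ^ (p + 1) / (p + 1) - u ^ (q + 1) / (q + 1)) -
          u * (-ω * u + u ^ p - u ^ q) ^ 2 < 0) ↔
        (ω * (q - 1) ^ 2 / (2 * (q + 1)) * u ^ (q - p)
          - (q - p) ^ 2 / ((p + 1) * (q + 1)) * u ^ (q - 1)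
          < ω * (p - 1) ^ 2 / (2 * (p + 1)))) := by
    intro u hu
    rw [deriv_aux' ω p q u hu, ident_aux' ω p q u hu hpp1.ne' hqp1.ne']
    have hpow : 0 < u ^ (p + 2) := Real.rpow_pos_of_pos hu _
    constructor
    · intro h
      by_contra hcon
      push_neg at hcon
      have h0 : 0 ≤ ω * (q - 1) ^ 2 / (2 * (q + 1)) * u ^ (q - p)
          - (q - p) ^ 2 / ((p + 1) * (q + 1)) * u ^ (q - 1)
          - ω * (p - 1) ^ 2 / (2 * (p + 1)) := by linarith
      nlinarith [mul_nonneg hpow.le h0]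
    · intro h
      have hX : ω * (q - 1) ^ 2 / (2 * (q + 1)) * u ^ (q - p)
          - (q - p) ^ 2 / ((p + 1) * (q + 1)) * u ^ (q - 1)
          - ω * (p - 1) ^ 2 / (2 * (p + 1)) < 0 := by linarith
      exact mul_neg_of_pos_of_neg hpow hX
  rw [show (∀ u : ℝ, 0 < u →
        deriv (fun v : ℝ => v * (-ω * v + v ^ p - v ^ q)) u *
          (-(ω / 2) * u ^ (2:ℝ) + u ^ (p + 1) / (p + 1) - u ^ (q + 1) / (q + 1)) -
          u * (-ω * u + u ^ p - u ^ q) ^ 2 < 0) ↔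
      (∀ u : ℝ, 0 < u →
        ω * (q - 1) ^ 2 / (2 * (q + 1)) * u ^ (q - p)
          - (q - p) ^ 2 / ((p + 1) * (q + 1)) * u ^ (q - 1)
          < ω * (p - 1) ^ 2 / (2 * (p + 1)))
    from forall_congr' fun u => imp_congr_right (pointwise u)]
  rw [key_iff' ha hb hqmp hαβ]
  rw [show q - 1 - (q - p) = p - 1 from by ring]
  have eA : ω * (q - 1) ^ 2 / (2 * (q + 1)) * (q - p) /
      ((q - p) ^ 2 / ((p + 1) * (q + 1)) * (q - 1))
      = ω * ((p + 1) * (q - 1) / (2 * (q - p))) := by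
    field_simp
  have eB : ω * (q - 1) ^ 2 / (2 * (q + 1)) * (p - 1) / (q - 1)
      = ω * (p - 1) * (q - 1) / (2 * (q + 1)) := by
    field_simp
  rw [eA, eB]
  have hc : 0 < ω * (p - 1) * (q - 1) / (2 * (q + 1)) := by positivity
  rw [← lt_div_iff₀' hc]
  have eC : ω * (p - 1) ^ 2 / (2 * (p + 1)) / (ω * (p - 1) * (q - 1) / (2 * (q + 1)))
      = (p - 1) * (q + 1) / ((p + 1) * (q - 1)) := by
    field_simp
  rw [eC]
  have hγ : 0 < (q - p) / (p - 1) := by positivity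
  have hR : (0:ℝ) ≤ (p - 1) * (q + 1) / ((p + 1) * (q - 1)) := by positivity
  have hωs : (0:ℝ) ≤ ω * ((p + 1) * (q - 1) / (2 * (q - p))) := by positivity
  rw [← Real.lt_rpow_inv_iff_of_pos hωs hR hγ]
  rw [show ((q - p) / (p - 1))⁻¹ = (p - 1) / (q - p) from inv_div _ _]
  have hs : 0 < (p + 1) * (q - 1) / (2 * (q - p)) := by positivity
  rw [mul_comm ω ((p + 1) * (q - 1) / (2 * (q - p))), ← lt_div_iff₀' hs]
  have eD : ((p - 1) * (q + 1) / ((p + 1) * (q - 1))) ^ ((p - 1) / (q - p)) /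
      ((p + 1) * (q - 1) / (2 * (q - p)))
      = 2 * (q - p) / ((p + 1) * (q - 1)) *
        ((p - 1) * (q + 1) / ((p + 1) * (q - 1))) ^ ((p - 1) / (q - p)) := by
    field_simp
  rw [eD]
end

section
/- Let ω > 0 and q > p > 1 be real numbers, and let f(u) = -ω u + u^p - u^q for u > 0. Then there exists u > 0 with f(u) > 0 if and only if ω < η_{p,q}, where η_{p,q} = ((q-p)/(q-1)) · ((p-1)/(q-1))^{(p-1)/(q-p)}. -/
open Real

/-- AM-GM key inequality: `s^a (1-s) ≤ s₀^a (1-s₀)` where `s₀ = a/(a+1)`. -/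
lemma stmt13_key (a : ℝ) (ha : 0 < a) (s : ℝ) (hs : 0 < s) :
    s ^ a * (1 - s) ≤ (a / (a + 1)) ^ a * (1 - a / (a + 1)) := by
  set s₀ : ℝ := a / (a + 1) with hs₀def
  have ha1 : 0 < a + 1 := by linarith
  have hs₀ : 0 < s₀ := div_pos ha ha1
  have hs₀1 : s₀ < 1 := (div_lt_one ha1).2 (by linarith)
  have hrhs : 0 < s₀ ^ a * (1 - s₀) :=
    mul_pos (rpow_pos_of_pos hs₀ a) (by linarith)
  rcases le_or_gt 1 s with h1 | h1
  · have : s ^ a * (1 - s) ≤ 0 :=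
      mul_nonpos_of_nonneg_of_nonpos (rpow_pos_of_pos hs a).le (by linarith)
    linarith
  · have hx₁ : (0:ℝ) ≤ s / s₀ := le_of_lt (div_pos hs hs₀)
    have hx₂ : (0:ℝ) ≤ (1 - s) / (1 - s₀) := le_of_lt (div_pos (by linarith) (by linarith))
    have hw : s₀ + (1 - s₀) = 1 := by ring
    have hgm := Real.geom_mean_le_arith_mean2_weighted hs₀.le (by linarith) hx₁ hx₂ hw
    have hsum : s₀ * (s / s₀) + (1 - s₀) * ((1 - s) / (1 - s₀)) = 1 := by
      rw [mul_comm s₀, div_mul_cancel₀ _ (ne_of_gt hs₀), mul_comm (1 - s₀),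
        div_mul_cancel₀ _ (by linarith : (1:ℝ) - s₀ ≠ 0)]
      ring
    rw [hsum] at hgm
    -- raise to power (a+1)
    have hpow := Real.rpow_le_rpow (by positivity) hgm (le_of_lt ha1)
    rw [Real.one_rpow, Real.mul_rpow (Real.rpow_nonneg hx₁ _) (Real.rpow_nonneg hx₂ _),
      ← Real.rpow_mul hx₁, ← Real.rpow_mul hx₂] at hpow
    have e1 : s₀ * (a + 1) = a := by
      rw [hs₀def]; field_simp
    have e2 : (1 - s₀) * (a + 1) = 1 := by
      rw [hs₀def]; field_simp; ring
    rw [e1, e2, Real.rpow_one, Real.div_rpow hs.le hs₀.le] at hpow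
    have h₁ : (0:ℝ) < s₀ ^ a := rpow_pos_of_pos hs₀ a
    rw [div_mul_div_comm, div_le_one (by positivity)] at hpow
    linarith [hpow]

/-- For `f u = -ω u + u^p - u^q`, there exists `u > 0` with `f u > 0`
iff `ω < η_{p,q} = ((q-p)/(q-1)) ((p-1)/(q-1))^{(p-1)/(q-p)}`. -/
theorem stmt_13 (ω p q : ℝ) (hω : 0 < ω) (hp : 1 < p) (hpq : p < q)
    (f : ℝ → ℝ) (hf : f = fun u : ℝ => -ω * u + u ^ p - u ^ q) :
    (∃ u : ℝ, 0 < u ∧ 0 < f u) ↔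
      ω < (q - p) / (q - 1) * ((p - 1) / (q - 1)) ^ ((p - 1) / (q - p)) := by
  set a : ℝ := (p - 1) / (q - p) with hadef
  have hqp : 0 < q - p := by linarith
  have hq1 : 0 < q - 1 := by linarith
  have ha : 0 < a := div_pos (by linarith) hqp
  have hs₀eq : a / (a + 1) = (p - 1) / (q - 1) := by
    rw [hadef]
    rw [div_add' _ _ _ (ne_of_gt hqp)]
    rw [div_div_div_cancel_right₀]
    · congr 1; ring
    · exact ne_of_gt hqp
  have hetaeq : (a / (a + 1)) ^ a * (1 - a / (a + 1))
      = (q - p) / (q - 1) * ((p - 1) / (q - 1)) ^ a := by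
    rw [hs₀eq]
    have : 1 - (p - 1) / (q - 1) = (q - p) / (q - 1) := by
      field_simp; ring
    rw [this, mul_comm]
  -- g u := u^(p-1) - u^(q-1); f u = u * (-ω + g u)
  have hfu : ∀ u : ℝ, 0 < u → f u = u * (-ω + (u ^ (p-1) - u ^ (q-1))) := by
    intro u hu
    have h1 : u ^ p = u ^ (p-1) * u := by
      rw [← Real.rpow_add_one hu.ne' (p-1)]
      norm_num
    have h2 : u ^ q = u ^ (q-1) * u := by
      rw [← Real.rpow_add_one hu.ne' (q-1)]
      norm_num
    rw [hf]; simp only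
    rw [h1, h2]; ring
  have hg : ∀ u : ℝ, 0 < u → u ^ (p-1) - u ^ (q-1) = (u ^ (q-p)) ^ a * (1 - u ^ (q-p)) := by
    intro u hu
    rw [← Real.rpow_mul hu.le]
    have e : (q - p) * a = p - 1 := by
      rw [hadef]; field_simp
    rw [e, mul_sub, mul_one, ← Real.rpow_add hu]
    norm_num
  constructor
  · rintro ⟨u, hu, hfu'⟩
    rw [hfu u hu] at hfu'
    have h3 : ω < u ^ (p-1) - u ^ (q-1) := by
      have := (mul_pos_iff.1 hfu')
      rcases this with ⟨_, h⟩ | ⟨h, _⟩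
      · linarith
      · linarith
    have h4 := stmt13_key a ha (u ^ (q-p)) (rpow_pos_of_pos hu _)
    rw [← hg u hu] at h4
    rw [hetaeq] at h4
    linarith
  · intro hω'
    set s₀ : ℝ := (p - 1) / (q - 1) with hs₀def
    have hs₀pos : 0 < s₀ := div_pos (by linarith) hq1
    refine ⟨s₀ ^ ((q - p)⁻¹), rpow_pos_of_pos hs₀pos _, ?_⟩
    set u : ℝ := s₀ ^ ((q - p)⁻¹) with hudef
    have hu : 0 < u := rpow_pos_of_pos hs₀pos _
    have hus : u ^ (q - p) = s₀ := by
      rw [hudef, ← Real.rpow_mul hs₀pos.le, inv_mul_cancel₀ (ne_of_gt hqp), Real.rpow_one]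
    rw [hfu u hu]
    have : u ^ (p-1) - u ^ (q-1) = (q - p) / (q - 1) * s₀ ^ a := by
      rw [hg u hu, hus]
      have : 1 - s₀ = (q - p) / (q - 1) := by
        rw [hs₀def]; field_simp; ring
      rw [this, mul_comm]
    rw [this]
    have : 0 < -ω + (q - p) / (q - 1) * s₀ ^ a := by linarith
    positivity
end

section
/- Let ω > 0 and q > p > 1 be real numbers, let f(u) = -ω u + u^p - u^q for u > 0, and define f̃(u) = (u f'(u))' f(u) - u f'(u)^2. Then f̃(u) < 0 for every u > 0 if and only if ω < η_{p,q}, where η_{p,q} = ((q-p)/(q-1)) · ((p-1)/(q-1))^{(p-1)/(q-p)}. -/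
open Real Filter

/-- Derivative computation: for `f u = -ω u + u^p - u^q` and `u > 0`,
`f̃ u = u * (ω ((q-1)² u^{q-1} - (p-1)² u^{p-1}) - (q-p)² u^{p-1} u^{q-1})`. -/
private lemma aux_deriv (ω p q : ℝ) (f : ℝ → ℝ)
    (hf : f = fun u : ℝ => -ω * u + u ^ p - u ^ q)
    {u : ℝ} (hu : 0 < u) :
    deriv (fun v : ℝ => v * deriv f v) u * f u - u * (deriv f u) ^ 2 =
      u * (ω * ((q-1)^2 * u^(q-1) - (p-1)^2 * u^(p-1))
            - (q-p)^2 * (u^(p-1) * u^(q-1))) := by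
  have hd : ∀ v : ℝ, 0 < v → HasDerivAt f (-ω + p * v ^ (p-1) - q * v ^ (q-1)) v := by
    intro v hv
    have h1 : HasDerivAt (fun x : ℝ => x ^ p) (p * v ^ (p-1)) v :=
      Real.hasDerivAt_rpow_const (Or.inl hv.ne')
    have h2 : HasDerivAt (fun x : ℝ => x ^ q) (q * v ^ (q-1)) v :=
      Real.hasDerivAt_rpow_const (Or.inl hv.ne')
    have h0 : HasDerivAt (fun x : ℝ => -ω * x) (-ω) v := by
      simpa using (hasDerivAt_id v).const_mul (-ω)
    rw [hf]
    exact (h0.add h1).sub h2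
  have hdf : ∀ v : ℝ, 0 < v → deriv f v = -ω + p * v ^ (p-1) - q * v ^ (q-1) :=
    fun v hv => (hd v hv).deriv
  have hvp : ∀ v : ℝ, 0 < v → v ^ p = v ^ (p-1) * v := by
    intro v hv
    rw [← Real.rpow_add_one hv.ne' (p-1)]
    congr 1; ring
  have hvq : ∀ v : ℝ, 0 < v → v ^ q = v ^ (q-1) * v := by
    intro v hv
    rw [← Real.rpow_add_one hv.ne' (q-1)]
    congr 1; ring
  have hg : (fun v : ℝ => v * deriv f v)
      =ᶠ[nhds u] fun v : ℝ => -ω * v + p * v ^ p - q * v ^ q := by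
    filter_upwards [Ioi_mem_nhds hu] with v hv
    rw [hdf v hv, hvp v hv, hvq v hv]
    ring
  have hg2 : HasDerivAt (fun v : ℝ => -ω * v + p * v ^ p - q * v ^ q)
      (-ω + p * (p * u ^ (p-1)) - q * (q * u ^ (q-1))) u := by
    have h1 := (Real.hasDerivAt_rpow_const (x := u) (p := p) (Or.inl hu.ne')).const_mul p
    have h2 := (Real.hasDerivAt_rpow_const (x := u) (p := q) (Or.inl hu.ne')).const_mul q
    have h0 : HasDerivAt (fun x : ℝ => -ω * x) (-ω) u := by
      simpa using (hasDerivAt_id u).const_mul (-ω)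
    exact (h0.add h1).sub h2
  have hD : deriv (fun v : ℝ => v * deriv f v) u
      = -ω + p * (p * u ^ (p-1)) - q * (q * u ^ (q-1)) := by
    rw [hg.deriv_eq, hg2.deriv]
  rw [hD, hdf u hu, hf]
  simp only
  rw [hvp u hu, hvq u hu]
  ring

/-- Algebraic normal form of the two power expressions occurring in `f̃`. -/
private lemma aux_alg (p q u : ℝ) (hp : 1 < p) (hpq : p < q) (hu : 0 < u) :
    ∃ a t T : ℝ, 0 < a ∧ 0 < t ∧ 0 < T ∧
      ((q-1)*t - (p-1) ≤ (q-p)*(T*t)) ∧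
      (u = ((p-1)/(q-1)) ^ ((q-p)⁻¹ : ℝ) → t = 1 ∧ T = 1) ∧
      ((q-1)^2 * u^(q-1) - (p-1)^2 * u^(p-1) = a*(p-1)*((q-1)*t - (p-1))) ∧
      ((q-p)^2 * (u^(p-1) * u^(q-1)) =
        ((q-p)/(q-1) * ((p-1)/(q-1)) ^ ((p-1)/(q-p))) * (a*(p-1)*((q-p)*(T*t)))) := by
  have hp1 : (0:ℝ) < p - 1 := by linarith
  have hq1 : (0:ℝ) < q - 1 := by linarith
  have hqp : (0:ℝ) < q - p := by linarith
  have hr0 : (0:ℝ) < (p-1)/(q-1) := div_pos hp1 hq1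
  set s : ℝ := u ^ (q-p) with hsdef
  set t : ℝ := s / ((p-1)/(q-1)) with htdef
  set a : ℝ := u ^ (p-1) with hadef
  set β : ℝ := (p-1)/(q-p) with hβdef
  set T : ℝ := t ^ β with hTdef
  have hs0 : 0 < s := Real.rpow_pos_of_pos hu _
  have ht0 : 0 < t := div_pos hs0 hr0
  have ha0 : 0 < a := Real.rpow_pos_of_pos hu _
  have hT0 : 0 < T := Real.rpow_pos_of_pos ht0 _
  have hst : s = (p-1)/(q-1) * t := by
    rw [htdef, mul_div_cancel₀ _ hr0.ne']
  have hb : u ^ (q-1) = a * s := by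
    rw [hadef, hsdef, ← Real.rpow_add hu]
    congr 1; ring
  have haT : a = ((p-1)/(q-1)) ^ β * T := by
    have h1 : a = s ^ β := by
      rw [hadef, hsdef, ← Real.rpow_mul hu.le]
      congr 1
      rw [hβdef]; field_simp
    rw [h1, hst, Real.mul_rpow hr0.le ht0.le, hTdef]
  refine ⟨a, t, T, ha0, ht0, hT0, ?_, ?_, ?_, ?_⟩
  · -- Bernoulli-type inequality
    have hP : (1:ℝ) ≤ (q-1)/(q-p) := by
      rw [le_div_iff₀ hqp]; linarith
    have hbern := one_add_mul_self_le_rpow_one_add (s := t - 1) (by linarith) hP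
    have h1t : (1:ℝ) + (t - 1) = t := by ring
    rw [h1t] at hbern
    have htP : t ^ ((q-1)/(q-p)) = T * t := by
      have : (q-1)/(q-p) = β + 1 := by rw [hβdef]; field_simp; ring
      rw [this, Real.rpow_add ht0, Real.rpow_one, hTdef]
    rw [htP] at hbern
    have hmul := mul_le_mul_of_nonneg_left hbern hqp.le
    have hL : (q-p) * (1 + (q-1)/(q-p) * (t - 1)) = (q-1)*t - (p-1) := by
      field_simp; ring
    rw [hL] at hmul
    exact hmul
  · -- equality case
    intro hueq
    have hs : s = (p-1)/(q-1) := by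
      rw [hsdef, hueq, ← Real.rpow_mul hr0.le, inv_mul_cancel₀ hqp.ne', Real.rpow_one]
    have ht1 : t = 1 := by
      rw [htdef, hs, div_self hr0.ne']
    refine ⟨ht1, ?_⟩
    rw [hTdef, ht1, Real.one_rpow]
  · -- first normal form
    rw [hb, hst]
    field_simp
  · -- second normal form
    rw [hb, hst, haT]
    field_simp

/-- For `f u = -ω u + u^p - u^q`, `f̃ u < 0` for every `u > 0` iff
`ω < η_{p,q} = ((q-p)/(q-1)) ((p-1)/(q-1))^{(p-1)/(q-p)}`. -/
theorem stmt_14 (ω p q : ℝ) (hω : 0 < ω) (hp : 1 < p) (hpq : p < q)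
    (f : ℝ → ℝ) (hf : f = fun u : ℝ => -ω * u + u ^ p - u ^ q)
    (ftilde : ℝ → ℝ)
    (hftilde : ftilde = fun u : ℝ =>
      deriv (fun v : ℝ => v * deriv f v) u * f u - u * (deriv f u) ^ 2) :
    (∀ u : ℝ, 0 < u → ftilde u < 0) ↔
      ω < (q - p) / (q - 1) * ((p - 1) / (q - 1)) ^ ((p - 1) / (q - p)) := by
  have hp1 : (0:ℝ) < p - 1 := by linarith
  have hq1 : (0:ℝ) < q - 1 := by linarith
  have hqp : (0:ℝ) < q - p := by linarith
  have hη0 : 0 < (q - p) / (q - 1) * ((p - 1) / (q - 1)) ^ ((p - 1) / (q - p)) :=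
    mul_pos (div_pos hqp hq1) (Real.rpow_pos_of_pos (div_pos hp1 hq1) _)
  have hft : ∀ u : ℝ, 0 < u → ftilde u =
      u * (ω * ((q-1)^2 * u^(q-1) - (p-1)^2 * u^(p-1))
            - (q-p)^2 * (u^(p-1) * u^(q-1))) := by
    intro u hu
    rw [hftilde]
    exact aux_deriv ω p q f hf hu
  constructor
  · intro h
    have hu : (0:ℝ) < ((p-1)/(q-1)) ^ ((q-p)⁻¹ : ℝ) :=
      Real.rpow_pos_of_pos (div_pos hp1 hq1) _
    set u : ℝ := ((p-1)/(q-1)) ^ ((q-p)⁻¹ : ℝ) with hudef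
    obtain ⟨a, t, T, ha0, ht0, hT0, hkey, heq, he1, he2⟩ := aux_alg p q u hp hpq hu
    obtain ⟨ht1, hT1⟩ := heq rfl
    have hlt := h u hu
    rw [hft u hu] at hlt
    have hX : ω * ((q-1)^2 * u^(q-1) - (p-1)^2 * u^(p-1))
        - (q-p)^2 * (u^(p-1) * u^(q-1)) < 0 := by
      by_contra hcon
      push_neg at hcon
      have := mul_nonneg hu.le hcon
      linarith
    rw [he1, he2, ht1, hT1] at hX
    have hpos : 0 < a * (p-1) * (q-p) := by positivity
    nlinarith [hX, hpos]
  · intro hωη u hu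
    obtain ⟨a, t, T, ha0, ht0, hT0, hkey, -, he1, he2⟩ := aux_alg p q u hp hpq hu
    rw [hft u hu]
    apply mul_neg_of_pos_of_neg hu
    rw [he1, he2]
    rcases le_or_gt ((q-1)*t - (p-1)) 0 with hB | hB
    · have h1 : ω * (a*(p-1)*((q-1)*t - (p-1))) ≤ 0 :=
        mul_nonpos_of_nonneg_of_nonpos hω.le
          (mul_nonpos_of_nonneg_of_nonpos (by positivity) hB)
      have h2 : 0 < ((q-p)/(q-1) * ((p-1)/(q-1)) ^ ((p-1)/(q-p))) *
          (a*(p-1)*((q-p)*(T*t))) := by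
        apply mul_pos hη0
        positivity
      linarith
    · have h1 : ω * (a*(p-1)*((q-1)*t - (p-1))) <
          ((q-p)/(q-1) * ((p-1)/(q-1)) ^ ((p-1)/(q-p))) * (a*(p-1)*((q-1)*t - (p-1))) :=
        mul_lt_mul_of_pos_right hωη (by positivity)
      have h2 : ((q-p)/(q-1) * ((p-1)/(q-1)) ^ ((p-1)/(q-p))) * (a*(p-1)*((q-1)*t - (p-1))) ≤
          ((q-p)/(q-1) * ((p-1)/(q-1)) ^ ((p-1)/(q-p))) * (a*(p-1)*((q-p)*(T*t))) := by
        apply mul_le_mul_of_nonneg_left _ hη0.le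
        exact mul_le_mul_of_nonneg_left hkey (by positivity)
      linarith
end

section
/- Let ω > 0 and q > p > 1 be real numbers, and let f(u) = -ω u + u^p - u^q for u > 0. Then f has exactly one zero on (0,∞) if and only if ω = η_{p,q}, where η_{p,q} = ((q-p)/(q-1)) · ((p-1)/(q-1))^{(p-1)/(q-p)}; moreover in that case the unique zero is u = ((p-1)/(q-1))^{1/(q-p)} and f(u) ≤ 0 for all u > 0. -/
lemma stmt16_core_lt (r x : ℝ) (hr : 0 < r) (hx : 0 < x) (hne : x ≠ r / (r + 1)) :
    x ^ r * (1 - x) < (r / (r + 1)) ^ r * (1 - r / (r + 1)) := by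
  have hr1 : (0:ℝ) < r + 1 := by linarith
  have hw0 : 0 < r / (r + 1) := div_pos hr hr1
  have hw1 : r / (r + 1) < 1 := by rw [div_lt_one hr1]; linarith
  set w : ℝ := r / (r + 1) with hw
  have hrhs : 0 < w ^ r * (1 - w) :=
    mul_pos (Real.rpow_pos_of_pos hw0 r) (by linarith)
  rcases le_or_gt 1 x with h1 | h1
  · have : x ^ r * (1 - x) ≤ 0 :=
      mul_nonpos_of_nonneg_of_nonpos (Real.rpow_nonneg hx.le r) (by linarith)
    linarith
  · have hx1 : 0 < 1 - x := by linarith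
    have h1w : 0 < 1 - w := by linarith
    have hxw : x / w ≠ (1 - x) / (1 - w) := by
      intro hc
      apply hne
      field_simp at hc
      nlinarith [hc]
    have key := strictConcaveOn_log_Ioi.2 (Set.mem_Ioi.mpr (div_pos hx hw0))
      (Set.mem_Ioi.mpr (div_pos hx1 h1w)) hxw hw0 h1w (by ring)
    simp only [smul_eq_mul] at key
    have hsum : w * (x / w) + (1 - w) * ((1 - x) / (1 - w)) = 1 := by
      field_simp; ring
    rw [hsum, Real.log_one, Real.log_div (ne_of_gt hx) (ne_of_gt hw0),
      Real.log_div (ne_of_gt hx1) (ne_of_gt h1w)] at key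
    have hwr : (r + 1) * w = r := by rw [hw]; field_simp
    have h4 : (r + 1) * (1 - w) = 1 := by rw [hw]; field_simp; ring
    have key2 := mul_lt_mul_of_pos_left key hr1
    have expand : (r + 1) * (w * (Real.log x - Real.log w) +
        (1 - w) * (Real.log (1 - x) - Real.log (1 - w))) =
        ((r + 1) * w) * (Real.log x - Real.log w) +
        ((r + 1) * (1 - w)) * (Real.log (1 - x) - Real.log (1 - w)) := by ring
    rw [expand, hwr, h4, mul_zero] at key2
    have e1 : x ^ r * (1 - x) = Real.exp (r * Real.log x + Real.log (1 - x)) := by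
      rw [Real.exp_add, mul_comm r, ← Real.rpow_def_of_pos hx, Real.exp_log hx1]
    have e2 : w ^ r * (1 - w) = Real.exp (r * Real.log w + Real.log (1 - w)) := by
      rw [Real.exp_add, mul_comm r, ← Real.rpow_def_of_pos hw0, Real.exp_log h1w]
    rw [e1, e2]
    exact Real.exp_lt_exp.mpr (by linarith)

lemma stmt16_hmax (p q u : ℝ) (hp : 1 < p) (hpq : p < q) (hu : 0 < u) :
    u ^ (p - 1) - u ^ (q - 1) ≤ (q - p) / (q - 1) * ((p - 1) / (q - 1)) ^ ((p - 1) / (q - p)) ∧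
    (u ^ (p - 1) - u ^ (q - 1) = (q - p) / (q - 1) * ((p - 1) / (q - 1)) ^ ((p - 1) / (q - p)) ↔
      u = ((p - 1) / (q - 1)) ^ (1 / (q - p))) := by
  have hq1 : 1 < q := hp.trans hpq
  have hqp : (0:ℝ) < q - p := by linarith
  have hq1' : (0:ℝ) < q - 1 := by linarith
  have hp1 : (0:ℝ) < p - 1 := by linarith
  set r : ℝ := (p - 1) / (q - p) with hrdef
  have hr : 0 < r := div_pos hp1 hqp
  have hr1 : (0:ℝ) < r + 1 := by linarith
  have hwdef : (p - 1) / (q - 1) = r / (r + 1) := by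
    rw [hrdef]; field_simp; ring
  have h1w : (q - p) / (q - 1) = 1 - r / (r + 1) := by
    rw [hrdef]; field_simp; ring
  have hw0 : (0:ℝ) < (p - 1) / (q - 1) := div_pos hp1 hq1'
  set x : ℝ := u ^ (q - p) with hxdef
  have hx : 0 < x := Real.rpow_pos_of_pos hu _
  have key1 : u ^ (p - 1) = x ^ r := by
    rw [hxdef, ← Real.rpow_mul hu.le]
    congr 1
    rw [hrdef]; field_simp
  have key2 : u ^ (q - 1) = x ^ r * x := by
    rw [hxdef, ← Real.rpow_mul hu.le, ← Real.rpow_add hu]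
    congr 1
    rw [hrdef]; field_simp; ring
  have hval : u ^ (p - 1) - u ^ (q - 1) = x ^ r * (1 - x) := by
    rw [key1, key2]; ring
  have hrhs : (q - p) / (q - 1) * ((p - 1) / (q - 1)) ^ ((p - 1) / (q - p)) =
      (r / (r + 1)) ^ r * (1 - r / (r + 1)) := by
    rw [hwdef, h1w, ← hrdef]; ring
  have hiff : u = ((p - 1) / (q - 1)) ^ (1 / (q - p)) ↔ x = r / (r + 1) := by
    constructor
    · intro h
      rw [hxdef, h, ← Real.rpow_mul hw0.le, one_div, inv_mul_cancel₀ (ne_of_gt hqp),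
        Real.rpow_one, hwdef]
    · intro h
      have : u = x ^ (1 / (q - p)) := by
        rw [hxdef, ← Real.rpow_mul hu.le, mul_one_div, div_self (ne_of_gt hqp), Real.rpow_one]
      rw [this, h, ← hwdef]
  rcases eq_or_ne x (r / (r + 1)) with hxe | hxe
  · constructor
    · rw [hval, hrhs, hxe]
    · simp only [hiff, hxe, iff_true]
      rw [hval, hrhs, hxe]
  · have hlt := stmt16_core_lt r x hr hx hxe
    constructor
    · rw [hval, hrhs]; exact hlt.le
    · rw [hval, hrhs]
      constructor
      · intro h; exact absurd h (ne_of_lt hlt)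
      · intro h; exact absurd (hiff.mp h) hxe

/-- For `f u = -ω u + u^p - u^q`, `f` has exactly one zero on `(0,∞)`
iff `ω = η_{p,q} = ((q-p)/(q-1)) ((p-1)/(q-1))^{(p-1)/(q-p)}`; moreover, in that case
the unique zero is `u = ((p-1)/(q-1))^{1/(q-p)}` and `f u ≤ 0` for all `u > 0`. -/
theorem stmt_16 (ω p q : ℝ) (hω : 0 < ω) (hp : 1 < p) (hpq : p < q)
    (f : ℝ → ℝ) (hf : f = fun u : ℝ => -ω * u + u ^ p - u ^ q) :
    ((∃! u : ℝ, 0 < u ∧ f u = 0) ↔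
      ω = (q - p) / (q - 1) * ((p - 1) / (q - 1)) ^ ((p - 1) / (q - p))) ∧
    (ω = (q - p) / (q - 1) * ((p - 1) / (q - 1)) ^ ((p - 1) / (q - p)) →
      ∀ u : ℝ, 0 < u →
        f u ≤ 0 ∧ (f u = 0 ↔ u = ((p - 1) / (q - 1)) ^ (1 / (q - p)))) := by
  have hq1 : 1 < q := hp.trans hpq
  have hqp : (0:ℝ) < q - p := by linarith
  have hq1' : (0:ℝ) < q - 1 := by linarith
  have hp1 : (0:ℝ) < p - 1 := by linarith
  set η : ℝ := (q - p) / (q - 1) * ((p - 1) / (q - 1)) ^ ((p - 1) / (q - p)) with hηdef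
  set ustar : ℝ := ((p - 1) / (q - 1)) ^ (1 / (q - p)) with hustar
  have hw0 : (0:ℝ) < (p - 1) / (q - 1) := div_pos hp1 hq1'
  have hustar_pos : 0 < ustar := Real.rpow_pos_of_pos hw0 _
  have hstar : ustar ^ (p - 1) - ustar ^ (q - 1) = η :=
    (stmt16_hmax p q ustar hp hpq hustar_pos).2.mpr rfl
  have hη_pos : 0 < η :=
    mul_pos (div_pos hqp hq1') (Real.rpow_pos_of_pos hw0 _)
  have hfactor : ∀ u : ℝ, 0 < u → f u = u * ((u ^ (p - 1) - u ^ (q - 1)) - ω) := by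
    intro u hu
    have h1 : u ^ p = u * u ^ (p - 1) := by
      rw [show p = 1 + (p - 1) by ring, Real.rpow_add hu, Real.rpow_one]
      ring_nf
    have h2 : u ^ q = u * u ^ (q - 1) := by
      rw [show q = 1 + (q - 1) by ring, Real.rpow_add hu, Real.rpow_one]
      ring_nf
    rw [hf]
    simp only
    rw [h1, h2]
    ring
  constructor
  · constructor
    · intro huniq
      by_contra hne
      obtain ⟨u0, ⟨hu0pos, hu0zero⟩, huniq'⟩ := huniq
      rcases lt_or_gt_of_ne hne with hlt | hgt
      · -- ω < η : two zeros
        set h : ℝ → ℝ := fun u => u ^ (p - 1) - u ^ (q - 1) with hh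
        set a : ℝ := min ustar (min 1 (ω ^ (1 / (p - 1)))) / 2 with hadef
        have hωr_pos : 0 < ω ^ (1 / (p - 1)) := Real.rpow_pos_of_pos hω _
        have hmin_pos : 0 < min ustar (min 1 (ω ^ (1 / (p - 1)))) :=
          lt_min hustar_pos (lt_min one_pos hωr_pos)
        have ha : 0 < a := by positivity
        have ha1 : a < ustar := by
          have := min_le_left ustar (min 1 (ω ^ (1 / (p - 1))))
          rw [hadef]; linarith
        have ha2 : a < 1 := by
          have h1 := min_le_right ustar (min 1 (ω ^ (1 / (p - 1))))
          have h2 := min_le_left (1:ℝ) (ω ^ (1 / (p - 1)))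
          rw [hadef]; linarith
        have ha3 : a < ω ^ (1 / (p - 1)) := by
          have h1 := min_le_right ustar (min 1 (ω ^ (1 / (p - 1))))
          have h2 := min_le_right (1:ℝ) (ω ^ (1 / (p - 1)))
          rw [hadef]; linarith
        have hha : h a < ω := by
          have h1 : a ^ (p - 1) < (ω ^ (1 / (p - 1))) ^ (p - 1) :=
            Real.rpow_lt_rpow ha.le ha3 hp1
          have h2 : (ω ^ (1 / (p - 1))) ^ (p - 1) = ω := by
            rw [← Real.rpow_mul hω.le, one_div, inv_mul_cancel₀ (ne_of_gt hp1), Real.rpow_one]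
          have h3 : 0 < a ^ (q - 1) := Real.rpow_pos_of_pos ha _
          simp only [hh]
          linarith
        set b : ℝ := ustar + 1 with hbdef
        have hb1 : 1 < b := by rw [hbdef]; linarith
        have hbstar : ustar < b := by rw [hbdef]; linarith
        have hhb : h b < 0 := by
          have := Real.rpow_lt_rpow_of_exponent_lt hb1 (show p - 1 < q - 1 by linarith)
          simp only [hh]
          linarith
        have hcont : ContinuousOn h (Set.Ici a) := by
          intro y hy
          have hy0 : y ≠ 0 := ne_of_gt (lt_of_lt_of_le ha hy)
          exact ((Real.continuousAt_rpow_const y (p - 1) (Or.inl hy0)).sub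
            (Real.continuousAt_rpow_const y (q - 1) (Or.inl hy0))).continuousWithinAt
        have hmem1 : ω ∈ Set.Icc (h a) (h ustar) := by
          constructor
          · exact hha.le
          · simp only [hh]; rw [hstar]; exact hlt.le
        obtain ⟨u₁, hu₁mem, hu₁⟩ := intermediate_value_Icc ha1.le
          (hcont.mono (Set.Icc_subset_Ici_self)) hmem1
        have hmem2 : ω ∈ Set.Icc (h b) (h ustar) := by
          constructor
          · linarith
          · simp only [hh]; rw [hstar]; exact hlt.le
        obtain ⟨u₂, hu₂mem, hu₂⟩ := intermediate_value_Icc' hbstar.le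
          (hcont.mono (fun y hy => le_trans ha1.le hy.1)) hmem2
        have hu₁pos : 0 < u₁ := lt_of_lt_of_le ha hu₁mem.1
        have hu₂pos : 0 < u₂ := lt_of_lt_of_le hustar_pos hu₂mem.1
        have hu₁ne : u₁ ≠ ustar := by
          intro hcon
          rw [hcon] at hu₁
          simp only [hh] at hu₁
          rw [hstar] at hu₁
          linarith
        have hu₂ne : u₂ ≠ ustar := by
          intro hcon
          rw [hcon] at hu₂
          simp only [hh] at hu₂
          rw [hstar] at hu₂
          linarith
        have hne12 : u₁ ≠ u₂ := by
          intro hcon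
          have h1 : u₁ < ustar := lt_of_le_of_ne hu₁mem.2 hu₁ne
          have h2 : ustar < u₂ := lt_of_le_of_ne hu₂mem.1 (Ne.symm hu₂ne)
          rw [hcon] at h1
          linarith
        have hz1 : f u₁ = 0 := by
          rw [hfactor u₁ hu₁pos]
          simp only [hh] at hu₁
          rw [hu₁]
          ring
        have hz2 : f u₂ = 0 := by
          rw [hfactor u₂ hu₂pos]
          simp only [hh] at hu₂
          rw [hu₂]
          ring
        have e1 := huniq' u₁ ⟨hu₁pos, hz1⟩
        have e2 := huniq' u₂ ⟨hu₂pos, hz2⟩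
        exact hne12 (e1.trans e2.symm)
      · -- η < ω : no zeros at all
        have h1 := (stmt16_hmax p q u0 hp hpq hu0pos).1
        rw [← hηdef] at h1
        have heq : u0 * ((u0 ^ (p - 1) - u0 ^ (q - 1)) - ω) = 0 := by
          rw [← hfactor u0 hu0pos]; exact hu0zero
        nlinarith [mul_pos hu0pos (show 0 < ω - (u0 ^ (p - 1) - u0 ^ (q - 1)) by linarith)]
    · intro hωη
      refine ⟨ustar, ⟨hustar_pos, ?_⟩, ?_⟩
      · rw [hfactor ustar hustar_pos, hstar, hωη]
        ring
      · rintro u ⟨hu, hfu⟩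
        rw [hfactor u hu] at hfu
        have : u ^ (p - 1) - u ^ (q - 1) = ω := by
          rcases mul_eq_zero.mp hfu with h | h
          · exact absurd h (ne_of_gt hu)
          · linarith
        exact (stmt16_hmax p q u hp hpq hu).2.mp (by rw [this, hωη])
  · intro hωη u hu
    have hle := (stmt16_hmax p q u hp hpq hu).1
    have hiff := (stmt16_hmax p q u hp hpq hu).2
    rw [← hηdef] at hle hiff
    rw [hfactor u hu]
    constructor
    · apply mul_nonpos_of_nonneg_of_nonpos hu.le
      rw [hωη]
      linarith
    · rw [← hiff]
      constructor
      · intro hz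
        rcases mul_eq_zero.mp hz with h | h
        · exact absurd h (ne_of_gt hu)
        · rw [← hωη]; linarith
      · intro he
        rw [he, hωη]
        ring
end

section
/- Let ω > 0 and q > p > 1 be real numbers, and let F(u) = -(ω/2) u^2 + u^{p+1}/(p+1) - u^{q+1}/(q+1) for u > 0. Then F(u) < 0 for every u > 0 if and only if ω > ω_{p,q}, where ω_{p,q} = (2(q-p)/((p+1)(q-1))) · ((p-1)(q+1)/((p+1)(q-1)))^{(p-1)/(q-p)}. -/
/-- `F u < 0` for every `u > 0` iff `ω > ω_{p,q}`, where
`ω_{p,q} = (2(q-p)/((p+1)(q-1))) ((p-1)(q+1)/((p+1)(q-1)))^{(p-1)/(q-p)}`. -/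
theorem stmt_17 (ω p q : ℝ) (hω : 0 < ω) (hp : 1 < p) (hpq : p < q)
    (F : ℝ → ℝ)
    (hF : F = fun u : ℝ =>
      -(ω / 2) * u ^ (2 : ℝ) + u ^ (p + 1) / (p + 1) - u ^ (q + 1) / (q + 1)) :
    (∀ u : ℝ, 0 < u → F u < 0) ↔
      ω > 2 * (q - p) / ((p + 1) * (q - 1)) *
        ((p - 1) * (q + 1) / ((p + 1) * (q - 1))) ^ ((p - 1) / (q - p)) := by
  have hp1 : (0:ℝ) < p + 1 := by linarith
  have hq1 : (0:ℝ) < q + 1 := by linarith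
  have hqm1 : (0:ℝ) < q - 1 := by linarith
  have hpm1 : (0:ℝ) < p - 1 := by linarith
  have hqp : (0:ℝ) < q - p := by linarith
  set A : ℝ := (p - 1) * (q + 1) / ((p + 1) * (q - 1)) with hAdef
  have hA : 0 < A := by positivity
  set K : ℝ := A ^ ((p - 1) / (q - p)) with hKdef
  have hK : 0 < K := Real.rpow_pos_of_pos hA _
  set C : ℝ := (q - p) / ((p + 1) * (q - 1)) * K with hCdef
  have hRHS : 2 * (q - p) / ((p + 1) * (q - 1)) * K = 2 * C := by
    rw [hCdef]; ring
  -- rewrite F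
  have hFeq : ∀ u : ℝ, 0 < u →
      F u = u ^ (2:ℝ) * (u ^ (p-1) / (p+1) - u ^ (q-1) / (q+1) - ω / 2) := by
    intro u hu
    have h1 : u ^ (p+1) = u ^ (2:ℝ) * u ^ (p-1) := by
      rw [show p + 1 = 2 + (p-1) by ring, Real.rpow_add hu]
    have h2 : u ^ (q+1) = u ^ (2:ℝ) * u ^ (q-1) := by
      rw [show q + 1 = 2 + (q-1) by ring, Real.rpow_add hu]
    rw [hF]; simp only []
    rw [h1, h2]; ring
  -- key pointwise bound via weighted AM-GM
  have key : ∀ u : ℝ, 0 < u → u ^ (p-1) / (p+1) - u ^ (q-1) / (q+1) ≤ C := by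
    intro u hu
    set θ : ℝ := (p-1)/(q-1) with hθdef
    have hθ0 : 0 ≤ θ := by positivity
    have hθ1 : 0 ≤ 1 - θ := by
      have : θ < 1 := by rw [hθdef, div_lt_one hqm1]; linarith
      linarith
    have hY : (0:ℝ) ≤ (1/A) * u ^ (q-1) := by positivity
    have hgm := Real.geom_mean_le_arith_mean2_weighted hθ0 hθ1 hY hK.le (by ring)
    have e1 : (q-1) * θ = p - 1 := by rw [hθdef]; field_simp
    have e2 : (p-1)/(q-p) * (1-θ) = θ := by
      rw [hθdef]; field_simp; ring
    have hlhs : ((1/A) * u ^ (q-1)) ^ θ * K ^ (1-θ) = u ^ (p-1) := by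
      calc ((1/A) * u ^ (q-1)) ^ θ * K ^ (1-θ)
          = (1/A) ^ θ * u ^ ((q-1)*θ) * A ^ ((p-1)/(q-p) * (1-θ)) := by
            rw [Real.mul_rpow (by positivity) (by positivity),
              ← Real.rpow_mul hu.le, hKdef, ← Real.rpow_mul hA.le]
        _ = (1/A) ^ θ * A ^ θ * u ^ (p-1) := by rw [e1, e2]; ring
        _ = u ^ (p-1) := by
            rw [← Real.mul_rpow (by positivity) hA.le, one_div,
              inv_mul_cancel₀ hA.ne', Real.one_rpow, one_mul]
    rw [hlhs] at hgm
    have hdec : u ^ (p-1) / (p+1) - u ^ (q-1) / (q+1)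
        = (u ^ (p-1) - (θ * ((1/A) * u ^ (q-1)) + (1-θ) * K)) / (p+1) + C := by
      rw [hCdef, hθdef, hAdef]
      field_simp
      ring
    rw [hdec]
    have hnp : (u ^ (p-1) - (θ * ((1/A) * u ^ (q-1)) + (1-θ) * K)) / (p+1) ≤ 0 :=
      div_nonpos_of_nonpos_of_nonneg (by linarith) hp1.le
    linarith
  constructor
  · intro h
    set u₀ : ℝ := A ^ ((q-p)⁻¹) with hu₀def
    have hu₀ : 0 < u₀ := Real.rpow_pos_of_pos hA _
    have hX : u₀ ^ (p-1) = K := by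
      rw [hu₀def, ← Real.rpow_mul hA.le, hKdef]
      congr 1
      field_simp
    have hYe : u₀ ^ (q-1) = K * A := by
      rw [hu₀def, ← Real.rpow_mul hA.le, hKdef,
        show (q-p)⁻¹ * (q-1) = (p-1)/(q-p) + 1 by field_simp; ring,
        Real.rpow_add hA, Real.rpow_one]
    have hgC : u₀ ^ (p-1) / (p+1) - u₀ ^ (q-1) / (q+1) = C := by
      rw [hX, hYe, hCdef, hAdef]
      field_simp
      ring
    have h0 := h u₀ hu₀
    rw [hFeq u₀ hu₀] at h0
    have h2 : C - ω/2 < 0 := by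
      by_contra hcon
      push_neg at hcon
      rw [hgC] at h0
      exact absurd h0 (not_lt.2 (mul_nonneg (Real.rpow_pos_of_pos hu₀ 2).le hcon))
    rw [hRHS]; linarith
  · intro hgt u hu
    rw [hFeq u hu]
    rw [hRHS] at hgt
    have hb := key u hu
    exact mul_neg_of_pos_of_neg (Real.rpow_pos_of_pos hu 2) (by linarith)
end

section
/- Let a, b, c > 0 and p < q < r be real numbers, let f(u) = -a u^p + b u^q - c u^r for u > 0, and let f̃(u) = (u f'(u))' f(u) - u f'(u)^2. Then exactly one of the following three mutually exclusive cases holds: (a) there exists u > 0 with f(u) > 0, and then f̃(u) < 0 for all u > 0; (b) f has exactly one zero on (0,∞) and f ≤ 0 on (0,∞), and then f̃ has exactly one zero on (0,∞); (c) f(u) < 0 for all u > 0, and then there exists u > 0 with f̃(u) > 0. -/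
open Real

section helpers19
lemma strict_min19 (x z α β : ℝ) (hx : 0 < x) (hz : 0 < z) (hα : 0 < α) (hβ : 0 < β)
    {u₀ : ℝ} (hu₀ : 0 < u₀) (hrel : x * α * u₀ ^ (-α) = z * β * u₀ ^ β)
    {u : ℝ} (hu : 0 < u) (hne : u ≠ u₀) :
    x * u₀ ^ (-α) + z * u₀ ^ β < x * u ^ (-α) + z * u ^ β := by
  have hv : 0 < u / u₀ := div_pos hu hu₀
  set v : ℝ := u / u₀ with hv_def
  have hv1 : v ≠ 1 := by
    intro h
    exact hne (by rw [hv_def, div_eq_one_iff_eq hu₀.ne'] at h; exact h)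
  have huv : u = v * u₀ := by rw [hv_def]; field_simp
  have hw : 0 < v ^ α := rpow_pos_of_pos hv α
  set w : ℝ := v ^ α with hw_def
  have hw1 : w ≠ 1 := by
    intro h
    rw [hw_def] at h
    apply hv1
    have h2 : (v ^ α) ^ α⁻¹ = (1 : ℝ) ^ α⁻¹ := by rw [h]
    rwa [← rpow_mul hv.le, mul_inv_cancel₀ hα.ne', rpow_one, one_rpow] at h2
  -- Bernoulli: 1 + s*(w-1) < w^s with s = (α+β)/α
  have hs : 1 < (α + β) / α := by
    rw [lt_div_iff₀ hα]; linarith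
  have hbern : 1 + ((α + β) / α) * (w - 1) < w ^ ((α + β) / α) := by
    have := one_add_mul_self_lt_rpow_one_add (s := w - 1) (by linarith) (by
      intro h; exact hw1 (by linarith)) hs
    simpa using this
  have hws : w ^ ((α + β) / α) = v ^ (α + β) := by
    rw [hw_def, ← rpow_mul hv.le]
    congr 1
    field_simp
  rw [hws] at hbern
  -- key : (α+β) * v^α < β + α * v^(α+β)
  have hkey : (α + β) * w < β + α * v ^ (α + β) := by
    have h1 : α * (1 + ((α + β) / α) * (w - 1)) < α * v ^ (α + β) :=
      (mul_lt_mul_iff_right₀ hα).mpr hbern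
    have h2 : α * (1 + ((α + β) / α) * (w - 1)) = (α + β) * w - β := by
      field_simp; ring
    linarith
  -- decompose powers of u
  have hA : (0:ℝ) < u₀ ^ (-α) := rpow_pos_of_pos hu₀ _
  have hB : (0:ℝ) < u₀ ^ β := rpow_pos_of_pos hu₀ _
  have hVβ : (0:ℝ) < v ^ β := rpow_pos_of_pos hv _
  have huα : u ^ (-α) = v ^ (-α) * u₀ ^ (-α) := by
    rw [huv, mul_rpow hv.le hu₀.le]
  have huβ : u ^ β = v ^ β * u₀ ^ β := by
    rw [huv, mul_rpow hv.le hu₀.le]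
  have hvαβ : v ^ (α + β) = w * v ^ β := by rw [hw_def, rpow_add hv]
  have hvnegα : v ^ (-α) = w⁻¹ := by rw [hw_def, rpow_neg hv.le]
  rw [huα, huβ, hvnegα]
  rw [hvαβ] at hkey
  -- Now: key : (α+β)*w < β + α*(w * v^β);  rel : x*α*A = z*β*B
  -- goal : x*A + z*B < x*(w⁻¹*A) + z*(v^β * B)
  have hwinv : w * w⁻¹ = 1 := mul_inv_cancel₀ hw.ne'
  have hdiv : α + β < β * w⁻¹ + α * v ^ β := by
    have h3 := mul_lt_mul_of_pos_right hkey (inv_pos.mpr hw)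
    have e1 : (α + β) * w * w⁻¹ = α + β := by field_simp
    have e2 : (β + α * (w * v ^ β)) * w⁻¹ = β * w⁻¹ + α * v ^ β := by field_simp
    linarith [e1 ▸ e2 ▸ h3]
  have hgoal : x * (w⁻¹ * u₀ ^ (-α)) + z * (v ^ β * u₀ ^ β)
      - (x * u₀ ^ (-α) + z * u₀ ^ β)
      = (z * u₀ ^ β / α) * (β * w⁻¹ + α * v ^ β - (α + β)) := by
    rw [div_mul_eq_mul_div, eq_div_iff hα.ne']
    linear_combination (w⁻¹ - 1) * hrel
  have hpos : 0 < (z * u₀ ^ β / α) * (β * w⁻¹ + α * v ^ β - (α + β)) :=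
    mul_pos (div_pos (mul_pos hz hB) hα) (by linarith)
  linarith

lemma hasDeriv19 (x y z p q r : ℝ) {u : ℝ} (hu : u ≠ 0) :
    HasDerivAt (fun v : ℝ => -x * v ^ p + y * v ^ q - z * v ^ r)
      (-x * (p * u ^ (p - 1)) + y * (q * u ^ (q - 1)) - z * (r * u ^ (r - 1))) u := by
  have h1 := (Real.hasDerivAt_rpow_const (x := u) (p := p) (Or.inl hu)).const_mul (-x)
  have h2 := (Real.hasDerivAt_rpow_const (x := u) (p := q) (Or.inl hu)).const_mul y
  have h3 := (Real.hasDerivAt_rpow_const (x := u) (p := r) (Or.inl hu)).const_mul z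
  exact (h1.add h2).sub h3

lemma ftilde_eq19 (a b c p q r : ℝ) {u : ℝ} (hu : 0 < u) :
    u * (deriv (fun v : ℝ => v * deriv (fun w : ℝ => -a * w ^ p + b * w ^ q - c * w ^ r) v) u
        * (-a * u ^ p + b * u ^ q - c * u ^ r)
      - u * (deriv (fun w : ℝ => -a * w ^ p + b * w ^ q - c * w ^ r) u) ^ 2)
    = -(a * b * (q - p) ^ 2) * u ^ (p + q) + (a * c * (r - p) ^ 2) * u ^ (p + r)
      - (b * c * (r - q) ^ 2) * u ^ (q + r) := by
  have hderiv : ∀ v : ℝ, 0 < v →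
      deriv (fun w : ℝ => -a * w ^ p + b * w ^ q - c * w ^ r) v
        = -a * (p * v ^ (p-1)) + b * (q * v ^ (q-1)) - c * (r * v ^ (r-1)) :=
    fun v hv => (hasDeriv19 a b c p q r hv.ne').deriv
  have hEq : (fun v : ℝ => v * deriv (fun w : ℝ => -a * w ^ p + b * w ^ q - c * w ^ r) v)
      =ᶠ[nhds u] (fun v : ℝ => -(a*p) * v ^ p + (b*q) * v ^ q - (c*r) * v ^ r) := by
    filter_upwards [isOpen_Ioi.mem_nhds hu] with v hv
    have hvne : v ≠ 0 := ne_of_gt hv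
    rw [hderiv v hv]
    have e : ∀ s : ℝ, v ^ (s - 1) = v ^ s * v⁻¹ := fun s => by
      rw [rpow_sub hv, rpow_one, div_eq_mul_inv]
    rw [e p, e q, e r]
    field_simp
  have h2 : deriv (fun v : ℝ => v * deriv (fun w : ℝ => -a * w ^ p + b * w ^ q - c * w ^ r) v) u
      = -(a*p) * (p * u ^ (p-1)) + (b*q) * (q * u ^ (q-1)) - (c*r) * (r * u ^ (r-1)) := by
    rw [hEq.deriv_eq]
    exact (hasDeriv19 (a*p) (b*q) (c*r) p q r hu.ne').deriv
  rw [h2, hderiv u hu]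
  have e : ∀ s : ℝ, u ^ (s - 1) = u ^ s * u⁻¹ := fun s => by
    rw [rpow_sub hu, rpow_one, div_eq_mul_inv]
  have eadd : ∀ s t : ℝ, u ^ (s + t) = u ^ s * u ^ t := fun s t => rpow_add hu s t
  rw [e p, e q, e r, eadd p q, eadd p r, eadd q r]
  field_simp
  ring

end helpers19

/-- Trichotomy for `f u = -a u^p + b u^q - c u^r` with `a,b,c > 0`,
`p < q < r`: exactly one of the following mutually exclusive cases holds:
(a) `∃ u > 0, f u > 0`, and then `f̃ u < 0` for all `u > 0`;
(b) `f` has exactly one zero on `(0,∞)` and `f ≤ 0` there, and then `f̃` has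
exactly one zero on `(0,∞)`;
(c) `f u < 0` for all `u > 0`, and then `∃ u > 0, f̃ u > 0`. -/
theorem stmt_19 (a b c p q r : ℝ) (ha : 0 < a) (hb : 0 < b) (hc : 0 < c)
    (hpq : p < q) (hqr : q < r)
    (f : ℝ → ℝ) (hf : f = fun u : ℝ => -a * u ^ p + b * u ^ q - c * u ^ r)
    (ftilde : ℝ → ℝ)
    (hftilde : ftilde = fun u : ℝ =>
      deriv (fun v : ℝ => v * deriv f v) u * f u - u * (deriv f u) ^ 2)
    (A : Prop) (hA : A ↔ ∃ u : ℝ, 0 < u ∧ 0 < f u)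
    (B : Prop) (hB : B ↔ (∃! u : ℝ, 0 < u ∧ f u = 0) ∧ ∀ u : ℝ, 0 < u → f u ≤ 0)
    (C : Prop) (hC : C ↔ ∀ u : ℝ, 0 < u → f u < 0) :
    ((A ∧ ¬B ∧ ¬C) ∨ (¬A ∧ B ∧ ¬C) ∨ (¬A ∧ ¬B ∧ C)) ∧
    (A → ∀ u : ℝ, 0 < u → ftilde u < 0) ∧
    (B → ∃! u : ℝ, 0 < u ∧ ftilde u = 0) ∧
    (C → ∃ u : ℝ, 0 < u ∧ 0 < ftilde u) := by
  have hα : (0:ℝ) < q - p := sub_pos.mpr hpq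
  have hβ : (0:ℝ) < r - q := sub_pos.mpr hqr
  have hrp : (0:ℝ) < r - p := by linarith
  set u₀ : ℝ := (a * (q - p) / (c * (r - q))) ^ ((r - p)⁻¹) with hu₀_def
  have hbase : (0:ℝ) < a * (q - p) / (c * (r - q)) := by positivity
  have hu₀ : 0 < u₀ := rpow_pos_of_pos hbase _
  have hu₀pow : u₀ ^ (r - p) = a * (q - p) / (c * (r - q)) := by
    rw [hu₀_def, ← rpow_mul hbase.le, inv_mul_cancel₀ hrp.ne', rpow_one]
  have hPA : u₀ ^ (-(q - p)) * u₀ ^ (q - p) = 1 := by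
    rw [← rpow_add hu₀]; simp
  have hQB : u₀ ^ (-(r - q)) * u₀ ^ (r - q) = 1 := by
    rw [← rpow_add hu₀]; simp
  have hPQ : c * (r - q) * (u₀ ^ (q - p) * u₀ ^ (r - q)) = a * (q - p) := by
    rw [← rpow_add hu₀, show q - p + (r - q) = r - p by ring, hu₀pow]
    field_simp
  have hrelf : a * (q - p) * u₀ ^ (-(q - p)) = c * (r - q) * u₀ ^ (r - q) := by
    linear_combination (-(u₀ ^ (-(q - p)))) * hPQ + c * (r - q) * u₀ ^ (r - q) * hPA
  have hX : a * (q - p) * u₀ ^ (-(r - q)) = c * (r - q) * u₀ ^ (q - p) := by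
    linear_combination (-(u₀ ^ (-(r - q)))) * hPQ + c * (r - q) * u₀ ^ (q - p) * hQB
  have hrelft : (a * b * (q - p) ^ 2) * (r - q) * u₀ ^ (-(r - q))
      = (b * c * (r - q) ^ 2) * (q - p) * u₀ ^ (q - p) := by
    linear_combination (b * (q - p) * (r - q)) * hX
  -- pointwise formulas
  have hfΦ : ∀ u : ℝ, 0 < u →
      f u = u ^ q * (b - (a * u ^ (-(q - p)) + c * u ^ (r - q))) := by
    intro u hu
    have e1 : u ^ q * u ^ (-(q - p)) = u ^ p := by
      rw [← rpow_add hu, show q + -(q - p) = p by ring]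
    have e2 : u ^ q * u ^ (r - q) = u ^ r := by
      rw [← rpow_add hu, show q + (r - q) = r by ring]
    simp only [hf]
    linear_combination a * e1 + c * e2
  have hftval : ∀ u : ℝ, 0 < u →
      ftilde u = (u ^ (p + r) / u) * (a * c * (r - p) ^ 2 -
        ((a * b * (q - p) ^ 2) * u ^ (-(r - q)) + (b * c * (r - q) ^ 2) * u ^ (q - p))) := by
    intro u hu
    have h1 := ftilde_eq19 a b c p q r hu
    have e1 : u ^ (p + r) * u ^ (-(r - q)) = u ^ (p + q) := by
      rw [← rpow_add hu, show p + r + -(r - q) = p + q by ring]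
    have e2 : u ^ (p + r) * u ^ (q - p) = u ^ (q + r) := by
      rw [← rpow_add hu, show p + r + (q - p) = q + r by ring]
    have h2 : u ^ (p + r) * (a * c * (r - p) ^ 2 -
        ((a * b * (q - p) ^ 2) * u ^ (-(r - q)) + (b * c * (r - q) ^ 2) * u ^ (q - p)))
        = -(a * b * (q - p) ^ 2) * u ^ (p + q) + (a * c * (r - p) ^ 2) * u ^ (p + r)
          - (b * c * (r - q) ^ 2) * u ^ (q + r) := by
      linear_combination (-(a * b * (q - p) ^ 2)) * e1 + (-(b * c * (r - q) ^ 2)) * e2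
    simp only [hftilde, hf]
    rw [div_mul_eq_mul_div, eq_div_iff hu.ne']
    linear_combination h1 - h2
  -- strict minima
  have hminf : ∀ u : ℝ, 0 < u → u ≠ u₀ →
      a * u₀ ^ (-(q - p)) + c * u₀ ^ (r - q) < a * u ^ (-(q - p)) + c * u ^ (r - q) :=
    fun u hu hne => strict_min19 a c (q - p) (r - q) ha hc hα hβ hu₀ hrelf hu hne
  have hminf' : ∀ u : ℝ, 0 < u →
      a * u₀ ^ (-(q - p)) + c * u₀ ^ (r - q) ≤ a * u ^ (-(q - p)) + c * u ^ (r - q) := by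
    intro u hu
    rcases eq_or_ne u u₀ with h | h
    · rw [h]
    · exact (hminf u hu h).le
  have hminft : ∀ u : ℝ, 0 < u → u ≠ u₀ →
      (a * b * (q - p) ^ 2) * u₀ ^ (-(r - q)) + (b * c * (r - q) ^ 2) * u₀ ^ (q - p)
      < (a * b * (q - p) ^ 2) * u ^ (-(r - q)) + (b * c * (r - q) ^ 2) * u ^ (q - p) :=
    fun u hu hne => strict_min19 (a * b * (q - p) ^ 2) (b * c * (r - q) ^ 2)
      (r - q) (q - p) (by positivity) (by positivity) hβ hα hu₀ hrelft hu hne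
  have hminft' : ∀ u : ℝ, 0 < u →
      (a * b * (q - p) ^ 2) * u₀ ^ (-(r - q)) + (b * c * (r - q) ^ 2) * u₀ ^ (q - p)
      ≤ (a * b * (q - p) ^ 2) * u ^ (-(r - q)) + (b * c * (r - q) ^ 2) * u ^ (q - p) := by
    intro u hu
    rcases eq_or_ne u u₀ with h | h
    · rw [h]
    · exact (hminft u hu h).le
  -- sign link
  have hTf : (r - q) * u₀ ^ (q - p) * (b - (a * u₀ ^ (-(q - p)) + c * u₀ ^ (r - q)))
      = b * (r - q) * u₀ ^ (q - p) - a * (r - p) := by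
    linear_combination (-(a * (r - q))) * hPA - hPQ
  have hTft : a * c * (r - p) ^ 2 -
      ((a * b * (q - p) ^ 2) * u₀ ^ (-(r - q)) + (b * c * (r - q) ^ 2) * u₀ ^ (q - p))
      = -(c * (r - p)) * (b * (r - q) * u₀ ^ (q - p) - a * (r - p)) := by
    linear_combination (-(b * (q - p))) * hX
  have hlink : a * c * (r - p) ^ 2 -
      ((a * b * (q - p) ^ 2) * u₀ ^ (-(r - q)) + (b * c * (r - q) ^ 2) * u₀ ^ (q - p))
      = -(c * (r - p) * (r - q) * u₀ ^ (q - p)) *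
        (b - (a * u₀ ^ (-(q - p)) + c * u₀ ^ (r - q))) := by
    linear_combination hTft + c * (r - p) * hTf
  have hcoef : (0:ℝ) < c * (r - p) * (r - q) * u₀ ^ (q - p) :=
    mul_pos (mul_pos (mul_pos hc hrp) hβ) (rpow_pos_of_pos hu₀ _)
  have huq : (0:ℝ) < u₀ ^ q := rpow_pos_of_pos hu₀ _
  have hposfac : ∀ u : ℝ, 0 < u → (0:ℝ) < u ^ (p + r) / u :=
    fun u hu => div_pos (rpow_pos_of_pos hu _) hu
  rcases lt_trichotomy (a * u₀ ^ (-(q - p)) + c * u₀ ^ (r - q)) b with hcase | hcase | hcase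
  · -- Case A
    have hfA : 0 < f u₀ := by
      rw [hfΦ u₀ hu₀]; exact mul_pos huq (by linarith)
    have hA' : A := hA.mpr ⟨u₀, hu₀, hfA⟩
    have hnB : ¬B := by
      rw [hB]; rintro ⟨-, hle⟩; linarith [hle u₀ hu₀]
    have hnC : ¬C := by
      rw [hC]; intro h; linarith [h u₀ hu₀]
    have hneg : a * c * (r - p) ^ 2 -
        ((a * b * (q - p) ^ 2) * u₀ ^ (-(r - q)) + (b * c * (r - q) ^ 2) * u₀ ^ (q - p)) < 0 := by
      rw [hlink]
      have h2 : 0 < b - (a * u₀ ^ (-(q - p)) + c * u₀ ^ (r - q)) := by linarith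
      exact mul_neg_of_neg_of_pos (by linarith) h2
    refine ⟨Or.inl ⟨hA', hnB, hnC⟩, fun _ u hu => ?_, fun hB' => absurd hB' hnB,
      fun hC' => absurd hC' hnC⟩
    rw [hftval u hu]
    exact mul_neg_of_pos_of_neg (hposfac u hu) (by linarith [hminft' u hu])
  · -- Case B
    have hf0 : f u₀ = 0 := by rw [hfΦ u₀ hu₀, hcase]; ring
    have hfle : ∀ u : ℝ, 0 < u → f u ≤ 0 := by
      intro u hu
      rw [hfΦ u hu]
      have := hminf' u hu
      exact mul_nonpos_of_nonneg_of_nonpos (rpow_pos_of_pos hu q).le (by linarith)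
    have hflt : ∀ u : ℝ, 0 < u → u ≠ u₀ → f u < 0 := by
      intro u hu hne
      rw [hfΦ u hu]
      have := hminf u hu hne
      exact mul_neg_of_pos_of_neg (rpow_pos_of_pos hu q) (by linarith)
    have hB' : B := by
      rw [hB]
      refine ⟨⟨u₀, ⟨hu₀, hf0⟩, ?_⟩, hfle⟩
      rintro y ⟨hy, hfy⟩
      by_contra hne
      exact absurd hfy (hflt y hy hne).ne
    have hnA : ¬A := by
      rw [hA]; rintro ⟨u, hu, hfu⟩; linarith [hfle u hu]
    have hnC : ¬C := by
      rw [hC]; intro h; linarith [h u₀ hu₀]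
    have hzero : a * c * (r - p) ^ 2 -
        ((a * b * (q - p) ^ 2) * u₀ ^ (-(r - q)) + (b * c * (r - q) ^ 2) * u₀ ^ (q - p)) = 0 := by
      rw [hlink, hcase]; ring
    have hft0 : ftilde u₀ = 0 := by
      rw [hftval u₀ hu₀, hzero]; ring
    refine ⟨Or.inr (Or.inl ⟨hnA, hB', hnC⟩), fun hA' => absurd hA' hnA, fun _ => ?_,
      fun hC' => absurd hC' hnC⟩
    refine ⟨u₀, ⟨hu₀, hft0⟩, ?_⟩
    rintro y ⟨hy, hfy⟩
    by_contra hne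
    have hlt : ftilde y < 0 := by
      rw [hftval y hy]
      exact mul_neg_of_pos_of_neg (hposfac y hy) (by linarith [hminft y hy hne])
    exact absurd hfy hlt.ne
  · -- Case C
    have hflt : ∀ u : ℝ, 0 < u → f u < 0 := by
      intro u hu
      rw [hfΦ u hu]
      have := hminf' u hu
      exact mul_neg_of_pos_of_neg (rpow_pos_of_pos hu q) (by linarith)
    have hC' : C := hC.mpr hflt
    have hnA : ¬A := by
      rw [hA]; rintro ⟨u, hu, hfu⟩; linarith [hflt u hu]
    have hnB : ¬B := by
      rw [hB]; rintro ⟨⟨u, ⟨hu, hfu⟩, -⟩, -⟩; exact absurd hfu (hflt u hu).ne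
    have hposft : 0 < ftilde u₀ := by
      rw [hftval u₀ hu₀]
      refine mul_pos (hposfac u₀ hu₀) ?_
      have h2 : b - (a * u₀ ^ (-(q - p)) + c * u₀ ^ (r - q)) < 0 := by linarith
      rw [hlink]
      exact mul_pos_of_neg_of_neg (by linarith) h2
    exact ⟨Or.inr (Or.inr ⟨hnA, hnB, hC'⟩), fun hA' => absurd hA' hnA,
      fun hB' => absurd hB' hnB, fun _ => ⟨u₀, hu₀, hposft⟩⟩
end
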